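/- arXiv:1212.0397 — 4 statements merged into one kernel-verified Lean document; each statement's English description precedes it below -/
import Mathlib

section
/- Let y be the vector indexed by H with entries y_h = ρ^{−(h_1+⋯+h_k)}. Then A_*(ρ^{−k}) y = y; that is, α = ρ^{−k} and y solve the right-invariance equation A_*(α) y = y. -/
open Filter Topology

noncomputable section

/-- Traffic intensity ρ = λ / Σ μᵢ. -/
def rho (k : ℕ) (lam : ℝ) (μ : Fin k → ℝ) : ℝ := lam / ∑ i, μ i

/-- `S(h) = {i ∈ J : h_i = 0}`, the set of coordinates where `h` vanishes. -/
def sZero (k : ℕ) (h : Fin k → ℕ) : Finset (Fin k) :=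
  Finset.univ.filter (fun i => h i = 0)

/-- The QBD block `A_{+1}`: `[A_{+1}]_{h, h−𝟙+e_i} = λ` when `|S(h)| = 1` and `i ∈ S(h)`. -/
def Aplus (k : ℕ) (lam : ℝ) (h h' : Fin k → ℕ) : ℝ :=
  if (sZero k h).card = 1 ∧ h' = fun j => h j - 1 then lam else 0

/-- The QBD block `A_0`: `[A_0]_{h, h+e_i} = λ/|S(h)|` when `|S(h)| ≥ 2`, `i ∈ S(h)`, and
`[A_0]_{h, h−e_j} = μ_j` for `j ∉ S(h)`. -/
def Azero (k : ℕ) (lam : ℝ) (μ : Fin k → ℝ) (h h' : Fin k → ℕ) : ℝ :=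
  (if 2 ≤ (sZero k h).card then
      ∑ i ∈ sZero k h,
        (if h' = Function.update h i 1 then lam / (sZero k h).card else 0)
    else 0)
  + ∑ j ∈ (sZero k h)ᶜ, (if h' = Function.update h j (h j - 1) then μ j else 0)

/-- The QBD block `A_{−1}`: `[A_{−1}]_{h, h+𝟙−e_i} = μ_i` for `i ∈ S(h)`. -/
def Aminus (k : ℕ) (μ : Fin k → ℝ) (h h' : Fin k → ℕ) : ℝ :=
  ∑ i ∈ sZero k h, (if h' = (fun j => if j = i then 0 else h j + 1) then μ i else 0)

/-- `A_*(z) = z⁻¹ A_{−1} + A_0 + z A_{+1}`. -/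
def Astar (k : ℕ) (lam : ℝ) (μ : Fin k → ℝ) (z : ℝ) (h h' : Fin k → ℕ) : ℝ :=
  z⁻¹ * Aminus k μ h h' + Azero k lam μ h h' + z * Aplus k lam h h'

end

section Helpers

private lemma summable_single' {k : ℕ} (c : Fin k → ℕ) (v : ℝ) :
    Summable (fun x : Fin k → ℕ => if x = c then v else 0) :=
  (hasSum_ite_eq c v).summable

private lemma summable_fam {k : ℕ} {ι : Type} (s : Finset ι) (c : ι → (Fin k → ℕ))
    (v : ι → ℝ) :
    Summable (fun x : Fin k → ℕ => ∑ i ∈ s, if x = c i then v i else 0) :=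
  summable_sum fun i _ => summable_single' (c i) (v i)

private lemma tsum_fam {k : ℕ} {ι : Type} (s : Finset ι) (c : ι → (Fin k → ℕ))
    (v : ι → ℝ) :
    ∑' x : Fin k → ℕ, (∑ i ∈ s, if x = c i then v i else 0) = ∑ i ∈ s, v i := by
  rw [Summable.tsum_finsetSum fun i _ => summable_single' (c i) (v i)]
  exact Finset.sum_congr rfl fun i _ => tsum_ite_eq (c i) (fun _ => v i)

private lemma sum_ite_ne {k : ℕ} (i : Fin k) :
    ∑ j : Fin k, (if j = i then (0 : ℕ) else 1) = k - 1 := by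
  have e1 : ∑ j : Fin k, ((if j = i then (0 : ℕ) else 1) + (if j = i then 1 else 0))
      = ∑ _j : Fin k, 1 :=
    Finset.sum_congr rfl (by intro j _; by_cases hj : j = i <;> simp [hj])
  rw [Finset.sum_add_distrib] at e1
  have e2 : ∑ j : Fin k, (if j = i then (1 : ℕ) else 0) = 1 := by simp
  have e3 : ∑ _j : Fin k, (1 : ℕ) = k := by simp
  omega

end Helpers

set_option maxHeartbeats 1000000 in
/-- **Right invariant vector:** with `y_h = ρ^{−(h₁+⋯+h_k)}` one has
`A_*(ρ^{−k}) y = y` on `H`. -/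
theorem right_invariant_vector
    (k : ℕ) (hk : 2 ≤ k) (lam : ℝ) (μ : Fin k → ℝ)
    (hlam : 0 < lam) (hμ : ∀ i, 0 < μ i)
    (hnorm : lam + ∑ i, μ i = 1)
    (hρ : rho k lam μ < 1)
    :
    ∀ h : Fin k → ℕ, (∃ i, h i = 0) →
      (∑' h' : Fin k → ℕ,
          Astar k lam μ ((rho k lam μ ^ k)⁻¹) h h' * (rho k lam μ ^ (∑ i, h' i))⁻¹)
        = (rho k lam μ ^ (∑ i, h i))⁻¹ := by
  intro h hh
  classical
  obtain ⟨i0, hi0⟩ := hh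
  set ρ := rho k lam μ with hρdef
  have hμsum : 0 < ∑ i, μ i :=
    Finset.sum_pos (fun i _ => hμ i) ⟨⟨0, by omega⟩, Finset.mem_univ _⟩
  have hρ0 : 0 < ρ := div_pos hlam hμsum
  have hρne : ρ ≠ 0 := hρ0.ne'
  have hρμ : ρ * ∑ i, μ i = lam := by
    rw [hρdef, rho]; field_simp
  have hρlam : lam * ρ⁻¹ = ∑ i, μ i := by
    rw [hρdef, rho]; field_simp [hlam.ne']
  have hmemS : ∀ i, i ∈ sZero k h ↔ h i = 0 := by
    intro i; simp [sZero]
  have hmemSc : ∀ j, j ∈ (sZero k h)ᶜ ↔ h j ≠ 0 := by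
    intro j; simp [sZero]
  have hScard : 1 ≤ (sZero k h).card :=
    Finset.card_pos.mpr ⟨i0, (hmemS i0).mpr hi0⟩
  set n := ∑ i, h i with hn
  -- sum-of-coordinates computations
  have hdiff : ∀ i : Fin k, n = h i + ∑ x ∈ Finset.univ \ {i}, h x := by
    intro i
    have := Finset.sum_update_of_mem (Finset.mem_univ i) h (h i)
    rw [Function.update_eq_self] at this
    rw [hn, this]
  have hsum_a : ∀ i ∈ sZero k h,
      (∑ j, if j = i then 0 else h j + 1) = n + (k - 1) := by
    intro i hi
    have hi0' : h i = 0 := (hmemS i).mp hi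
    have e : ∀ j, (if j = i then 0 else h j + 1) = h j + (if j = i then 0 else 1) := by
      intro j
      by_cases hj : j = i
      · subst hj; simp [hi0']
      · simp [hj]
    calc (∑ j, if j = i then 0 else h j + 1)
        = ∑ j, (h j + (if j = i then 0 else 1)) := Finset.sum_congr rfl fun j _ => e j
      _ = n + (k - 1) := by rw [Finset.sum_add_distrib, sum_ite_ne, hn]
  have hsum_b : ∀ i ∈ sZero k h, (∑ j, Function.update h i 1 j) = n + 1 := by
    intro i hi
    have hi0' : h i = 0 := (hmemS i).mp hi
    have hd := hdiff i
    rw [Finset.sum_update_of_mem (Finset.mem_univ i)]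
    omega
  have hsum_c : ∀ j ∈ (sZero k h)ᶜ,
      (∑ l, Function.update h j (h j - 1) l) + 1 = n := by
    intro j hj
    have hj0 : h j ≠ 0 := (hmemSc j).mp hj
    have hd := hdiff j
    rw [Finset.sum_update_of_mem (Finset.mem_univ j)]
    omega
  -- pointwise rewriting of the summand
  have hfun : (fun h' : Fin k → ℕ =>
        Astar k lam μ ((ρ ^ k)⁻¹) h h' * (ρ ^ (∑ i, h' i))⁻¹)
      = fun h' =>
        (∑ i ∈ sZero k h, if h' = (fun j => if j = i then 0 else h j + 1) then
            ((ρ ^ k)⁻¹)⁻¹ * μ i * (ρ ^ (∑ j, if j = i then 0 else h j + 1))⁻¹ else 0)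
        + ((∑ i ∈ (if 2 ≤ (sZero k h).card then sZero k h else ∅),
              if h' = Function.update h i 1 then
                (lam / (sZero k h).card) * (ρ ^ (∑ j, Function.update h i 1 j))⁻¹ else 0)
          + (∑ j ∈ (sZero k h)ᶜ, if h' = Function.update h j (h j - 1) then
              μ j * (ρ ^ (∑ l, Function.update h j (h j - 1) l))⁻¹ else 0))
        + (∑ _u ∈ (if (sZero k h).card = 1 then (Finset.univ : Finset Unit) else ∅),
            if h' = (fun j => h j - 1) then
              (ρ ^ k)⁻¹ * lam * (ρ ^ (∑ j, (h j - 1)))⁻¹ else 0) := by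
    funext h'
    rw [Astar, add_mul, add_mul]
    congr 1
    · congr 1
      · -- Aminus part
        rw [Aminus, Finset.mul_sum, Finset.sum_mul]
        refine Finset.sum_congr rfl fun i _ => ?_
        by_cases hcnd : h' = (fun j => if j = i then 0 else h j + 1)
        · subst hcnd; simp
        · simp [hcnd]
      · -- Azero part
        rw [Azero, add_mul]
        congr 1
        · by_cases h2 : 2 ≤ (sZero k h).card
          · rw [if_pos h2, if_pos h2, Finset.sum_mul]
            refine Finset.sum_congr rfl fun i _ => ?_
            by_cases hcnd : h' = Function.update h i 1
            · subst hcnd; simp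
            · simp [hcnd]
          · rw [if_neg h2, if_neg h2, zero_mul, Finset.sum_empty]
        · rw [Finset.sum_mul]
          refine Finset.sum_congr rfl fun j _ => ?_
          by_cases hcnd : h' = Function.update h j (h j - 1)
          · subst hcnd; simp
          · simp [hcnd]
    · -- Aplus part
      rw [Aplus]
      by_cases h1 : (sZero k h).card = 1
      · rw [if_pos h1]
        by_cases hcnd : h' = (fun j => h j - 1)
        · subst hcnd; simp [h1]
        · simp [hcnd, h1]
      · simp [h1]
  rw [hfun]
  -- split the tsum into four families
  have s1 := summable_fam (sZero k h)
    (fun i => (fun j => if j = i then 0 else h j + 1))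
    (fun i => ((ρ ^ k)⁻¹)⁻¹ * μ i * (ρ ^ (∑ j, if j = i then 0 else h j + 1))⁻¹)
  have s2 := summable_fam (if 2 ≤ (sZero k h).card then sZero k h else ∅)
    (fun i => Function.update h i 1)
    (fun i => (lam / (sZero k h).card) * (ρ ^ (∑ j, Function.update h i 1 j))⁻¹)
  have s3 := summable_fam (sZero k h)ᶜ
    (fun j => Function.update h j (h j - 1))
    (fun j => μ j * (ρ ^ (∑ l, Function.update h j (h j - 1) l))⁻¹)
  have s4 := summable_fam (if (sZero k h).card = 1 then (Finset.univ : Finset Unit) else ∅)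
    (fun _ => (fun j => h j - 1))
    (fun _ => (ρ ^ k)⁻¹ * lam * (ρ ^ (∑ j, (h j - 1)))⁻¹)
  rw [Summable.tsum_add (s1.add (s2.add s3)) s4, Summable.tsum_add s1 (s2.add s3), Summable.tsum_add s2 s3,
    tsum_fam, tsum_fam, tsum_fam, tsum_fam]
  -- algebraic identities
  have hk1 : k - 1 + 1 = k := by omega
  have hpowk : ρ ^ k = ρ ^ (k - 1) * ρ := by rw [← pow_succ, hk1]
  have algA : ρ ^ k * (ρ ^ (n + (k - 1)))⁻¹ = ρ * (ρ ^ n)⁻¹ := by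
    rw [pow_add, hpowk]
    field_simp
  have algC : ∀ m : ℕ, m + 1 = n → (ρ ^ m)⁻¹ = ρ * (ρ ^ n)⁻¹ := by
    intro m hm
    have hmn : ρ ^ n = ρ ^ m * ρ := by rw [← pow_succ, hm]
    rw [hmn]
    field_simp
  have algB : (ρ ^ (n + 1))⁻¹ = ρ⁻¹ * (ρ ^ n)⁻¹ := by
    rw [pow_succ]
    field_simp
  -- evaluate the four finite sums
  have eA : (∑ i ∈ sZero k h,
        ((ρ ^ k)⁻¹)⁻¹ * μ i * (ρ ^ (∑ j, if j = i then 0 else h j + 1))⁻¹)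
      = (∑ i ∈ sZero k h, μ i) * (ρ * (ρ ^ n)⁻¹) := by
    rw [Finset.sum_mul]
    refine Finset.sum_congr rfl fun i hi => ?_
    rw [inv_inv, hsum_a i hi]
    calc ρ ^ k * μ i * (ρ ^ (n + (k - 1)))⁻¹
        = μ i * (ρ ^ k * (ρ ^ (n + (k - 1)))⁻¹) := by ring
      _ = μ i * (ρ * (ρ ^ n)⁻¹) := by rw [algA]
  have eC : (∑ j ∈ (sZero k h)ᶜ,
        μ j * (ρ ^ (∑ l, Function.update h j (h j - 1) l))⁻¹)
      = (∑ j ∈ (sZero k h)ᶜ, μ j) * (ρ * (ρ ^ n)⁻¹) := by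
    rw [Finset.sum_mul]
    refine Finset.sum_congr rfl fun j hj => ?_
    rw [algC _ (hsum_c j hj)]
  rw [eA, eC]
  have hcomb : (∑ i ∈ sZero k h, μ i) * (ρ * (ρ ^ n)⁻¹)
      + (∑ j ∈ (sZero k h)ᶜ, μ j) * (ρ * (ρ ^ n)⁻¹)
      + lam * (ρ⁻¹ * (ρ ^ n)⁻¹) = (ρ ^ n)⁻¹ := by
    have hsplit : (∑ i ∈ sZero k h, μ i) + (∑ j ∈ (sZero k h)ᶜ, μ j) = ∑ i, μ i :=
      Finset.sum_add_sum_compl (sZero k h) μ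
    calc (∑ i ∈ sZero k h, μ i) * (ρ * (ρ ^ n)⁻¹)
          + (∑ j ∈ (sZero k h)ᶜ, μ j) * (ρ * (ρ ^ n)⁻¹)
          + lam * (ρ⁻¹ * (ρ ^ n)⁻¹)
        = ((((∑ i ∈ sZero k h, μ i) + (∑ j ∈ (sZero k h)ᶜ, μ j)) * ρ) + lam * ρ⁻¹)
            * (ρ ^ n)⁻¹ := by ring
      _ = ((∑ i, μ i) * ρ + lam * ρ⁻¹) * (ρ ^ n)⁻¹ := by rw [hsplit]
      _ = (lam + ∑ i, μ i) * (ρ ^ n)⁻¹ := by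
            rw [mul_comm (∑ i, μ i) ρ, hρμ, hρlam]
      _ = (ρ ^ n)⁻¹ := by rw [hnorm, one_mul]
  by_cases h1 : (sZero k h).card = 1
  · -- |S| = 1 : the A₀ λ-part vanishes, the A₊ part contributes
    have h2 : ¬ 2 ≤ (sZero k h).card := by omega
    rw [if_neg h2, Finset.sum_empty, if_pos h1]
    -- value of the A₊ term
    obtain ⟨i1, hSi⟩ := Finset.card_eq_one.mp h1
    have hi1 : h i1 = 0 := (hmemS i1).mp (hSi ▸ Finset.mem_singleton_self i1)
    have hsum_d : (∑ j, (h j - 1)) + (k - 1) = n := by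
      have e : ∀ j, h j = (h j - 1) + (if j = i1 then 0 else 1) := by
        intro j
        by_cases hj : j = i1
        · subst hj; simp [hi1]
        · have : j ∉ sZero k h := by rw [hSi]; simp [hj]
          have : h j ≠ 0 := by
            intro hz; exact this ((hmemS j).mpr hz)
          simp [hj]; omega
      have : n = (∑ j, (h j - 1)) + ∑ j : Fin k, (if j = i1 then 0 else 1) := by
        rw [hn, ← Finset.sum_add_distrib]
        exact Finset.sum_congr rfl fun j _ => e j
      rw [sum_ite_ne] at this
      omega
    have algD : (ρ ^ k)⁻¹ * lam * (ρ ^ (∑ j, (h j - 1)))⁻¹ = lam * (ρ⁻¹ * (ρ ^ n)⁻¹) := by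
      have hmn : ρ ^ n = ρ ^ (∑ j, (h j - 1)) * ρ ^ (k - 1) := by
        rw [← pow_add, hsum_d]
      rw [hmn, hpowk, mul_inv, mul_inv]
      ring
    have : (∑ _u : Unit, (ρ ^ k)⁻¹ * lam * (ρ ^ (∑ j, (h j - 1)))⁻¹)
        = (ρ ^ k)⁻¹ * lam * (ρ ^ (∑ j, (h j - 1)))⁻¹ := by simp
    rw [this, algD]
    calc (∑ i ∈ sZero k h, μ i) * (ρ * (ρ ^ n)⁻¹)
          + (0 + (∑ j ∈ (sZero k h)ᶜ, μ j) * (ρ * (ρ ^ n)⁻¹))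
          + lam * (ρ⁻¹ * (ρ ^ n)⁻¹)
        = (∑ i ∈ sZero k h, μ i) * (ρ * (ρ ^ n)⁻¹)
          + (∑ j ∈ (sZero k h)ᶜ, μ j) * (ρ * (ρ ^ n)⁻¹)
          + lam * (ρ⁻¹ * (ρ ^ n)⁻¹) := by ring
      _ = (ρ ^ n)⁻¹ := hcomb
  · -- |S| ≥ 2 : the A₊ part vanishes, the A₀ λ-part contributes
    have h2 : 2 ≤ (sZero k h).card := by omega
    rw [if_pos h2, if_neg h1, Finset.sum_empty]
    have hcard0 : ((sZero k h).card : ℝ) ≠ 0 := Nat.cast_ne_zero.mpr (by omega)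
    have eB : (∑ i ∈ sZero k h,
          (lam / (sZero k h).card) * (ρ ^ (∑ j, Function.update h i 1 j))⁻¹)
        = lam * (ρ⁻¹ * (ρ ^ n)⁻¹) := by
      have e : ∀ i ∈ sZero k h,
          (lam / (sZero k h).card) * (ρ ^ (∑ j, Function.update h i 1 j))⁻¹
          = (lam / (sZero k h).card) * (ρ⁻¹ * (ρ ^ n)⁻¹) := by
        intro i hi
        rw [hsum_b i hi, algB]
      rw [Finset.sum_congr rfl e, Finset.sum_const, nsmul_eq_mul]
      have hlc : ((sZero k h).card : ℝ) * (lam / (sZero k h).card) = lam := by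
        field_simp
      linear_combination (ρ⁻¹ * (ρ ^ n)⁻¹) * hlc
    rw [eB]
    calc (∑ i ∈ sZero k h, μ i) * (ρ * (ρ ^ n)⁻¹)
          + (lam * (ρ⁻¹ * (ρ ^ n)⁻¹) + (∑ j ∈ (sZero k h)ᶜ, μ j) * (ρ * (ρ ^ n)⁻¹))
          + 0
        = (∑ i ∈ sZero k h, μ i) * (ρ * (ρ ^ n)⁻¹)
          + (∑ j ∈ (sZero k h)ᶜ, μ j) * (ρ * (ρ ^ n)⁻¹)
          + lam * (ρ⁻¹ * (ρ ^ n)⁻¹) := by ring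
      _ = (ρ ^ n)⁻¹ := hcomb
end

section
/- Let y be the vector with entries y_h = ρ^{−(h_1+⋯+h_k)} and Δ_y the diagonal matrix with diagonal entries y_h. Then Δ_y^{−1} A_*(ρ^{−k}) Δ_y is a stochastic matrix on H, and the Markov chain on H with this transition matrix is positive recurrent; in particular there exists a stationary probability distribution ν on H with ν Δ_y^{−1} A_*(ρ^{−k}) Δ_y = ν. -/
open Filter Topology

noncomputable section

/-- The similarity transform `Δ_y⁻¹ A_*(ρ^{−k}) Δ_y` with `y_h = ρ^{−Σᵢ h_i}`. -/
def pMat (k : ℕ) (lam : ℝ) (μ : Fin k → ℝ) (h h' : Fin k → ℕ) : ℝ :=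
  rho k lam μ ^ (∑ i, h i) * Astar k lam μ ((rho k lam μ ^ k)⁻¹) h h'
    * (rho k lam μ ^ (∑ i, h' i))⁻¹

end

open Filter Topology
open scoped ENNReal Classical

namespace JSQaux


noncomputable def uSeq {σ : Type*} (P : σ → σ → ℝ≥0∞) (o : σ) : ℕ → σ → ℝ≥0∞
  | 0 => fun x => if x = o then 1 else 0
  | n+1 => fun y => if y = o then 0 else ∑' x, uSeq P o n x * P x y

theorem exists_stationary {σ : Type*} (P : σ → σ → ℝ≥0∞) (o : σ) (Hs : σ → Prop)
    (V : σ → ℝ≥0∞) (ε C : ℝ≥0∞)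
    (hε0 : ε ≠ 0) (hC : C ≠ ⊤) (ho : Hs o)
    (hrow : ∀ x, Hs x → ∑' y, P x y = 1)
    (hclosed : ∀ x y, Hs x → P x y ≠ 0 → Hs y)
    (hC' : ∑' y, P o y * V y ≤ C)
    (hdrift : ∀ x, Hs x → x ≠ o → (∑' y, P x y * V y) + ε ≤ V x) :
    ∃ ν : σ → ℝ≥0∞, (∀ y, ν y ≠ 0 → Hs y) ∧ (∀ y, ν y ≠ ⊤) ∧ ∑' y, ν y = 1 ∧
      (∀ y, ∑' x, ν x * P x y = ν y) := by
  set u : ℕ → σ → ℝ≥0∞ := uSeq P o with hu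
  have hu0 : ∀ x, u 0 x = if x = o then 1 else 0 := fun x => rfl
  have huS : ∀ n y, u (n+1) y = if y = o then 0 else ∑' x, u n x * P x y := fun n y => rfl
  have huo : ∀ n, u (n+1) o = 0 := fun n => by rw [huS, if_pos rfl]
  have hsupp : ∀ n x, u n x ≠ 0 → Hs x := by
    intro n
    induction n with
    | zero =>
      intro x hx
      rw [hu0] at hx
      by_cases h : x = o
      · exact h ▸ ho
      · simp [h] at hx
    | succ n ih =>
      intro y hy
      rw [huS] at hy
      by_cases h : y = o
      · simp [h] at hy
      · rw [if_neg h] at hy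
        obtain ⟨x, hx⟩ : ∃ x, u n x * P x y ≠ 0 := by
          by_contra hc; push_neg at hc
          exact hy (by simp [ENNReal.tsum_eq_zero, hc])
        exact hclosed x y (ih x (fun h0 => hx (by rw [h0, zero_mul]))) (fun h0 => hx (by rw [h0, mul_zero]))
  have hu1 : ∀ y, (∑' x, u 0 x * P x y) = P o y := by
    intro y
    rw [show (fun x => u 0 x * P x y) = fun x => if x = o then P o y else 0 by
      funext x; rw [hu0]; by_cases h : x = o <;> simp [h]]
    exact tsum_ite_eq o (fun _ => P o y)
  set t : ℕ → ℝ≥0∞ := fun n => ∑' x, u n x with ht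
  set f : ℕ → ℝ≥0∞ := fun n => ∑' x, u n x * P x o with hf
  have hrowsupp : ∀ n, (∑' (x : σ), u n x * ∑' (y : σ), P x y) = t n := by
    intro n
    refine tsum_congr fun x => ?_
    by_cases hx : u n x = 0
    · simp [hx]
    · rw [hrow x (hsupp n x hx), mul_one]
  have hmass : ∀ n, t (n+1) + f n = t n := by
    intro n
    calc t (n+1) + f n
        = (∑' y, if y = o then 0 else ∑' x, u n x * P x y) + (∑' x, u n x * P x o) := by
          rw [ht, hf]; congr 1
      _ = ∑' y, ∑' x, u n x * P x y := by
          rw [ENNReal.tsum_eq_add_tsum_ite (f := fun y => ∑' (x : σ), u n x * P x y) o,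
            add_comm]
      _ = ∑' x, ∑' y, u n x * P x y := ENNReal.tsum_comm
      _ = t n := by
          rw [← hrowsupp n]; exact tsum_congr fun x => ENNReal.tsum_mul_left
  set E : ℕ → ℝ≥0∞ := fun n => ∑' x, u n x * V x with hE
  have hdriftstep : ∀ n, E (n+2) + ε * t (n+1) ≤ E (n+1) := by
    intro n
    have h1 : E (n+2) ≤ ∑' x, u (n+1) x * ∑' y, P x y * V y := by
      rw [hE]
      calc ∑' y, u (n+2) y * V y
          ≤ ∑' y, (∑' x, u (n+1) x * P x y) * V y := by
            refine ENNReal.tsum_le_tsum fun y => ?_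
            refine mul_le_mul_left ?_ _
            rw [huS]
            split_ifs with h
            · exact zero_le
            · exact le_rfl
        _ = ∑' y, ∑' x, u (n+1) x * P x y * V y := by
            exact tsum_congr fun y => ENNReal.tsum_mul_right.symm
        _ = ∑' x, ∑' y, u (n+1) x * P x y * V y := ENNReal.tsum_comm
        _ = ∑' x, u (n+1) x * ∑' y, P x y * V y := by
            refine tsum_congr fun x => ?_
            rw [← ENNReal.tsum_mul_left]
            exact tsum_congr fun y => by ring
    calc E (n+2) + ε * t (n+1)
        ≤ (∑' x, u (n+1) x * ∑' y, P x y * V y) + ε * ∑' x, u (n+1) x :=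
          add_le_add h1 le_rfl
      _ = ∑' x, (u (n+1) x * (∑' y, P x y * V y) + u (n+1) x * ε) := by
          rw [show ε * (∑' x, u (n+1) x) = ∑' x, u (n+1) x * ε by
              rw [ENNReal.tsum_mul_right, mul_comm],
            ← ENNReal.tsum_add]
      _ ≤ ∑' x, u (n+1) x * V x := by
          refine ENNReal.tsum_le_tsum fun x => ?_
          by_cases hx : u (n+1) x = 0
          · simp [hx]
          · rw [← mul_add]
            refine mul_le_mul_right ?_ _
            refine hdrift x (hsupp _ x hx) fun hxo => hx ?_
            rw [hxo]; exact huo n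
      _ = E (n+1) := rfl
  have hE1 : E 1 ≤ C := by
    refine le_trans ?_ hC'
    refine ENNReal.tsum_le_tsum fun y => ?_
    refine mul_le_mul_left ?_ _
    rw [huS, hu1]
    split_ifs with h
    · exact zero_le
    · exact le_rfl
  have htel : ∀ N, E (N+1) + ε * ∑ n ∈ Finset.range N, t (n+1) ≤ E 1 := by
    intro N
    induction N with
    | zero => simp
    | succ N ih =>
      rw [Finset.sum_range_succ, mul_add]
      calc E (N+1+1) + (ε * ∑ n ∈ Finset.range N, t (n+1) + ε * t (N+1))
          = (E (N+2) + ε * t (N+1)) + ε * ∑ n ∈ Finset.range N, t (n+1) := by ring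
        _ ≤ E (N+1) + ε * ∑ n ∈ Finset.range N, t (n+1) := add_le_add (hdriftstep N) le_rfl
        _ ≤ E 1 := ih
  set T : ℝ≥0∞ := ∑' n, t (n+1) with hT
  have hrange : ∀ N, ∑ n ∈ Finset.range N, t (n+1) ≤ C / ε := by
    intro N
    rw [ENNReal.le_div_iff_mul_le (Or.inl hε0) (Or.inr hC)]
    calc (∑ n ∈ Finset.range N, t (n+1)) * ε = ε * ∑ n ∈ Finset.range N, t (n+1) := mul_comm _ _
      _ ≤ E (N+1) + ε * ∑ n ∈ Finset.range N, t (n+1) := le_add_self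
      _ ≤ E 1 := htel N
      _ ≤ C := hE1
  have hTle : T ≤ C / ε := by
    rw [hT]
    refine tsum_le_of_sum_le' zero_le fun s => ?_
    obtain ⟨N, hN⟩ := s.exists_nat_subset_range
    exact le_trans (Finset.sum_le_sum_of_subset hN) (hrange N)
  have hTtop : T ≠ ⊤ := by
    refine ne_top_of_le_ne_top ?_ hTle
    rw [ENNReal.div_eq_inv_mul]
    exact ENNReal.mul_ne_top (ENNReal.inv_ne_top.mpr hε0) hC
  have ht0 : Tendsto t atTop (𝓝 0) := by
    rw [← Filter.tendsto_add_atTop_iff_nat 1]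
    have htail := ENNReal.tendsto_sum_nat_add (fun n => t (n+1)) hTtop
    refine tendsto_of_tendsto_of_tendsto_of_le_of_le tendsto_const_nhds htail
      (fun i => zero_le) (fun i => ?_)
    simpa using ENNReal.le_tsum (f := fun k => t (k + i + 1)) 0
  have ht00 : t 0 = 1 := by
    rw [ht]
    simpa [hu0] using tsum_ite_eq o (fun _ => (1 : ℝ≥0∞))
  have hpart : ∀ N, (∑ n ∈ Finset.range N, f n) + t N = 1 := by
    intro N
    induction N with
    | zero => simpa using ht00
    | succ N ih =>
      rw [Finset.sum_range_succ, add_assoc, add_comm (f N) (t (N+1)), hmass N]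
      exact ih
  have hfsum : ∑' n, f n = 1 := by
    have h1 : Tendsto (fun N => (∑ n ∈ Finset.range N, f n) + t N) atTop (𝓝 (∑' n, f n + 0)) :=
      Filter.Tendsto.add (ENNReal.tendsto_nat_tsum f) ht0
    have h2 : Tendsto (fun N => (∑ n ∈ Finset.range N, f n) + t N) atTop (𝓝 1) := by
      simp only [hpart]; exact tendsto_const_nhds
    have := tendsto_nhds_unique h1 h2
    rwa [add_zero] at this
  set νt : σ → ℝ≥0∞ := fun y => (if y = o then 1 else 0) + ∑' n, u (n+1) y with hνt
  have hνto : νt o = 1 := by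
    show (if o = o then (1:ℝ≥0∞) else 0) + ∑' n, u (n+1) o = 1
    simp [huo]
  have hstat : ∀ y, ∑' x, νt x * P x y = νt y := by
    intro y
    have hsplit : ∑' x, νt x * P x y
        = P o y + ∑' n, ∑' x, u (n+1) x * P x y := by
      calc ∑' x, νt x * P x y
          = ∑' x, ((if x = o then P x y else 0) + ∑' n, u (n+1) x * P x y) := by
            refine tsum_congr fun x => ?_
            show ((if x = o then (1:ℝ≥0∞) else 0) + ∑' n, u (n+1) x) * P x y = _
            rw [add_mul, ite_mul, one_mul, zero_mul, ENNReal.tsum_mul_right]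
        _ = (∑' x, if x = o then P x y else 0) + ∑' x, ∑' n, u (n+1) x * P x y :=
            ENNReal.tsum_add
        _ = P o y + ∑' n, ∑' x, u (n+1) x * P x y := by
            congr 1
            · rw [tsum_eq_single o (fun c hc => if_neg hc)]
              exact if_pos rfl
            · exact ENNReal.tsum_comm
    by_cases hy : y = o
    · rw [hsplit, hy, hνto]
      have hPf : P o o = f 0 := (hu1 o).symm
      have hfn : ∀ n, (∑' x, u (n+1) x * P x o) = f (n+1) := fun n => rfl
      rw [hPf]
      simp only [hfn]
      calc f 0 + ∑' n, f (n+1) = ∑' n, f n := (tsum_eq_zero_add' (f := f) ENNReal.summable).symm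
        _ = 1 := hfsum
    · rw [hsplit]
      have hPu : P o y = u 1 y := by
        have h1 : u 1 y = if y = o then 0 else ∑' x, u 0 x * P x y := huS 0 y
        rw [h1, if_neg hy, hu1]
      have hn : ∀ n, (∑' x, u (n+1) x * P x y) = u (n+2) y := fun n => by
        rw [huS (n+1), if_neg hy]
      rw [hPu]
      simp only [hn]
      calc u 1 y + ∑' n, u (n+2) y = ∑' n, u (n+1) y :=
            (tsum_eq_zero_add' (f := fun n => u (n+1) y) ENNReal.summable).symm
        _ = νt y := by
            show _ = (if y = o then (1:ℝ≥0∞) else 0) + ∑' n, u (n+1) y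
            rw [if_neg hy, zero_add]
  set Z : ℝ≥0∞ := ∑' y, νt y with hZdef
  have hZ : Z = 1 + T := by
    rw [hZdef]
    calc ∑' y, νt y
        = (∑' y, if y = o then (1:ℝ≥0∞) else 0) + ∑' y, ∑' n, u (n+1) y :=
          ENNReal.tsum_add
      _ = 1 + T := by
          rw [show (∑' y : σ, if y = o then (1:ℝ≥0∞) else 0) = 1 from tsum_ite_eq o (fun _ => 1), hT]
          congr 1
          exact ENNReal.tsum_comm
  have hZ0 : Z ≠ 0 := by rw [hZ]; simp
  have hZtop : Z ≠ ⊤ := by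
    rw [hZ]
    exact ENNReal.add_ne_top.mpr ⟨ENNReal.one_ne_top, hTtop⟩
  refine ⟨fun y => νt y * Z⁻¹, ?_, ?_, ?_, ?_⟩
  · intro y hy
    have hνty : νt y ≠ 0 := by
      intro h0; apply hy; simp only [h0, zero_mul]
    by_cases hyo : y = o
    · exact hyo ▸ ho
    · have hts : ∑' n, u (n+1) y ≠ 0 := by
        intro h0
        apply hνty
        show (if y = o then (1:ℝ≥0∞) else 0) + ∑' n, u (n+1) y = 0
        rw [if_neg hyo, h0, add_zero]
      obtain ⟨n, hn⟩ : ∃ n, u (n+1) y ≠ 0 := by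
        by_contra hc; push_neg at hc; exact hts (by simp [hc])
      exact hsupp (n+1) y hn
  · intro y
    refine ENNReal.mul_ne_top ?_ (ENNReal.inv_ne_top.mpr hZ0)
    intro h
    apply hZtop
    exact eq_top_iff.mpr (h ▸ ENNReal.le_tsum y)
  · rw [ENNReal.tsum_mul_right, ← hZdef]
    exact ENNReal.mul_inv_cancel hZ0 hZtop
  · intro y
    calc ∑' x, νt x * Z⁻¹ * P x y
        = ∑' x, νt x * P x y * Z⁻¹ := tsum_congr fun x => by ring
      _ = (∑' x, νt x * P x y) * Z⁻¹ := ENNReal.tsum_mul_right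
      _ = νt y * Z⁻¹ := by rw [hstat y]



variable {k : ℕ}

def upT (h : Fin k → ℕ) (i : Fin k) : Fin k → ℕ := fun j => if j = i then 0 else h j + 1
def dmT (h : Fin k → ℕ) : Fin k → ℕ := fun j => h j - 1
def M (h : Fin k → ℕ) : ℕ := Finset.univ.sup h

lemma mem_sZero {h : Fin k → ℕ} {i : Fin k} : i ∈ sZero k h ↔ h i = 0 := by
  simp [sZero]

lemma card_erase {i : Fin k} : (Finset.univ.erase i).card + 1 = k := by
  rw [Finset.card_erase_of_mem (Finset.mem_univ i)]
  have h1 : 0 < Finset.univ.card := Finset.card_pos.mpr ⟨i, Finset.mem_univ i⟩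
  simp only [Finset.card_univ, Fintype.card_fin] at h1 ⊢
  omega

lemma sum_split (h : Fin k → ℕ) (i : Fin k) :
    ∑ j ∈ Finset.univ.erase i, h j + h i = ∑ j, h j :=
  Finset.sum_erase_add _ _ (Finset.mem_univ i)

lemma sum_const_erase (i : Fin k) : ∑ _j ∈ Finset.univ.erase i, 1 + 1 = k := by
  rw [Finset.sum_const, smul_eq_mul, mul_one]; exact card_erase

lemma sum_upT {h : Fin k → ℕ} {i : Fin k} (hi : h i = 0) :
    (∑ j, upT h i j) + 1 = (∑ j, h j) + k := by
  have e1 := sum_split (upT h i) i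
  have e2 : ∑ j ∈ Finset.univ.erase i, upT h i j
      = ∑ j ∈ Finset.univ.erase i, h j + ∑ _j ∈ Finset.univ.erase i, 1 := by
    rw [← Finset.sum_add_distrib]
    exact Finset.sum_congr rfl fun j hj => if_neg (Finset.ne_of_mem_erase hj)
  have e3 : upT h i i = 0 := if_pos rfl
  have e4 := sum_split h i
  have e5 := sum_const_erase (k := k) i
  omega

lemma sum_update_one {h : Fin k → ℕ} {i : Fin k} (hi : h i = 0) :
    ∑ j, Function.update h i 1 j = (∑ j, h j) + 1 := by
  have e1 := sum_split (Function.update h i 1) i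
  have e2 : ∑ j ∈ Finset.univ.erase i, Function.update h i 1 j
      = ∑ j ∈ Finset.univ.erase i, h j :=
    Finset.sum_congr rfl fun j hj => Function.update_of_ne (Finset.ne_of_mem_erase hj) _ _
  have e3 : Function.update h i 1 i = 1 := Function.update_self _ _ _
  have e4 := sum_split h i
  omega

lemma sum_update_pred {h : Fin k → ℕ} {j : Fin k} (hj : h j ≠ 0) :
    (∑ l, Function.update h j (h j - 1) l) + 1 = ∑ l, h l := by
  have e1 := sum_split (Function.update h j (h j - 1)) j
  have e2 : ∑ l ∈ Finset.univ.erase j, Function.update h j (h j - 1) l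
      = ∑ l ∈ Finset.univ.erase j, h l :=
    Finset.sum_congr rfl fun l hl => Function.update_of_ne (Finset.ne_of_mem_erase hl) _ _
  have e3 : Function.update h j (h j - 1) j = h j - 1 := Function.update_self _ _ _
  have e4 := sum_split h j
  omega

lemma sum_dmT {h : Fin k → ℕ} {i : Fin k} (hi : h i = 0) (hone : ∀ j, j ≠ i → h j ≠ 0) :
    (∑ j, dmT h j) + k = (∑ j, h j) + 1 := by
  have e1 := sum_split (dmT h) i
  have e2 : ∑ j ∈ Finset.univ.erase i, dmT h j + ∑ _j ∈ Finset.univ.erase i, 1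
      = ∑ j ∈ Finset.univ.erase i, h j := by
    rw [← Finset.sum_add_distrib]
    refine Finset.sum_congr rfl fun j hj => ?_
    have := hone j (Finset.ne_of_mem_erase hj)
    unfold dmT
    omega
  have e3 : dmT h i = 0 := by unfold dmT; omega
  have e4 := sum_split h i
  have e5 := sum_const_erase (k := k) i
  omega

-- sup lemmas
lemma le_M (h : Fin k → ℕ) (j : Fin k) : h j ≤ M h := Finset.le_sup (Finset.mem_univ j)

lemma exists_argmax (hk : 1 ≤ k) (h : Fin k → ℕ) : ∃ j, h j = M h := by
  haveI : Nonempty (Fin k) := ⟨⟨0, by omega⟩⟩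
  obtain ⟨j, _, hj⟩ := Finset.exists_mem_eq_sup Finset.univ Finset.univ_nonempty h
  exact ⟨j, hj.symm⟩

lemma M_pos {h : Fin k → ℕ} (hne : h ≠ fun _ => 0) : 1 ≤ M h := by
  by_contra hc
  push_neg at hc
  refine hne (funext fun j => ?_)
  have := le_M h j
  omega

lemma sup_upT (hk : 1 ≤ k) {h : Fin k → ℕ} {i : Fin k} (hi : h i = 0) (hM : 1 ≤ M h) :
    M (upT h i) = M h + 1 := by
  refine le_antisymm (Finset.sup_le fun j _ => ?_) ?_
  · unfold upT
    have := le_M h j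
    split_ifs <;> omega
  · obtain ⟨j₀, hj₀⟩ := exists_argmax hk h
    have hji : j₀ ≠ i := by
      intro e
      rw [e, hi] at hj₀
      omega
    have he : upT h i j₀ = M h + 1 := by unfold upT; rw [if_neg hji, hj₀]
    calc M h + 1 = upT h i j₀ := he.symm
      _ ≤ M (upT h i) := le_M _ _

lemma sup_update_one (hk : 1 ≤ k) {h : Fin k → ℕ} {i : Fin k} (hi : h i = 0) (hM : 1 ≤ M h) :
    M (Function.update h i 1) = M h := by
  refine le_antisymm (Finset.sup_le fun j _ => ?_) ?_
  · rcases eq_or_ne j i with e | e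
    · rw [e, Function.update_self]; omega
    · rw [Function.update_of_ne e]; exact le_M h j
  · obtain ⟨j₀, hj₀⟩ := exists_argmax hk h
    have hji : j₀ ≠ i := by
      intro e; rw [e, hi] at hj₀; omega
    calc M h = Function.update h i 1 j₀ := by rw [Function.update_of_ne hji, hj₀]
      _ ≤ M (Function.update h i 1) := le_M _ _

lemma sup_update_pred_le {h : Fin k → ℕ} {j : Fin k} :
    M (Function.update h j (h j - 1)) ≤ M h := by
  refine Finset.sup_le fun l _ => ?_
  rcases eq_or_ne l j with e | e
  · rw [e, Function.update_self]
    have := le_M h j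
    omega
  · rw [Function.update_of_ne e]; exact le_M h l

lemma sup_dmT (hk : 1 ≤ k) {h : Fin k → ℕ} (hM : 1 ≤ M h) :
    M (dmT h) + 1 = M h := by
  have hub : M (dmT h) ≤ M h - 1 := by
    refine Finset.sup_le fun l _ => ?_
    have := le_M h l
    unfold dmT
    omega
  have hlb : M h - 1 ≤ M (dmT h) := by
    obtain ⟨j₀, hj₀⟩ := exists_argmax hk h
    calc M h - 1 = dmT h j₀ := by unfold dmT; omega
      _ ≤ M (dmT h) := le_M _ _
  omega

-- the Lyapunov function
noncomputable def Vr (h : Fin k → ℕ) : ℝ := ((k * M h : ℕ) : ℝ) - ((∑ j, h j : ℕ) : ℝ)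

lemma Vr_nonneg (h : Fin k → ℕ) : 0 ≤ Vr h := by
  have hn : (∑ j, h j) ≤ k * M h := by
    calc ∑ j, h j ≤ Finset.univ.card • M h :=
          Finset.sum_le_card_nsmul _ _ _ (fun j _ => le_M h j)
      _ = k * M h := by rw [smul_eq_mul, Finset.card_univ, Fintype.card_fin]
  unfold Vr
  have := Nat.cast_le (α := ℝ) |>.mpr hn
  linarith

lemma Vr_upT (hk : 1 ≤ k) {h : Fin k → ℕ} {i : Fin k} (hi : h i = 0) (hM : 1 ≤ M h) :
    Vr (upT h i) = Vr h + 1 := by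
  have e1 := sum_upT hi
  have e2 := sup_upT hk hi hM
  unfold Vr
  rw [e2]
  have e1' : ((∑ j, upT h i j : ℕ) : ℝ) + 1 = ((∑ j, h j : ℕ) : ℝ) + k := by
    exact_mod_cast congrArg (fun n : ℕ => (n : ℝ)) e1
  push_cast at e1' ⊢
  linarith

lemma Vr_update_one (hk : 1 ≤ k) {h : Fin k → ℕ} {i : Fin k} (hi : h i = 0) (hM : 1 ≤ M h) :
    Vr (Function.update h i 1) = Vr h - 1 := by
  have e1 := sum_update_one hi
  have e2 := sup_update_one hk hi hM
  unfold Vr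
  rw [e2]
  have e1' : ((∑ j, Function.update h i 1 j : ℕ) : ℝ) = ((∑ j, h j : ℕ) : ℝ) + 1 := by
    exact_mod_cast congrArg (fun n : ℕ => (n : ℝ)) e1
  push_cast at e1' ⊢
  linarith

lemma Vr_update_pred_le {h : Fin k → ℕ} {j : Fin k} (hj : h j ≠ 0) :
    Vr (Function.update h j (h j - 1)) ≤ Vr h + 1 := by
  have e1 := sum_update_pred hj
  have e2 := sup_update_pred_le (h := h) (j := j)
  unfold Vr
  have e1' : ((∑ l, Function.update h j (h j - 1) l : ℕ) : ℝ) + 1 = ((∑ l, h l : ℕ) : ℝ) := by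
    exact_mod_cast congrArg (fun n : ℕ => (n : ℝ)) e1
  have e2' : ((k * M (Function.update h j (h j - 1)) : ℕ) : ℝ) ≤ ((k * M h : ℕ) : ℝ) := by
    exact_mod_cast Nat.mul_le_mul_left k e2
  push_cast at e1' e2' ⊢
  linarith

lemma Vr_dmT (hk : 1 ≤ k) {h : Fin k → ℕ} {i : Fin k} (hi : h i = 0)
    (hone : ∀ j, j ≠ i → h j ≠ 0) (hM : 1 ≤ M h) :
    Vr (dmT h) = Vr h - 1 := by
  have e1 := sum_dmT hi hone
  have e2 := sup_dmT hk hM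
  unfold Vr
  have e1' : ((∑ j, dmT h j : ℕ) : ℝ) + k = ((∑ j, h j : ℕ) : ℝ) + 1 := by
    exact_mod_cast congrArg (fun n : ℕ => (n : ℝ)) e1
  have e2' : ((M (dmT h) : ℕ) : ℝ) + 1 = ((M h : ℕ) : ℝ) := by
    exact_mod_cast congrArg (fun n : ℕ => (n : ℝ)) e2
  push_cast at e1' e2' ⊢
  nlinarith [e2']

noncomputable def Qmat (k : ℕ) (lam : ℝ) (μ : Fin k → ℝ) (h h' : Fin k → ℕ) : ℝ :=
  (∑ i ∈ sZero k h, if h' = upT h i then rho k lam μ * μ i else 0)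
  + (if 2 ≤ (sZero k h).card then
      ∑ i ∈ sZero k h,
        (if h' = Function.update h i 1 then lam / ((sZero k h).card * rho k lam μ) else 0)
    else 0)
  + (∑ j ∈ (sZero k h)ᶜ, if h' = Function.update h j (h j - 1) then rho k lam μ * μ j else 0)
  + (if (sZero k h).card = 1 ∧ h' = dmT h then (∑ i, μ i) else 0)

lemma pMat_eq {lam : ℝ} {μ : Fin k → ℝ} (hρ : rho k lam μ ≠ 0)
    (hlρ : lam * (rho k lam μ)⁻¹ = ∑ i, μ i) (h h' : Fin k → ℕ) :
    pMat k lam μ h h' = Qmat k lam μ h h' := by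
  set ρ := rho k lam μ with hρdef
  have hsplit : pMat k lam μ h h'
      = ρ ^ (∑ i, h i) * (((ρ^k)⁻¹)⁻¹ * Aminus k μ h h') * (ρ ^ (∑ i, h' i))⁻¹
      + ρ ^ (∑ i, h i) * (if 2 ≤ (sZero k h).card then
            ∑ i ∈ sZero k h, (if h' = Function.update h i 1 then lam / ((sZero k h).card : ℝ) else 0)
          else 0) * (ρ ^ (∑ i, h' i))⁻¹
      + ρ ^ (∑ i, h i) * (∑ j ∈ (sZero k h)ᶜ, if h' = Function.update h j (h j - 1) then μ j else 0) * (ρ ^ (∑ i, h' i))⁻¹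
      + ρ ^ (∑ i, h i) * ((ρ^k)⁻¹ * Aplus k lam h h') * (ρ ^ (∑ i, h' i))⁻¹ := by
    unfold pMat Astar Azero
    ring
  have e1 : ρ ^ (∑ i, h i) * (((ρ^k)⁻¹)⁻¹ * Aminus k μ h h') * (ρ ^ (∑ i, h' i))⁻¹
      = ∑ i ∈ sZero k h, if h' = upT h i then ρ * μ i else 0 := by
    rw [inv_inv]
    have hA : Aminus k μ h h' = ∑ i ∈ sZero k h, if h' = upT h i then μ i else 0 := rfl
    rw [hA, Finset.mul_sum, Finset.mul_sum, Finset.sum_mul]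
    refine Finset.sum_congr rfl fun i hi => ?_
    have hi0 : h i = 0 := mem_sZero.mp hi
    by_cases hc : h' = upT h i
    · rw [if_pos hc, if_pos hc]
      subst hc
      have hb := sum_upT hi0
      have hpow : ρ^(∑ j, h j) * ρ^k = ρ^(∑ j, upT h i j) * ρ := by
        rw [← pow_add, ← pow_succ]
        exact congrArg (fun n => ρ ^ n) (by omega)
      have hne : ρ^(∑ j, upT h i j) ≠ 0 := pow_ne_zero _ hρ
      calc ρ^(∑ j, h j) * (ρ^k * μ i) * (ρ^(∑ j, upT h i j))⁻¹
          = (ρ^(∑ j, h j) * ρ^k) * μ i * (ρ^(∑ j, upT h i j))⁻¹ := by ring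
        _ = (ρ^(∑ j, upT h i j) * ρ) * μ i * (ρ^(∑ j, upT h i j))⁻¹ := by rw [hpow]
        _ = (ρ^(∑ j, upT h i j) * (ρ^(∑ j, upT h i j))⁻¹) * (ρ * μ i) := by ring
        _ = ρ * μ i := by rw [mul_inv_cancel₀ hne, one_mul]
    · rw [if_neg hc, if_neg hc]; ring
  have e2 : ρ ^ (∑ i, h i) * (if 2 ≤ (sZero k h).card then
            ∑ i ∈ sZero k h, (if h' = Function.update h i 1 then lam / ((sZero k h).card : ℝ) else 0)
          else 0) * (ρ ^ (∑ i, h' i))⁻¹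
      = (if 2 ≤ (sZero k h).card then
          ∑ i ∈ sZero k h,
            (if h' = Function.update h i 1 then lam / ((sZero k h).card * ρ) else 0)
        else 0) := by
    by_cases hc2 : 2 ≤ (sZero k h).card
    · rw [if_pos hc2, if_pos hc2, Finset.mul_sum, Finset.sum_mul]
      refine Finset.sum_congr rfl fun i hi => ?_
      have hi0 : h i = 0 := mem_sZero.mp hi
      by_cases hc : h' = Function.update h i 1
      · rw [if_pos hc, if_pos hc]
        subst hc
        have hb := sum_update_one hi0
        have hpow : ρ^(∑ j, Function.update h i 1 j) = ρ^(∑ j, h j) * ρ := by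
          rw [← pow_succ]
          exact congrArg (fun n => ρ ^ n) (by omega)
        have hm : ((sZero k h).card : ℝ) ≠ 0 := Nat.cast_ne_zero.mpr (by omega)
        rw [hpow]
        have hne : ρ^(∑ j, h j) ≠ 0 := pow_ne_zero _ hρ
        field_simp
      · rw [if_neg hc, if_neg hc]; ring
    · rw [if_neg hc2, if_neg hc2]; ring
  have e3 : ρ ^ (∑ i, h i) * (∑ j ∈ (sZero k h)ᶜ, if h' = Function.update h j (h j - 1) then μ j else 0) * (ρ ^ (∑ i, h' i))⁻¹
      = ∑ j ∈ (sZero k h)ᶜ, if h' = Function.update h j (h j - 1) then ρ * μ j else 0 := by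
    rw [Finset.mul_sum, Finset.sum_mul]
    refine Finset.sum_congr rfl fun j hj => ?_
    have hj0 : h j ≠ 0 := by
      intro h0
      exact (Finset.mem_compl.mp hj) (mem_sZero.mpr h0)
    by_cases hc : h' = Function.update h j (h j - 1)
    · rw [if_pos hc, if_pos hc]
      subst hc
      have hb := sum_update_pred hj0
      have hpow : ρ^(∑ l, h l) = ρ^(∑ l, Function.update h j (h j - 1) l) * ρ := by
        rw [← pow_succ]
        exact congrArg (fun n => ρ ^ n) (by omega)
      have hne : ρ^(∑ l, Function.update h j (h j - 1) l) ≠ 0 := pow_ne_zero _ hρ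
      calc ρ^(∑ l, h l) * μ j * (ρ^(∑ l, Function.update h j (h j - 1) l))⁻¹
          = (ρ^(∑ l, Function.update h j (h j - 1) l) * ρ) * μ j
              * (ρ^(∑ l, Function.update h j (h j - 1) l))⁻¹ := by rw [← hpow]
        _ = (ρ^(∑ l, Function.update h j (h j - 1) l)
              * (ρ^(∑ l, Function.update h j (h j - 1) l))⁻¹) * (ρ * μ j) := by ring
        _ = ρ * μ j := by rw [mul_inv_cancel₀ hne, one_mul]
    · rw [if_neg hc, if_neg hc]; ring
  have e4 : ρ ^ (∑ i, h i) * ((ρ^k)⁻¹ * Aplus k lam h h') * (ρ ^ (∑ i, h' i))⁻¹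
      = (if (sZero k h).card = 1 ∧ h' = dmT h then (∑ i, μ i) else 0) := by
    have hA : Aplus k lam h h' = if (sZero k h).card = 1 ∧ h' = dmT h then lam else 0 := rfl
    rw [hA]
    by_cases hc : (sZero k h).card = 1 ∧ h' = dmT h
    · rw [if_pos hc, if_pos hc]
      obtain ⟨hcard, hh'⟩ := hc
      obtain ⟨i, hSi⟩ := Finset.card_eq_one.mp hcard
      have hi0 : h i = 0 := mem_sZero.mp (by rw [hSi]; exact Finset.mem_singleton_self i)
      have hone : ∀ j, j ≠ i → h j ≠ 0 := by
        intro j hj hj0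
        exact hj (Finset.mem_singleton.mp (hSi ▸ mem_sZero.mpr hj0))
      subst hh'
      have hb := sum_dmT hi0 hone
      have hpow : ρ^(∑ j, dmT h j) * ρ^k = ρ^(∑ j, h j) * ρ := by
        rw [← pow_add, ← pow_succ]
        exact congrArg (fun n => ρ ^ n) (by omega)
      rw [← hlρ]
      have hne1 : ρ^(∑ j, dmT h j) ≠ 0 := pow_ne_zero _ hρ
      have hne2 : (ρ^k : ℝ) ≠ 0 := pow_ne_zero _ hρ
      have hne3 : ρ^(∑ j, h j) ≠ 0 := pow_ne_zero _ hρ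
      field_simp
      linear_combination (-lam) * hpow
    · rw [if_neg hc, if_neg hc]; ring
  rw [hsplit, e1, e2, e3, e4]
  rfl



variable {lam : ℝ} {μ : Fin k → ℝ}

lemma pMat_nonneg (hρ : 0 < rho k lam μ) (hlam : 0 ≤ lam) (hμ : ∀ i, 0 ≤ μ i)
    (h h' : Fin k → ℕ) : 0 ≤ pMat k lam μ h h' := by
  unfold pMat Astar Aminus Azero Aplus
  refine mul_nonneg (mul_nonneg (by positivity) ?_) (by positivity)
  refine add_nonneg (add_nonneg ?_ ?_) ?_
  · refine mul_nonneg (by positivity) (Finset.sum_nonneg fun i _ => ?_)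
    split_ifs
    exacts [hμ i, le_rfl]
  · refine add_nonneg ?_ (Finset.sum_nonneg fun j _ => ?_)
    · split_ifs
      · refine Finset.sum_nonneg fun i _ => ?_
        split_ifs
        · exact div_nonneg hlam (Nat.cast_nonneg _)
        · exact le_rfl
      · exact le_rfl
    · split_ifs
      exacts [hμ j, le_rfl]
  · refine mul_nonneg (by positivity) ?_
    split_ifs
    exacts [hlam, le_rfl]

lemma sZero_nonempty {h : Fin k → ℕ} (hH : ∃ i, h i = 0) : (sZero k h).Nonempty := by
  obtain ⟨i, hi⟩ := hH
  exact ⟨i, mem_sZero.mpr hi⟩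

lemma hasSum_row (hρ : rho k lam μ ≠ 0)
    (hρsμ : rho k lam μ * (∑ i, μ i) = lam)
    (hlρ : lam * (rho k lam μ)⁻¹ = ∑ i, μ i)
    (hnorm : lam + ∑ i, μ i = 1)
    {h : Fin k → ℕ} (hH : ∃ i, h i = 0) : HasSum (pMat k lam μ h) 1 := by
  have hfun : pMat k lam μ h = Qmat k lam μ h := funext (pMat_eq hρ hlρ h)
  rw [hfun]
  have hSne : (sZero k h).Nonempty := sZero_nonempty hH
  have hcpos : 1 ≤ (sZero k h).card := Finset.card_pos.mpr hSne
  have H1 : HasSum (fun h' => ∑ i ∈ sZero k h, if h' = upT h i then rho k lam μ * μ i else 0)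
      (∑ i ∈ sZero k h, rho k lam μ * μ i) :=
    hasSum_sum fun i _ => hasSum_ite_eq _ _
  have H3 : HasSum (fun h' => ∑ j ∈ (sZero k h)ᶜ,
        if h' = Function.update h j (h j - 1) then rho k lam μ * μ j else 0)
      (∑ j ∈ (sZero k h)ᶜ, rho k lam μ * μ j) :=
    hasSum_sum fun j _ => hasSum_ite_eq _ _
  have hgsum : (∑ i ∈ sZero k h, rho k lam μ * μ i) + (∑ j ∈ (sZero k h)ᶜ, rho k lam μ * μ j)
      = lam := by
    rw [← Finset.mul_sum, ← Finset.mul_sum, ← mul_add, Finset.sum_add_sum_compl]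
    exact hρsμ
  unfold Qmat
  by_cases hc2 : 2 ≤ (sZero k h).card
  · have hc1 : ¬ ((sZero k h).card = 1) := by omega
    have hm : ((sZero k h).card : ℝ) ≠ 0 := Nat.cast_ne_zero.mpr (by omega)
    have H2 : HasSum (fun h' => if 2 ≤ (sZero k h).card then
          ∑ i ∈ sZero k h,
            (if h' = Function.update h i 1 then lam / ((sZero k h).card * rho k lam μ) else 0)
        else 0)
        (∑ _i ∈ sZero k h, lam / ((sZero k h).card * rho k lam μ)) := by
      simp only [if_pos hc2]
      exact hasSum_sum fun i _ => hasSum_ite_eq _ _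
    have H4 : HasSum (fun h' => if (sZero k h).card = 1 ∧ h' = dmT h then (∑ i, μ i) else 0)
        0 := by
      have he : (fun h' => if (sZero k h).card = 1 ∧ h' = dmT h then (∑ i, μ i) else 0)
          = fun _ => (0:ℝ) := funext fun h' => if_neg (fun hcc => hc1 hcc.1)
      rw [he]
      exact hasSum_zero
    have Htot := ((H1.add H2).add H3).add H4
    have hval : ((∑ i ∈ sZero k h, rho k lam μ * μ i)
          + (∑ _i ∈ sZero k h, lam / ((sZero k h).card * rho k lam μ)))
        + (∑ j ∈ (sZero k h)ᶜ, rho k lam μ * μ j) + 0 = 1 := by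
      have h2 : (∑ _i ∈ sZero k h, lam / ((sZero k h).card * rho k lam μ))
          = ∑ i, μ i := by
        rw [Finset.sum_const, nsmul_eq_mul, ← hlρ]
        field_simp
      rw [h2]
      have := hgsum
      linarith [hgsum, hnorm]
    rwa [hval] at Htot
  · have hc1 : (sZero k h).card = 1 := by omega
    have H2 : HasSum (fun h' => if 2 ≤ (sZero k h).card then
          ∑ i ∈ sZero k h,
            (if h' = Function.update h i 1 then lam / ((sZero k h).card * rho k lam μ) else 0)
        else 0) 0 := by
      simp only [if_neg hc2]
      exact hasSum_zero
    have H4 : HasSum (fun h' => if (sZero k h).card = 1 ∧ h' = dmT h then (∑ i, μ i) else 0)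
        (∑ i, μ i) := by
      have he : (fun h' => if (sZero k h).card = 1 ∧ h' = dmT h then (∑ i, μ i) else 0)
          = fun h' => if h' = dmT h then (∑ i, μ i) else 0 :=
        funext fun h' => by simp [hc1]
      rw [he]
      exact hasSum_ite_eq _ _
    have Htot := ((H1.add H2).add H3).add H4
    have hval : ((∑ i ∈ sZero k h, rho k lam μ * μ i) + 0)
        + (∑ j ∈ (sZero k h)ᶜ, rho k lam μ * μ j) + (∑ i, μ i) = 1 := by
      linarith [hgsum, hnorm]
    rwa [hval] at Htot

lemma closed (hρ : rho k lam μ ≠ 0)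
    (hlρ : lam * (rho k lam μ)⁻¹ = ∑ i, μ i)
    {h h' : Fin k → ℕ} (hH : ∃ i, h i = 0) (hQ : pMat k lam μ h h' ≠ 0) :
    ∃ i, h' i = 0 := by
  rw [pMat_eq hρ hlρ] at hQ
  by_contra hno
  push_neg at hno
  apply hQ
  obtain ⟨i0, hi0⟩ := hH
  unfold Qmat
  have g1 : (∑ i ∈ sZero k h, if h' = upT h i then rho k lam μ * μ i else 0) = 0 := by
    refine Finset.sum_eq_zero fun i _ => if_neg fun he => ?_
    exact hno i (by rw [he]; exact if_pos rfl)
  have g2 : (if 2 ≤ (sZero k h).card then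
      ∑ i ∈ sZero k h,
        (if h' = Function.update h i 1 then lam / ((sZero k h).card * rho k lam μ) else 0)
    else 0) = 0 := by
    split_ifs with hc2
    · refine Finset.sum_eq_zero fun i hi => if_neg fun he => ?_
      obtain ⟨a, ha, b, hb, hab⟩ := Finset.one_lt_card.mp (by omega : 1 < (sZero k h).card)
      rcases eq_or_ne a i with e | e
      · have hbi : b ≠ i := fun hb' => hab (by rw [e, hb'])
        refine hno b ?_
        rw [he, Function.update_of_ne hbi]
        exact mem_sZero.mp hb
      · refine hno a ?_
        rw [he, Function.update_of_ne e]
        exact mem_sZero.mp ha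
    · rfl
  have g3 : (∑ j ∈ (sZero k h)ᶜ, if h' = Function.update h j (h j - 1)
      then rho k lam μ * μ j else 0) = 0 := by
    refine Finset.sum_eq_zero fun j hj => if_neg fun he => ?_
    have hij : i0 ≠ j := by
      intro e
      exact (Finset.mem_compl.mp hj) (mem_sZero.mpr (e ▸ hi0))
    refine hno i0 ?_
    rw [he, Function.update_of_ne hij]
    exact hi0
  have g4 : (if (sZero k h).card = 1 ∧ h' = dmT h then (∑ i, μ i) else 0) = 0 := by
    refine if_neg fun hc => ?_
    refine hno i0 ?_
    rw [hc.2]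
    unfold dmT
    omega
  rw [g1, g2, g3, g4]
  ring


lemma drift {lam : ℝ} {μ : Fin k → ℝ} (hk : 2 ≤ k) (hρne : rho k lam μ ≠ 0)
    (hρ0 : 0 ≤ rho k lam μ) (hμ0 : ∀ i, 0 ≤ μ i)
    (hρsμ : rho k lam μ * (∑ i, μ i) = lam)
    (hlρ : lam * (rho k lam μ)⁻¹ = ∑ i, μ i)
    (hnorm : lam + ∑ i, μ i = 1)
    {h : Fin k → ℕ} (hH : ∃ i, h i = 0) (hne : h ≠ fun _ => 0) :
    ∑' h', pMat k lam μ h h' * Vr h' ≤ Vr h - ((∑ i, μ i) - lam) := by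
  set ρ := rho k lam μ with hρdef
  have hk1 : 1 ≤ k := by omega
  have hM : 1 ≤ M h := M_pos hne
  have hSne : (sZero k h).Nonempty := sZero_nonempty hH
  have hcpos : 1 ≤ (sZero k h).card := Finset.card_pos.mpr hSne
  set F1 : (Fin k → ℕ) → ℝ :=
    fun h' => ∑ i ∈ sZero k h, if h' = upT h i then (ρ * μ i) * Vr (upT h i) else 0 with hF1
  set F2 : (Fin k → ℕ) → ℝ :=
    fun h' => if 2 ≤ (sZero k h).card then
        ∑ i ∈ sZero k h, if h' = Function.update h i 1 then
          (lam / ((sZero k h).card * ρ)) * Vr (Function.update h i 1) else 0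
      else 0 with hF2
  set F3 : (Fin k → ℕ) → ℝ :=
    fun h' => ∑ j ∈ (sZero k h)ᶜ, if h' = Function.update h j (h j - 1) then
      (ρ * μ j) * Vr (Function.update h j (h j - 1)) else 0 with hF3
  set F4 : (Fin k → ℕ) → ℝ :=
    fun h' => if (sZero k h).card = 1 ∧ h' = dmT h then (∑ i, μ i) * Vr (dmT h) else 0 with hF4
  have hsplit : ∀ h', pMat k lam μ h h' * Vr h' = F1 h' + F2 h' + F3 h' + F4 h' := by
    intro h'
    rw [pMat_eq hρne hlρ]
    simp only [hF1, hF2, hF3, hF4]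
    unfold Qmat
    rw [add_mul, add_mul, add_mul]
    have p1 : (∑ i ∈ sZero k h, if h' = upT h i then ρ * μ i else 0) * Vr h'
        = ∑ i ∈ sZero k h, if h' = upT h i then (ρ * μ i) * Vr (upT h i) else 0 := by
      rw [Finset.sum_mul]
      refine Finset.sum_congr rfl fun i _ => ?_
      by_cases hc : h' = upT h i
      · rw [if_pos hc, if_pos hc, hc]
      · rw [if_neg hc, if_neg hc, zero_mul]
    have p2 : (if 2 ≤ (sZero k h).card then
          ∑ i ∈ sZero k h,
            (if h' = Function.update h i 1 then lam / ((sZero k h).card * ρ) else 0)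
        else 0) * Vr h'
        = (if 2 ≤ (sZero k h).card then
          ∑ i ∈ sZero k h, if h' = Function.update h i 1 then
            (lam / ((sZero k h).card * ρ)) * Vr (Function.update h i 1) else 0
        else 0) := by
      split_ifs with hc2
      · rw [Finset.sum_mul]
        refine Finset.sum_congr rfl fun i _ => ?_
        by_cases hc : h' = Function.update h i 1
        · rw [if_pos hc, if_pos hc, hc]
        · rw [if_neg hc, if_neg hc, zero_mul]
      · rw [zero_mul]
    have p3 : (∑ j ∈ (sZero k h)ᶜ, if h' = Function.update h j (h j - 1) then ρ * μ j else 0)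
          * Vr h'
        = ∑ j ∈ (sZero k h)ᶜ, if h' = Function.update h j (h j - 1) then
            (ρ * μ j) * Vr (Function.update h j (h j - 1)) else 0 := by
      rw [Finset.sum_mul]
      refine Finset.sum_congr rfl fun j _ => ?_
      by_cases hc : h' = Function.update h j (h j - 1)
      · rw [if_pos hc, if_pos hc, hc]
      · rw [if_neg hc, if_neg hc, zero_mul]
    have p4 : (if (sZero k h).card = 1 ∧ h' = dmT h then (∑ i, μ i) else 0) * Vr h'
        = (if (sZero k h).card = 1 ∧ h' = dmT h then (∑ i, μ i) * Vr (dmT h) else 0) := by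
      by_cases hc : (sZero k h).card = 1 ∧ h' = dmT h
      · rw [if_pos hc, if_pos hc, hc.2]
      · rw [if_neg hc, if_neg hc, zero_mul]
    rw [p1, p2, p3, p4]
  have s1 : Summable F1 := by
    refine summable_of_ne_finset_zero (s := (sZero k h).image (upT h)) fun h' hh' => ?_
    simp only [hF1]
    refine Finset.sum_eq_zero fun i hi => if_neg fun he => ?_
    exact hh' (he ▸ Finset.mem_image_of_mem (upT h) hi)
  have s2 : Summable F2 := by
    by_cases hc2 : 2 ≤ (sZero k h).card
    · refine summable_of_ne_finset_zero
        (s := (sZero k h).image (fun i => Function.update h i 1)) fun h' hh' => ?_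
      simp only [hF2, if_pos hc2]
      refine Finset.sum_eq_zero fun i hi => if_neg fun he => ?_
      exact hh' (he ▸ Finset.mem_image_of_mem (fun i => Function.update h i 1) hi)
    · have : F2 = fun _ => (0:ℝ) := by
        funext h'; simp only [hF2, if_neg hc2]
      rw [this]; exact summable_zero
  have s3 : Summable F3 := by
    refine summable_of_ne_finset_zero
      (s := ((sZero k h)ᶜ).image (fun j => Function.update h j (h j - 1))) fun h' hh' => ?_
    simp only [hF3]
    refine Finset.sum_eq_zero fun j hj => if_neg fun he => ?_
    exact hh' (he ▸ Finset.mem_image_of_mem (fun j => Function.update h j (h j - 1)) hj)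
  have s4 : Summable F4 := by
    refine summable_of_ne_finset_zero (s := {dmT h}) fun h' hh' => ?_
    simp only [hF4]
    exact if_neg fun (hc : (sZero k h).card = 1 ∧ h' = dmT h) => hh' (hc.2 ▸ Finset.mem_singleton_self _)
  have hT1 : ∑' h', F1 h' = ∑ i ∈ sZero k h, (ρ * μ i) * Vr (upT h i) := by
    simp only [hF1]
    rw [Summable.tsum_finsetSum (fun i _ => (hasSum_ite_eq _ _).summable)]
    exact Finset.sum_congr rfl fun i _ => tsum_ite_eq _ _
  have hT3 : ∑' h', F3 h' = ∑ j ∈ (sZero k h)ᶜ, (ρ * μ j) * Vr (Function.update h j (h j - 1)) := by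
    simp only [hF3]
    rw [Summable.tsum_finsetSum (fun j _ => (hasSum_ite_eq _ _).summable)]
    exact Finset.sum_congr rfl fun j _ => tsum_ite_eq _ _
  have hT1v : ∑ i ∈ sZero k h, (ρ * μ i) * Vr (upT h i)
      = (ρ * ∑ i ∈ sZero k h, μ i) * (Vr h + 1) := by
    rw [Finset.mul_sum, Finset.sum_mul]
    refine Finset.sum_congr rfl fun i hi => ?_
    rw [Vr_upT hk1 (mem_sZero.mp hi) hM]
  have hT3v : ∑ j ∈ (sZero k h)ᶜ, (ρ * μ j) * Vr (Function.update h j (h j - 1))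
      ≤ (ρ * ∑ j ∈ (sZero k h)ᶜ, μ j) * (Vr h + 1) := by
    rw [Finset.mul_sum, Finset.sum_mul]
    refine Finset.sum_le_sum fun j hj => ?_
    have hj0 : h j ≠ 0 := fun h0 => (Finset.mem_compl.mp hj) (mem_sZero.mpr h0)
    exact mul_le_mul_of_nonneg_left (Vr_update_pred_le hj0) (mul_nonneg hρ0 (hμ0 j))
  have hAB : (∑ i ∈ sZero k h, μ i) + (∑ j ∈ (sZero k h)ᶜ, μ j) = ∑ i, μ i :=
    Finset.sum_add_sum_compl _ _
  have hkey : (ρ * ∑ i ∈ sZero k h, μ i) * (Vr h + 1) + (∑ i, μ i) * (Vr h - 1)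
        + (ρ * ∑ j ∈ (sZero k h)ᶜ, μ j) * (Vr h + 1)
      = Vr h - ((∑ i, μ i) - lam) := by
    linear_combination (ρ * (Vr h + 1)) * hAB + (Vr h + 1) * hρsμ + (Vr h) * hnorm
  rw [tsum_congr hsplit, Summable.tsum_add ((s1.add s2).add s3) s4, Summable.tsum_add (s1.add s2) s3,
    Summable.tsum_add s1 s2, hT1, hT3, hT1v]
  by_cases hc2 : 2 ≤ (sZero k h).card
  · have hc1 : ¬ ((sZero k h).card = 1) := by omega
    have hm : ((sZero k h).card : ℝ) ≠ 0 := Nat.cast_ne_zero.mpr (by omega)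
    have hT2 : ∑' h', F2 h' = (∑ i, μ i) * (Vr h - 1) := by
      simp only [hF2, if_pos hc2]
      rw [Summable.tsum_finsetSum (fun i _ => (hasSum_ite_eq _ _).summable)]
      have he : ∀ i ∈ sZero k h, (∑' h', if h' = Function.update h i 1 then
            (lam / ((sZero k h).card * ρ)) * Vr (Function.update h i 1) else 0)
          = (lam / ((sZero k h).card * ρ)) * (Vr h - 1) := by
        intro i hi
        rw [tsum_ite_eq, Vr_update_one hk1 (mem_sZero.mp hi) hM]
      rw [Finset.sum_congr rfl he, Finset.sum_const, nsmul_eq_mul, ← hlρ]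
      field_simp
    have hT4 : ∑' h', F4 h' = 0 := by
      have he : F4 = fun _ => (0:ℝ) := funext fun h' => if_neg (fun hcc => hc1 hcc.1)
      rw [he]; exact tsum_zero
    rw [hT2, hT4]
    calc (ρ * ∑ i ∈ sZero k h, μ i) * (Vr h + 1) + (∑ i, μ i) * (Vr h - 1)
          + (∑ j ∈ (sZero k h)ᶜ, (ρ * μ j) * Vr (Function.update h j (h j - 1))) + 0
        ≤ (ρ * ∑ i ∈ sZero k h, μ i) * (Vr h + 1) + (∑ i, μ i) * (Vr h - 1)
          + (ρ * ∑ j ∈ (sZero k h)ᶜ, μ j) * (Vr h + 1) := by linarith [hT3v]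
      _ = Vr h - ((∑ i, μ i) - lam) := hkey
  · have hc1 : (sZero k h).card = 1 := by omega
    have hT2 : ∑' h', F2 h' = 0 := by
      have he : F2 = fun _ => (0:ℝ) := funext fun h' => by simp only [hF2, if_neg hc2]
      rw [he]; exact tsum_zero
    have hT4 : ∑' h', F4 h' = (∑ i, μ i) * (Vr h - 1) := by
      obtain ⟨i, hSi⟩ := Finset.card_eq_one.mp hc1
      have hi0 : h i = 0 := mem_sZero.mp (by rw [hSi]; exact Finset.mem_singleton_self i)
      have hone : ∀ j, j ≠ i → h j ≠ 0 := by
        intro j hj hj0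
        exact hj (Finset.mem_singleton.mp (hSi ▸ mem_sZero.mpr hj0))
      have he : F4 = fun h' => if h' = dmT h then (∑ i, μ i) * Vr (dmT h) else 0 :=
        funext fun h' => by simp [hF4, hc1]
      rw [he, tsum_ite_eq, Vr_dmT hk1 hi0 hone hM]
    rw [hT2, hT4]
    calc (ρ * ∑ i ∈ sZero k h, μ i) * (Vr h + 1) + 0
          + (∑ j ∈ (sZero k h)ᶜ, (ρ * μ j) * Vr (Function.update h j (h j - 1)))
          + (∑ i, μ i) * (Vr h - 1)
        ≤ (ρ * ∑ i ∈ sZero k h, μ i) * (Vr h + 1) + (∑ i, μ i) * (Vr h - 1)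
          + (ρ * ∑ j ∈ (sZero k h)ᶜ, μ j) * (Vr h + 1) := by linarith [hT3v]
      _ = Vr h - ((∑ i, μ i) - lam) := hkey


def tset (h : Fin k → ℕ) : Finset (Fin k → ℕ) :=
  ((sZero k h).image (upT h)) ∪ ((sZero k h).image (fun i => Function.update h i 1))
    ∪ (((sZero k h)ᶜ).image (fun j => Function.update h j (h j - 1))) ∪ {dmT h}

lemma Qmat_vanish {lam : ℝ} {μ : Fin k → ℝ} (h h' : Fin k → ℕ) (hh' : h' ∉ tset h) :
    Qmat k lam μ h h' = 0 := by
  have m1 : h' ∉ (sZero k h).image (upT h) := fun hm =>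
    hh' (Finset.mem_union_left _ (Finset.mem_union_left _ (Finset.mem_union_left _ hm)))
  have m2 : h' ∉ (sZero k h).image (fun i => Function.update h i 1) := fun hm =>
    hh' (Finset.mem_union_left _ (Finset.mem_union_left _ (Finset.mem_union_right _ hm)))
  have m3 : h' ∉ ((sZero k h)ᶜ).image (fun j => Function.update h j (h j - 1)) := fun hm =>
    hh' (Finset.mem_union_left _ (Finset.mem_union_right _ hm))
  have m4 : h' ∉ ({dmT h} : Finset (Fin k → ℕ)) := fun hm => hh' (Finset.mem_union_right _ hm)
  unfold Qmat
  have g1 : (∑ i ∈ sZero k h, if h' = upT h i then rho k lam μ * μ i else 0) = 0 := by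
    refine Finset.sum_eq_zero fun i hi => if_neg fun he => ?_
    exact m1 (he ▸ Finset.mem_image_of_mem (upT h) hi)
  have g2 : (if 2 ≤ (sZero k h).card then
      ∑ i ∈ sZero k h,
        (if h' = Function.update h i 1 then lam / ((sZero k h).card * rho k lam μ) else 0)
    else 0) = 0 := by
    split_ifs with hc2
    · refine Finset.sum_eq_zero fun i hi => if_neg fun he => ?_
      exact m2 (he ▸ Finset.mem_image_of_mem (fun i => Function.update h i 1) hi)
    · rfl
  have g3 : (∑ j ∈ (sZero k h)ᶜ, if h' = Function.update h j (h j - 1)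
      then rho k lam μ * μ j else 0) = 0 := by
    refine Finset.sum_eq_zero fun j hj => if_neg fun he => ?_
    exact m3 (he ▸ Finset.mem_image_of_mem (fun j => Function.update h j (h j - 1)) hj)
  have g4 : (if (sZero k h).card = 1 ∧ h' = dmT h then (∑ i, μ i) else 0) = 0 := by
    refine if_neg fun hc => ?_
    exact m4 (hc.2 ▸ Finset.mem_singleton_self _)
  rw [g1, g2, g3, g4]
  ring

lemma QV_summable {lam : ℝ} {μ : Fin k → ℝ} (hρne : rho k lam μ ≠ 0)
    (hlρ : lam * (rho k lam μ)⁻¹ = ∑ i, μ i) (h : Fin k → ℕ) :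
    Summable (fun h' => pMat k lam μ h h' * Vr h') := by
  refine summable_of_ne_finset_zero (s := tset h) fun h' hh' => ?_
  rw [pMat_eq hρne hlρ, Qmat_vanish h h' hh', zero_mul]

end JSQaux

/-- **Positive recurrence of the twisted chain:** `Δ_y⁻¹ A_*(ρ^{−k}) Δ_y` is a stochastic
matrix on `H`, and the Markov chain it generates is positive recurrent; in particular it
admits a stationary probability distribution `ν` on `H`. -/
theorem twisted_chain_positive_recurrent
    (k : ℕ) (hk : 2 ≤ k) (lam : ℝ) (μ : Fin k → ℝ)
    (hlam : 0 < lam) (hμ : ∀ i, 0 < μ i)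
    (hnorm : lam + ∑ i, μ i = 1)
    (hρ : rho k lam μ < 1)
    :
    (∀ h : Fin k → ℕ, (∃ i, h i = 0) →
      (∀ h', 0 ≤ pMat k lam μ h h') ∧ HasSum (pMat k lam μ h) 1) ∧
    (∃ ν : (Fin k → ℕ) → ℝ,
      (∀ h, 0 ≤ ν h) ∧
      (∀ h, ν h ≠ 0 → ∃ i, h i = 0) ∧
      HasSum ν 1 ∧
      (∀ h' : Fin k → ℕ, (∑' h : Fin k → ℕ, ν h * pMat k lam μ h h') = ν h')) := by
  haveI : Nonempty (Fin k) := ⟨⟨0, by omega⟩⟩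
  have hμ0 : ∀ i, 0 ≤ μ i := fun i => (hμ i).le
  have hsμ : 0 < ∑ i, μ i := Finset.sum_pos (fun i _ => hμ i) Finset.univ_nonempty
  have hρpos : 0 < rho k lam μ := div_pos hlam hsμ
  have hρne : rho k lam μ ≠ 0 := ne_of_gt hρpos
  have hρsμ : rho k lam μ * (∑ i, μ i) = lam := div_mul_cancel₀ _ (ne_of_gt hsμ)
  have hlρ : lam * (rho k lam μ)⁻¹ = ∑ i, μ i := by
    unfold rho
    field_simp
  have hεpos : 0 < (∑ i, μ i) - lam := by
    have hlt : lam < ∑ i, μ i := by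
      have := (div_lt_one hsμ).mp hρ
      exact this
    linarith
  have hnonneg : ∀ h h', 0 ≤ pMat k lam μ h h' :=
    JSQaux.pMat_nonneg hρpos hlam.le hμ0
  have hrowR : ∀ h : Fin k → ℕ, (∃ i, h i = 0) → HasSum (pMat k lam μ h) 1 :=
    fun h hH => JSQaux.hasSum_row hρne hρsμ hlρ hnorm hH
  refine ⟨fun h hH => ⟨fun h' => hnonneg h h', hrowR h hH⟩, ?_⟩
  -- ENNReal setup
  set P : (Fin k → ℕ) → (Fin k → ℕ) → ℝ≥0∞ :=
    fun x y => ENNReal.ofReal (pMat k lam μ x y) with hP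
  set o : Fin k → ℕ := fun _ => 0 with ho'
  set V : (Fin k → ℕ) → ℝ≥0∞ := fun x => ENNReal.ofReal (JSQaux.Vr x) with hV
  set ε : ℝ≥0∞ := ENNReal.ofReal ((∑ i, μ i) - lam) with hε
  have hoH : ∃ i, o i = 0 := ⟨⟨0, by omega⟩, rfl⟩
  have hε0 : ε ≠ 0 := by
    rw [hε]
    simp only [ne_eq, ENNReal.ofReal_eq_zero, not_le]
    linarith
  have hPV : ∀ x, (∑' y, P x y * V y)
      = ENNReal.ofReal (∑' y, pMat k lam μ x y * JSQaux.Vr y) := by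
    intro x
    rw [ENNReal.ofReal_tsum_of_nonneg
      (fun y => mul_nonneg (hnonneg x y) (JSQaux.Vr_nonneg y))
      (JSQaux.QV_summable hρne hlρ x)]
    exact tsum_congr fun y => (ENNReal.ofReal_mul (hnonneg x y)).symm
  have hrow : ∀ x : Fin k → ℕ, (∃ i, x i = 0) → ∑' y, P x y = 1 := by
    intro x hx
    have hs := hrowR x hx
    have hthis := ENNReal.ofReal_tsum_of_nonneg (fun y => hnonneg x y) hs.summable
    rw [hs.tsum_eq] at hthis
    simp only [hP]
    rw [← hthis]
    exact ENNReal.ofReal_one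
  have hclosed : ∀ x y : Fin k → ℕ, (∃ i, x i = 0) → P x y ≠ 0 → (∃ i, y i = 0) := by
    intro x y hx hPxy
    refine JSQaux.closed hρne hlρ hx fun h0 => hPxy ?_
    show ENNReal.ofReal (pMat k lam μ x y) = 0
    rw [h0]
    exact ENNReal.ofReal_zero
  have hdrift : ∀ x : Fin k → ℕ, (∃ i, x i = 0) → x ≠ o →
      (∑' y, P x y * V y) + ε ≤ V x := by
    intro x hx hxo
    rw [hPV x, hε]
    simp only [hV]
    rw [← ENNReal.ofReal_add
      (tsum_nonneg fun y => mul_nonneg (hnonneg x y) (JSQaux.Vr_nonneg y)) hεpos.le]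
    refine ENNReal.ofReal_le_ofReal ?_
    have hd := JSQaux.drift hk hρne hρpos.le hμ0 hρsμ hlρ hnorm hx hxo
    linarith
  obtain ⟨nuE, hsuppν, hνtop, hνsum, hνstat⟩ :=
    JSQaux.exists_stationary P o (fun x => ∃ i, x i = 0) V ε
      (∑' y, P o y * V y) hε0
      (by rw [hPV o]; exact ENNReal.ofReal_ne_top) hoH hrow hclosed le_rfl hdrift
  refine ⟨fun h => (nuE h).toReal, fun h => ENNReal.toReal_nonneg, ?_, ?_, ?_⟩
  · intro h hh
    refine hsuppν h fun h0 => hh ?_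
    show (nuE h).toReal = 0
    rw [h0]
    exact ENNReal.toReal_zero
  · have hsum : Summable (fun h => (nuE h).toReal) :=
      ENNReal.summable_toReal (by rw [hνsum]; exact ENNReal.one_ne_top)
    have htsum : ∑' h, (nuE h).toReal = 1 := by
      have e : (∑' h, (nuE h).toReal) = (∑' h, nuE h).toReal := (ENNReal.tsum_toReal_eq hνtop).symm
      rw [e, hνsum, ENNReal.toReal_one]
    exact htsum ▸ hsum.hasSum
  · intro h'
    have hterm : ∀ h, (nuE h).toReal * pMat k lam μ h h' = ((nuE h) * P h h').toReal := by
      intro h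
      rw [ENNReal.toReal_mul]
      congr 1
      exact (ENNReal.toReal_ofReal (hnonneg h h')).symm
    calc ∑' h, (nuE h).toReal * pMat k lam μ h h'
        = ∑' h, ((nuE h) * P h h').toReal := tsum_congr hterm
      _ = (∑' h, (nuE h) * P h h').toReal :=
          (ENNReal.tsum_toReal_eq fun h =>
            ENNReal.mul_ne_top (hνtop h) ENNReal.ofReal_ne_top).symm
      _ = (nuE h').toReal := by rw [hνstat h']
end

section
/- Fix θ ∈ ℝ^{k+1}. If φ_{0U}(θ) < ∞ and 1 − γ_{+U}(θ) > 0 for every nonempty U ⊆ J, then Σ_{U} (1 − γ_{+U}(θ)) φ_{+U}(θ) ≤ Σ_{U} (γ_{0U}(θ) − 1) φ_{0U}(θ) < ∞, where both sums range over all nonempty U ⊆ J. -/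
open Filter Topology
open scoped ENNReal

noncomputable section

/-- Index set of the shortest queues: the zero coordinates of the difference vector. -/
def zeroSet (k : ℕ) (y : Fin k → ℕ) : Finset (Fin k) :=
  Finset.univ.filter (fun i => y i = 0)

/-- One-step transition probability of the uniformized JSQ chain `Z = (M, Y)` on
`ℕ × (Fin k → ℕ)`, where `M` is the minimum queue length and `Y` the vector of
differences from the minimum. -/
def jsqP (k : ℕ) (lam : ℝ) (μ : Fin k → ℝ) (s s' : ℕ × (Fin k → ℕ)) : ℝ :=
  (if (zeroSet k s.2).card = 1 then
      (if s' = (s.1 + 1, fun j => s.2 j - 1) then lam else 0)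
    else
      ∑ i ∈ zeroSet k s.2,
        (if s' = (s.1, Function.update s.2 i 1) then lam / (zeroSet k s.2).card else 0))
  + (∑ j ∈ (zeroSet k s.2)ᶜ,
      (if s' = (s.1, Function.update s.2 j (s.2 j - 1)) then μ j else 0))
  + (∑ i ∈ zeroSet k s.2,
      (if s' = (if s.1 = 0 then s else (s.1 - 1, fun j => if j = i then 0 else s.2 j + 1))
        then μ i else 0))

/-- The exponential weight `e^{θ·Z}` for `θ ∈ ℝ^{k+1}` and a state `Z = (m, y)`. -/
def expWeight (k : ℕ) (θ : Fin (k + 1) → ℝ) (s : ℕ × (Fin k → ℕ)) : ℝ :=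
  Real.exp (θ 0 * (s.1 : ℝ) + ∑ i : Fin k, θ i.succ * (s.2 i : ℝ))

/-- The stationary moment generating function `φ(θ) = E[e^{θ·Z}] ∈ [0,∞]`. -/
def phi (k : ℕ) (π : ℕ × (Fin k → ℕ) → ℝ) (θ : Fin (k + 1) → ℝ) : ℝ≥0∞ :=
  ∑' s : ℕ × (Fin k → ℕ), ENNReal.ofReal (π s * expWeight k θ s)

/-- `φ_{+U}(θ) = E[e^{θ·Z} 1(Z ∈ S_{+U})]`. -/
def phiPlus (k : ℕ) (π : ℕ × (Fin k → ℕ) → ℝ) (U : Finset (Fin k))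
    (θ : Fin (k + 1) → ℝ) : ℝ≥0∞ :=
  ∑' s : ℕ × (Fin k → ℕ),
    if 1 ≤ s.1 ∧ zeroSet k s.2 = U then ENNReal.ofReal (π s * expWeight k θ s) else 0

/-- `φ_{0U}(θ) = E[e^{θ·Z} 1(Z ∈ S_{0U})]`. -/
def phiZero (k : ℕ) (π : ℕ × (Fin k → ℕ) → ℝ) (U : Finset (Fin k))
    (θ : Fin (k + 1) → ℝ) : ℝ≥0∞ :=
  ∑' s : ℕ × (Fin k → ℕ),
    if s.1 = 0 ∧ zeroSet k s.2 = U then ENNReal.ofReal (π s * expWeight k θ s) else 0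

/-- The mgf `γ_{+U}(θ)` of the one-step increment from states in `S_{+U}`. -/
def gammaPlus (k : ℕ) (lam : ℝ) (μ : Fin k → ℝ) (U : Finset (Fin k))
    (θ : Fin (k + 1) → ℝ) : ℝ :=
  (if U.card = 1 then lam * Real.exp (θ 0 - ∑ j ∈ Uᶜ, θ j.succ)
    else ∑ i ∈ U, (lam / U.card) * Real.exp (θ i.succ))
  + ∑ j ∈ Uᶜ, μ j * Real.exp (-θ j.succ)
  + ∑ i ∈ U, μ i * Real.exp (-θ 0 + ∑ j ∈ Finset.univ.erase i, θ j.succ)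

/-- The mgf `γ_{0U}(θ)` of the one-step increment from states in `S_{0U}`. -/
def gammaZero (k : ℕ) (lam : ℝ) (μ : Fin k → ℝ) (U : Finset (Fin k))
    (θ : Fin (k + 1) → ℝ) : ℝ :=
  (if U.card = 1 then lam * Real.exp (θ 0 - ∑ j ∈ Uᶜ, θ j.succ)
    else ∑ i ∈ U, (lam / U.card) * Real.exp (θ i.succ))
  + ∑ j ∈ Uᶜ, μ j * Real.exp (-θ j.succ)
  + ∑ i ∈ U, μ i

end


noncomputable section JSQAuxSec

namespace JSQAux
abbrev S (k : ℕ) := ℕ × (Fin k → ℕ)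

def T (k : ℕ) (lam : ℝ) (μ : Fin k → ℝ) (f : S k → ℝ≥0∞) (s : S k) : ℝ≥0∞ :=
  ∑' s' : S k, ENNReal.ofReal (jsqP k lam μ s s') * f s'

lemma tsum_ite_target {k : ℕ} (t : S k) (c : ℝ) (f : S k → ℝ≥0∞) :
    ∑' s' : S k, ENNReal.ofReal (if s' = t then c else 0) * f s'
      = ENNReal.ofReal c * f t := by
  rw [tsum_eq_single t]
  · simp
  · intro b hb; simp [hb]

lemma tsum_sum_ite_target {k : ℕ} {ι : Type*} (F : Finset ι) (t : ι → S k) (c : ι → ℝ)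
    (hc : ∀ i ∈ F, 0 ≤ c i) (f : S k → ℝ≥0∞) :
    ∑' s' : S k, ENNReal.ofReal (∑ i ∈ F, if s' = t i then c i else 0) * f s'
      = ∑ i ∈ F, ENNReal.ofReal (c i) * f (t i) := by
  have h1 : ∀ s' : S k, ENNReal.ofReal (∑ i ∈ F, if s' = t i then c i else 0) * f s'
      = ∑ i ∈ F, ENNReal.ofReal (if s' = t i then c i else 0) * f s' := by
    intro s'
    rw [ENNReal.ofReal_sum_of_nonneg (fun i hi => by split; exacts [hc i hi, le_rfl]), Finset.sum_mul]
  simp_rw [h1]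
  rw [Summable.tsum_finsetSum (fun i _ => ENNReal.summable)]
  exact Finset.sum_congr rfl fun i _ => tsum_ite_target _ _ _

lemma Tcalc {k : ℕ} (lam : ℝ) (μ : Fin k → ℝ) (hlam : 0 ≤ lam) (hμ : ∀ i, 0 ≤ μ i)
    (f : S k → ℝ≥0∞) (s : S k) :
    T k lam μ f s =
      (if (zeroSet k s.2).card = 1 then
          ENNReal.ofReal lam * f (s.1 + 1, fun j => s.2 j - 1)
        else ∑ i ∈ zeroSet k s.2,
          ENNReal.ofReal (lam / (zeroSet k s.2).card) * f (s.1, Function.update s.2 i 1))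
      + ∑ j ∈ (zeroSet k s.2)ᶜ,
          ENNReal.ofReal (μ j) * f (s.1, Function.update s.2 j (s.2 j - 1))
      + ∑ i ∈ zeroSet k s.2,
          ENNReal.ofReal (μ i) *
            f (if s.1 = 0 then s else (s.1 - 1, fun j => if j = i then 0 else s.2 j + 1)) := by
  have hA : ∀ s' : S k, 0 ≤ (if (zeroSet k s.2).card = 1 then
      (if s' = (s.1 + 1, fun j => s.2 j - 1) then lam else 0)
    else ∑ i ∈ zeroSet k s.2,
        (if s' = (s.1, Function.update s.2 i 1) then lam / (zeroSet k s.2).card else 0)) := by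
    intro s'; split
    · positivity
    · exact Finset.sum_nonneg fun i _ => by positivity
  have hB : ∀ s' : S k, 0 ≤ ∑ j ∈ (zeroSet k s.2)ᶜ,
      (if s' = (s.1, Function.update s.2 j (s.2 j - 1)) then μ j else 0) :=
    fun s' => Finset.sum_nonneg fun j _ => by have := hμ j; positivity
  have hC : ∀ s' : S k, 0 ≤ ∑ i ∈ zeroSet k s.2,
      (if s' = (if s.1 = 0 then s else (s.1 - 1, fun j => if j = i then 0 else s.2 j + 1))
        then μ i else 0) :=
    fun s' => Finset.sum_nonneg fun i _ => by have := hμ i; positivity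
  unfold T jsqP
  have expand : ∀ s' : S k, ENNReal.ofReal ((if (zeroSet k s.2).card = 1 then
      (if s' = (s.1 + 1, fun j => s.2 j - 1) then lam else 0)
    else ∑ i ∈ zeroSet k s.2,
        (if s' = (s.1, Function.update s.2 i 1) then lam / (zeroSet k s.2).card else 0))
    + (∑ j ∈ (zeroSet k s.2)ᶜ, (if s' = (s.1, Function.update s.2 j (s.2 j - 1)) then μ j else 0))
    + (∑ i ∈ zeroSet k s.2,
      (if s' = (if s.1 = 0 then s else (s.1 - 1, fun j => if j = i then 0 else s.2 j + 1))
        then μ i else 0))) * f s'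
    = ENNReal.ofReal (if (zeroSet k s.2).card = 1 then
      (if s' = (s.1 + 1, fun j => s.2 j - 1) then lam else 0)
    else ∑ i ∈ zeroSet k s.2,
        (if s' = (s.1, Function.update s.2 i 1) then lam / (zeroSet k s.2).card else 0)) * f s'
    + ENNReal.ofReal (∑ j ∈ (zeroSet k s.2)ᶜ,
        (if s' = (s.1, Function.update s.2 j (s.2 j - 1)) then μ j else 0)) * f s'
    + ENNReal.ofReal (∑ i ∈ zeroSet k s.2,
      (if s' = (if s.1 = 0 then s else (s.1 - 1, fun j => if j = i then 0 else s.2 j + 1))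
        then μ i else 0)) * f s' := by
    intro s'
    rw [ENNReal.ofReal_add (add_nonneg (hA s') (hB s')) (hC s'), ENNReal.ofReal_add (hA s') (hB s'),
      add_mul, add_mul]
  simp_rw [expand]
  rw [ENNReal.tsum_add, ENNReal.tsum_add]
  congr 1
  · congr 1
    · by_cases h : (zeroSet k s.2).card = 1
      · simp only [h, if_true]
        exact tsum_ite_target _ _ _
      · simp only [h, if_false]
        exact tsum_sum_ite_target _ _ _ (fun i _ => by positivity) f
    · exact tsum_sum_ite_target _ _ _ (fun j _ => hμ j) f
  · exact tsum_sum_ite_target _ _ _ (fun i _ => hμ i) f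

end JSQAux

namespace JSQAux

lemma T_mono {k : ℕ} (lam : ℝ) (μ : Fin k → ℝ) {f g : S k → ℝ≥0∞} (h : ∀ s, f s ≤ g s)
    (s : S k) : T k lam μ f s ≤ T k lam μ g s :=
  ENNReal.tsum_le_tsum fun s' => mul_le_mul_right (h s') _

lemma T_const_mul {k : ℕ} (lam : ℝ) (μ : Fin k → ℝ) (c : ℝ≥0∞) (f : S k → ℝ≥0∞) (s : S k) :
    T k lam μ (fun s => c * f s) s = c * T k lam μ f s := by
  unfold T
  simp_rw [mul_left_comm _ c]
  exact ENNReal.tsum_mul_left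

lemma branch_le {k : ℕ} (lam : ℝ) (hlam : 0 ≤ lam) (Z : Finset (Fin k)) :
    (if Z.card = 1 then ENNReal.ofReal lam
      else ∑ _i ∈ Z, ENNReal.ofReal (lam / Z.card)) ≤ ENNReal.ofReal lam := by
  split
  · exact le_rfl
  · rw [Finset.sum_const, nsmul_eq_mul]
    rcases Finset.eq_empty_or_nonempty Z with h | h
    · simp [h]
    · have hc : (Z.card : ℝ≥0∞) ≠ 0 := by
        simpa using Finset.card_ne_zero_of_mem h.choose_spec
      rw [← ENNReal.ofReal_natCast, ← ENNReal.ofReal_mul (by positivity)]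
      apply ENNReal.ofReal_le_ofReal
      have hc' : (Z.card : ℝ) ≠ 0 := by
        simpa using Finset.card_ne_zero_of_mem h.choose_spec
      field_simp
      exact le_rfl

lemma rowsum_le {k : ℕ} (lam : ℝ) (μ : Fin k → ℝ) (hlam : 0 ≤ lam) (hμ : ∀ i, 0 ≤ μ i)
    (hnorm : lam + ∑ i, μ i = 1) (s : S k) :
    T k lam μ (fun _ => (1 : ℝ≥0∞)) s ≤ 1 := by
  rw [Tcalc lam μ hlam hμ]
  simp only [mul_one]
  calc (if (zeroSet k s.2).card = 1 then ENNReal.ofReal lam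
      else ∑ _i ∈ zeroSet k s.2, ENNReal.ofReal (lam / (zeroSet k s.2).card))
      + ∑ j ∈ (zeroSet k s.2)ᶜ, ENNReal.ofReal (μ j)
      + ∑ i ∈ zeroSet k s.2, ENNReal.ofReal (μ i)
      ≤ ENNReal.ofReal lam + ∑ j ∈ (zeroSet k s.2)ᶜ, ENNReal.ofReal (μ j)
        + ∑ i ∈ zeroSet k s.2, ENNReal.ofReal (μ i) := by
        gcongr
        exact branch_le lam hlam _
    _ = ENNReal.ofReal lam + (∑ i ∈ zeroSet k s.2, ENNReal.ofReal (μ i)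
        + ∑ j ∈ (zeroSet k s.2)ᶜ, ENNReal.ofReal (μ j)) := by ring
    _ = ENNReal.ofReal lam + ∑ i : Fin k, ENNReal.ofReal (μ i) := by
        rw [Finset.sum_add_sum_compl]
    _ = ENNReal.ofReal (lam + ∑ i, μ i) := by
        rw [← ENNReal.ofReal_sum_of_nonneg (fun i _ => hμ i),
          ENNReal.ofReal_add hlam (Finset.sum_nonneg fun i _ => hμ i)]
    _ = 1 := by rw [hnorm, ENNReal.ofReal_one]

lemma T_le_const {k : ℕ} (lam : ℝ) (μ : Fin k → ℝ) (hlam : 0 ≤ lam) (hμ : ∀ i, 0 ≤ μ i)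
    (hnorm : lam + ∑ i, μ i = 1) (N : ℝ≥0∞) {f : S k → ℝ≥0∞} (hf : ∀ s, f s ≤ N) (s : S k) :
    T k lam μ f s ≤ N := by
  calc T k lam μ f s ≤ T k lam μ (fun _ => N * 1) s := T_mono lam μ (by simpa using hf) s
    _ = N * T k lam μ (fun _ => 1) s := T_const_mul lam μ N _ s
    _ ≤ N * 1 := mul_le_mul_right (rowsum_le lam μ hlam hμ hnorm s) N
    _ = N := mul_one N

lemma jsqP_nonneg {k : ℕ} (lam : ℝ) (μ : Fin k → ℝ) (hlam : 0 ≤ lam) (hμ : ∀ i, 0 ≤ μ i)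
    (s s' : S k) : 0 ≤ jsqP k lam μ s s' := by
  unfold jsqP
  have h1 : (0:ℝ) ≤ (if (zeroSet k s.2).card = 1 then
      (if s' = (s.1 + 1, fun j => s.2 j - 1) then lam else 0)
    else ∑ i ∈ zeroSet k s.2,
        (if s' = (s.1, Function.update s.2 i 1) then lam / (zeroSet k s.2).card else 0)) := by
    split
    · positivity
    · exact Finset.sum_nonneg fun i _ => by positivity
  have h2 : (0:ℝ) ≤ ∑ j ∈ (zeroSet k s.2)ᶜ,
      (if s' = (s.1, Function.update s.2 j (s.2 j - 1)) then μ j else 0) :=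
    Finset.sum_nonneg fun j _ => by have := hμ j; positivity
  have h3 : (0:ℝ) ≤ ∑ i ∈ zeroSet k s.2,
      (if s' = (if s.1 = 0 then s else (s.1 - 1, fun j => if j = i then 0 else s.2 j + 1))
        then μ i else 0) :=
    Finset.sum_nonneg fun i _ => by have := hμ i; positivity
  linarith

lemma jsqP_le_one {k : ℕ} (lam : ℝ) (μ : Fin k → ℝ) (hlam : 0 ≤ lam) (hμ : ∀ i, 0 ≤ μ i)
    (hnorm : lam + ∑ i, μ i = 1) (s s' : S k) : jsqP k lam μ s s' ≤ 1 := by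
  unfold jsqP
  have h1 : (if (zeroSet k s.2).card = 1 then
      (if s' = (s.1 + 1, fun j => s.2 j - 1) then lam else 0)
    else ∑ i ∈ zeroSet k s.2,
        (if s' = (s.1, Function.update s.2 i 1) then lam / (zeroSet k s.2).card else 0)) ≤ lam := by
    split
    · split <;> simp [hlam]
    · rcases Finset.eq_empty_or_nonempty (zeroSet k s.2) with h | h
      · simp [h, hlam]
      · have hc : (0:ℝ) < ((zeroSet k s.2).card : ℝ) := by
          have := Finset.card_pos.mpr h
          exact_mod_cast this
        calc ∑ i ∈ zeroSet k s.2,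
            (if s' = (s.1, Function.update s.2 i 1) then lam / (zeroSet k s.2).card else 0)
            ≤ ∑ _i ∈ zeroSet k s.2, lam / (zeroSet k s.2).card := by
              apply Finset.sum_le_sum
              intro i _
              split
              · exact le_rfl
              · positivity
          _ = lam := by
              rw [Finset.sum_const, nsmul_eq_mul]
              field_simp
  have h2 : (∑ j ∈ (zeroSet k s.2)ᶜ,
      (if s' = (s.1, Function.update s.2 j (s.2 j - 1)) then μ j else 0))
      ≤ ∑ j ∈ (zeroSet k s.2)ᶜ, μ j := by
    apply Finset.sum_le_sum; intro j _; split <;> simp [hμ j]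
  have h3 : (∑ i ∈ zeroSet k s.2,
      (if s' = (if s.1 = 0 then s else (s.1 - 1, fun j => if j = i then 0 else s.2 j + 1))
        then μ i else 0)) ≤ ∑ i ∈ zeroSet k s.2, μ i := by
    apply Finset.sum_le_sum; intro i _; split <;> split <;> simp [hμ i]
  have h4 : ∑ j ∈ (zeroSet k s.2)ᶜ, μ j + ∑ i ∈ zeroSet k s.2, μ i = ∑ i : Fin k, μ i := by
    rw [add_comm, Finset.sum_add_sum_compl]
  linarith

end JSQAux

namespace JSQAux

lemma stationary_lift {k : ℕ} (lam : ℝ) (μ : Fin k → ℝ) (hlam : 0 ≤ lam) (hμ : ∀ i, 0 ≤ μ i)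
    (hnorm : lam + ∑ i, μ i = 1) (π : S k → ℝ) (hπnn : ∀ s, 0 ≤ π s)
    (hπsum : Summable π)
    (hπstat : ∀ s', (∑' s, π s * jsqP k lam μ s s') = π s')
    (f : S k → ℝ≥0∞) :
    ∑' s : S k, ENNReal.ofReal (π s) * T k lam μ f s
      = ∑' s : S k, ENNReal.ofReal (π s) * f s := by
  have key : ∀ s' : S k,
      ∑' s : S k, ENNReal.ofReal (π s) * ENNReal.ofReal (jsqP k lam μ s s')
        = ENNReal.ofReal (π s') := by
    intro s'
    rw [← hπstat s', ENNReal.ofReal_tsum_of_nonneg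
      (fun s => mul_nonneg (hπnn s) (jsqP_nonneg lam μ hlam hμ s s'))
      (Summable.of_nonneg_of_le
        (fun s => mul_nonneg (hπnn s) (jsqP_nonneg lam μ hlam hμ s s'))
        (fun s => mul_le_of_le_one_right (hπnn s) (jsqP_le_one lam μ hlam hμ hnorm s s'))
        hπsum)]
    exact tsum_congr fun s => (ENNReal.ofReal_mul (hπnn s)).symm
  calc ∑' s : S k, ENNReal.ofReal (π s) * T k lam μ f s
      = ∑' s : S k, ∑' s' : S k,
          (ENNReal.ofReal (π s) * ENNReal.ofReal (jsqP k lam μ s s')) * f s' := by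
        apply tsum_congr; intro s
        unfold T
        rw [← ENNReal.tsum_mul_left]
        exact tsum_congr fun s' => by ring
    _ = ∑' s' : S k, ∑' s : S k,
          (ENNReal.ofReal (π s) * ENNReal.ofReal (jsqP k lam μ s s')) * f s' :=
        ENNReal.tsum_comm
    _ = ∑' s' : S k, ENNReal.ofReal (π s') * f s' := by
        apply tsum_congr; intro s'
        rw [ENNReal.tsum_mul_right, key s']

end JSQAux


namespace JSQAux

section Weights

variable {k : ℕ} (θ : Fin (k + 1) → ℝ)

lemma mem_zeroSet {y : Fin k → ℕ} {i : Fin k} : i ∈ zeroSet k y ↔ y i = 0 := by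
  simp [zeroSet]

lemma mem_zeroSet_compl {y : Fin k → ℕ} {j : Fin k} : j ∈ (zeroSet k y)ᶜ ↔ y j ≠ 0 := by
  simp [zeroSet]

lemma weight_lam1 (s : S k) :
    expWeight k θ (s.1 + 1, fun j => s.2 j - 1)
      = Real.exp (θ 0 - ∑ j ∈ (zeroSet k s.2)ᶜ, θ j.succ) * expWeight k θ s := by
  unfold expWeight
  rw [← Real.exp_add]
  congr 1
  have hsum : ∑ j : Fin k, θ j.succ * ((s.2 j - 1 : ℕ) : ℝ)
      = ∑ j : Fin k, (θ j.succ * (s.2 j : ℝ) - if s.2 j = 0 then 0 else θ j.succ) := by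
    apply Finset.sum_congr rfl
    intro j _
    by_cases h : s.2 j = 0
    · simp [h]
    · rw [if_neg h, Nat.cast_sub (Nat.one_le_iff_ne_zero.mpr h)]
      ring
  have hsum2 : ∑ j : Fin k, (if s.2 j = 0 then 0 else θ j.succ)
      = ∑ j ∈ (zeroSet k s.2)ᶜ, θ j.succ := by
    have hcompl : (zeroSet k s.2)ᶜ = Finset.univ.filter (fun j => ¬ s.2 j = 0) := by
      ext j; simp [zeroSet]
    rw [hcompl, Finset.sum_filter]
    apply Finset.sum_congr rfl
    intro j _
    by_cases h : s.2 j = 0 <;> simp [h]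
  rw [hsum, Finset.sum_sub_distrib, hsum2]
  push_cast
  ring

lemma weight_update_one {s : S k} {i : Fin k} (hi : i ∈ zeroSet k s.2) :
    expWeight k θ (s.1, Function.update s.2 i 1)
      = Real.exp (θ i.succ) * expWeight k θ s := by
  unfold expWeight
  rw [← Real.exp_add]
  congr 1
  have h0 : s.2 i = 0 := mem_zeroSet.mp hi
  have e1 : ∑ j : Fin k, θ j.succ * ((Function.update s.2 i 1 j : ℕ) : ℝ)
      = ∑ j ∈ Finset.univ.erase i, θ j.succ * (s.2 j : ℝ) + θ i.succ := by
    rw [← Finset.sum_erase_add _ _ (Finset.mem_univ i)]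
    congr 1
    · apply Finset.sum_congr rfl
      intro j hj
      rw [Function.update_of_ne (Finset.ne_of_mem_erase hj)]
    · simp
  have e2 : ∑ j : Fin k, θ j.succ * (s.2 j : ℝ)
      = ∑ j ∈ Finset.univ.erase i, θ j.succ * (s.2 j : ℝ) := by
    rw [← Finset.sum_erase_add _ _ (Finset.mem_univ i), h0]
    simp
  rw [e1, e2]
  ring

lemma weight_down {s : S k} {j : Fin k} (hj : j ∈ (zeroSet k s.2)ᶜ) :
    expWeight k θ (s.1, Function.update s.2 j (s.2 j - 1))
      = Real.exp (-θ j.succ) * expWeight k θ s := by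
  unfold expWeight
  rw [← Real.exp_add]
  congr 1
  have h0 : s.2 j ≠ 0 := mem_zeroSet_compl.mp hj
  have e1 : ∑ l : Fin k, θ l.succ * ((Function.update s.2 j (s.2 j - 1) l : ℕ) : ℝ)
      = ∑ l ∈ Finset.univ.erase j, θ l.succ * (s.2 l : ℝ)
        + θ j.succ * ((s.2 j : ℝ) - 1) := by
    rw [← Finset.sum_erase_add _ _ (Finset.mem_univ j)]
    congr 1
    · apply Finset.sum_congr rfl
      intro l hl
      rw [Function.update_of_ne (Finset.ne_of_mem_erase hl)]
    · rw [Function.update_self, Nat.cast_sub (Nat.one_le_iff_ne_zero.mpr h0)]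
      push_cast
      ring
  have e2 : ∑ l : Fin k, θ l.succ * (s.2 l : ℝ)
      = ∑ l ∈ Finset.univ.erase j, θ l.succ * (s.2 l : ℝ) + θ j.succ * (s.2 j : ℝ) := by
    rw [← Finset.sum_erase_add _ _ (Finset.mem_univ j)]
  rw [e1, e2]
  ring

lemma weight_min_down {s : S k} {i : Fin k} (hi : i ∈ zeroSet k s.2) (hm : s.1 ≠ 0) :
    expWeight k θ (s.1 - 1, fun j => if j = i then 0 else s.2 j + 1)
      = Real.exp (-θ 0 + ∑ j ∈ Finset.univ.erase i, θ j.succ) * expWeight k θ s := by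
  unfold expWeight
  rw [← Real.exp_add]
  congr 1
  have h0 : s.2 i = 0 := mem_zeroSet.mp hi
  have hc : ((s.1 - 1 : ℕ) : ℝ) = (s.1 : ℝ) - 1 := by
    rw [Nat.cast_sub (Nat.one_le_iff_ne_zero.mpr hm)]
    push_cast; ring
  have e1 : ∑ j : Fin k, θ j.succ * (((if j = i then 0 else s.2 j + 1 : ℕ)) : ℝ)
      = ∑ j ∈ Finset.univ.erase i, (θ j.succ * (s.2 j : ℝ) + θ j.succ) := by
    rw [← Finset.sum_erase_add _ _ (Finset.mem_univ i)]
    have hzero : θ i.succ * (((if i = i then 0 else s.2 i + 1 : ℕ)) : ℝ) = 0 := by simp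
    rw [hzero, add_zero]
    apply Finset.sum_congr rfl
    intro j hj
    rw [if_neg (Finset.ne_of_mem_erase hj)]
    push_cast
    ring
  have e2 : ∑ j : Fin k, θ j.succ * (s.2 j : ℝ)
      = ∑ j ∈ Finset.univ.erase i, θ j.succ * (s.2 j : ℝ) := by
    rw [← Finset.sum_erase_add _ _ (Finset.mem_univ i), h0]
    simp
  rw [hc, e1, e2, Finset.sum_add_distrib]
  ring

end Weights

end JSQAux

namespace JSQAux

lemma Tweight {k : ℕ} (lam : ℝ) (μ : Fin k → ℝ) (θ : Fin (k + 1) → ℝ)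
    (hlam : 0 ≤ lam) (hμ : ∀ i, 0 ≤ μ i) (s : S k) :
    T k lam μ (fun t => ENNReal.ofReal (expWeight k θ t)) s
      = ENNReal.ofReal ((if s.1 = 0 then gammaZero k lam μ (zeroSet k s.2) θ
          else gammaPlus k lam μ (zeroSet k s.2) θ) * expWeight k θ s) := by
  rw [Tcalc lam μ hlam hμ]
  have hfirst : (if (zeroSet k s.2).card = 1 then
        ENNReal.ofReal lam *
          (fun t => ENNReal.ofReal (expWeight k θ t)) (s.1 + 1, fun j => s.2 j - 1)
      else ∑ i ∈ zeroSet k s.2, ENNReal.ofReal (lam / (zeroSet k s.2).card) *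
          (fun t => ENNReal.ofReal (expWeight k θ t)) (s.1, Function.update s.2 i 1))
      = ENNReal.ofReal (if (zeroSet k s.2).card = 1 then
          lam * (Real.exp (θ 0 - ∑ j ∈ (zeroSet k s.2)ᶜ, θ j.succ) * expWeight k θ s)
        else ∑ i ∈ zeroSet k s.2,
          lam / (zeroSet k s.2).card * (Real.exp (θ i.succ) * expWeight k θ s)) := by
    by_cases h1 : (zeroSet k s.2).card = 1
    · rw [if_pos h1, if_pos h1]
      simp only
      rw [weight_lam1 θ s, ← ENNReal.ofReal_mul hlam]
    · rw [if_neg h1, if_neg h1]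
      rw [ENNReal.ofReal_sum_of_nonneg]
      · apply Finset.sum_congr rfl
        intro i hi
        simp only
        rw [weight_update_one θ hi, ← ENNReal.ofReal_mul (by positivity)]
      · intro i hi
        have := Real.exp_pos (θ i.succ)
        have := (Real.exp_pos _).le.trans (le_of_eq (rfl :
          Real.exp (θ 0 * (s.1 : ℝ) + ∑ i : Fin k, θ i.succ * (s.2 i : ℝ)) = _))
        unfold expWeight
        positivity
  have hsecond : (∑ j ∈ (zeroSet k s.2)ᶜ, ENNReal.ofReal (μ j) *
        (fun t => ENNReal.ofReal (expWeight k θ t)) (s.1, Function.update s.2 j (s.2 j - 1)))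
      = ENNReal.ofReal (∑ j ∈ (zeroSet k s.2)ᶜ,
          μ j * (Real.exp (-θ j.succ) * expWeight k θ s)) := by
    rw [ENNReal.ofReal_sum_of_nonneg]
    · apply Finset.sum_congr rfl
      intro j hj
      simp only
      rw [weight_down θ hj, ← ENNReal.ofReal_mul (hμ j)]
    · intro j _
      have := hμ j
      unfold expWeight
      positivity
  have hthird : (∑ i ∈ zeroSet k s.2, ENNReal.ofReal (μ i) *
        (fun t => ENNReal.ofReal (expWeight k θ t))
          (if s.1 = 0 then s else (s.1 - 1, fun j => if j = i then 0 else s.2 j + 1)))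
      = ENNReal.ofReal (if s.1 = 0 then ∑ i ∈ zeroSet k s.2, μ i * expWeight k θ s
          else ∑ i ∈ zeroSet k s.2,
            μ i * (Real.exp (-θ 0 + ∑ j ∈ Finset.univ.erase i, θ j.succ) * expWeight k θ s)) := by
    by_cases hm : s.1 = 0
    · simp only [if_pos hm]
      rw [ENNReal.ofReal_sum_of_nonneg]
      · exact Finset.sum_congr rfl fun i hi => by
          rw [← ENNReal.ofReal_mul (hμ i)]
      · intro i _
        have := hμ i
        unfold expWeight
        positivity
    · simp only [if_neg hm]
      rw [ENNReal.ofReal_sum_of_nonneg]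
      · apply Finset.sum_congr rfl
        intro i hi
        rw [weight_min_down θ hi hm, ← ENNReal.ofReal_mul (hμ i)]
      · intro i _
        have := hμ i
        unfold expWeight
        positivity
  have hE : (0:ℝ) ≤ expWeight k θ s := by unfold expWeight; positivity
  have hA0 : (0:ℝ) ≤ (if (zeroSet k s.2).card = 1 then
      lam * (Real.exp (θ 0 - ∑ j ∈ (zeroSet k s.2)ᶜ, θ j.succ) * expWeight k θ s)
    else ∑ i ∈ zeroSet k s.2,
      lam / (zeroSet k s.2).card * (Real.exp (θ i.succ) * expWeight k θ s)) := by
    split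
    · exact mul_nonneg hlam (mul_nonneg (Real.exp_nonneg _) hE)
    · exact Finset.sum_nonneg fun i _ =>
        mul_nonneg (by positivity) (mul_nonneg (Real.exp_nonneg _) hE)
  have hB0 : (0:ℝ) ≤ ∑ j ∈ (zeroSet k s.2)ᶜ, μ j * (Real.exp (-θ j.succ) * expWeight k θ s) :=
    Finset.sum_nonneg fun j _ => mul_nonneg (hμ j) (mul_nonneg (Real.exp_nonneg _) hE)
  have hC0 : (0:ℝ) ≤ (if s.1 = 0 then ∑ i ∈ zeroSet k s.2, μ i * expWeight k θ s
      else ∑ i ∈ zeroSet k s.2,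
        μ i * (Real.exp (-θ 0 + ∑ j ∈ Finset.univ.erase i, θ j.succ) * expWeight k θ s)) := by
    split
    · exact Finset.sum_nonneg fun i _ => mul_nonneg (hμ i) hE
    · exact Finset.sum_nonneg fun i _ =>
        mul_nonneg (hμ i) (mul_nonneg (Real.exp_nonneg _) hE)
  rw [hfirst, hsecond, hthird, ← ENNReal.ofReal_add hA0 hB0,
    ← ENNReal.ofReal_add (add_nonneg hA0 hB0) hC0]
  congr 1
  have eqB : ∑ j ∈ (zeroSet k s.2)ᶜ, μ j * (Real.exp (-θ j.succ) * expWeight k θ s)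
      = (∑ j ∈ (zeroSet k s.2)ᶜ, μ j * Real.exp (-θ j.succ)) * expWeight k θ s := by
    rw [Finset.sum_mul]
    exact Finset.sum_congr rfl fun j _ => by ring
  have eqA : (if (zeroSet k s.2).card = 1 then
      lam * (Real.exp (θ 0 - ∑ j ∈ (zeroSet k s.2)ᶜ, θ j.succ) * expWeight k θ s)
    else ∑ i ∈ zeroSet k s.2,
      lam / (zeroSet k s.2).card * (Real.exp (θ i.succ) * expWeight k θ s))
      = (if (zeroSet k s.2).card = 1 then
          lam * Real.exp (θ 0 - ∑ j ∈ (zeroSet k s.2)ᶜ, θ j.succ)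
        else ∑ i ∈ zeroSet k s.2,
          lam / (zeroSet k s.2).card * Real.exp (θ i.succ)) * expWeight k θ s := by
    by_cases h1 : (zeroSet k s.2).card = 1
    · simp only [if_pos h1]; ring
    · simp only [if_neg h1]
      rw [Finset.sum_mul]
      exact Finset.sum_congr rfl fun i _ => by ring
  by_cases hm : s.1 = 0
  · simp only [if_pos hm]
    unfold gammaZero
    rw [eqA, eqB, add_mul, add_mul]
    congr 1
    rw [Finset.sum_mul]
  · simp only [if_neg hm]
    unfold gammaPlus
    have eqC : ∑ i ∈ zeroSet k s.2,
        μ i * (Real.exp (-θ 0 + ∑ j ∈ Finset.univ.erase i, θ j.succ) * expWeight k θ s)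
        = (∑ i ∈ zeroSet k s.2,
            μ i * Real.exp (-θ 0 + ∑ j ∈ Finset.univ.erase i, θ j.succ)) * expWeight k θ s := by
      rw [Finset.sum_mul]
      exact Finset.sum_congr rfl fun i _ => by ring
    rw [eqA, eqB, eqC, add_mul, add_mul]

end JSQAux

namespace JSQAux

lemma gammaPlus_nonneg {k : ℕ} (lam : ℝ) (μ : Fin k → ℝ) (U : Finset (Fin k))
    (θ : Fin (k + 1) → ℝ) (hlam : 0 ≤ lam) (hμ : ∀ i, 0 ≤ μ i) :
    0 ≤ gammaPlus k lam μ U θ := by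
  unfold gammaPlus
  have h1 : (0:ℝ) ≤ (if U.card = 1 then lam * Real.exp (θ 0 - ∑ j ∈ Uᶜ, θ j.succ)
      else ∑ i ∈ U, lam / U.card * Real.exp (θ i.succ)) := by
    split
    · positivity
    · exact Finset.sum_nonneg fun i _ => by positivity
  have h2 : (0:ℝ) ≤ ∑ j ∈ Uᶜ, μ j * Real.exp (-θ j.succ) :=
    Finset.sum_nonneg fun j _ => mul_nonneg (hμ j) (Real.exp_nonneg _)
  have h3 : (0:ℝ) ≤ ∑ i ∈ U, μ i * Real.exp (-θ 0 + ∑ j ∈ Finset.univ.erase i, θ j.succ) :=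
    Finset.sum_nonneg fun i _ => mul_nonneg (hμ i) (Real.exp_nonneg _)
  linarith

lemma gammaZero_nonneg {k : ℕ} (lam : ℝ) (μ : Fin k → ℝ) (U : Finset (Fin k))
    (θ : Fin (k + 1) → ℝ) (hlam : 0 ≤ lam) (hμ : ∀ i, 0 ≤ μ i) :
    0 ≤ gammaZero k lam μ U θ := by
  unfold gammaZero
  have h1 : (0:ℝ) ≤ (if U.card = 1 then lam * Real.exp (θ 0 - ∑ j ∈ Uᶜ, θ j.succ)
      else ∑ i ∈ U, lam / U.card * Real.exp (θ i.succ)) := by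
    split
    · positivity
    · exact Finset.sum_nonneg fun i _ => by positivity
  have h2 : (0:ℝ) ≤ ∑ j ∈ Uᶜ, μ j * Real.exp (-θ j.succ) :=
    Finset.sum_nonneg fun j _ => mul_nonneg (hμ j) (Real.exp_nonneg _)
  have h3 : (0:ℝ) ≤ ∑ i ∈ U, μ i := Finset.sum_nonneg fun i _ => hμ i
  linarith

lemma min_add_le (a b N : ℝ≥0∞) : min (a + b) N ≤ min a N + b := by
  rcases le_total a N with h | h
  · calc min (a + b) N ≤ a + b := min_le_left _ _
      _ = min a N + b := by rw [min_eq_left h]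
  · calc min (a + b) N ≤ N := min_le_right _ _
      _ ≤ min a N + b := le_add_right (le_of_eq (min_eq_right h).symm)

end JSQAux

end JSQAuxSec


/-- **Stationary inequality (a):** if `φ_{0U}(θ) < ∞` and `1 − γ_{+U}(θ) > 0` for every
nonempty `U ⊆ J`, then all `φ_{+U}(θ)` are finite and
`Σ_U (1 − γ_{+U}(θ)) φ_{+U}(θ) ≤ Σ_U (γ_{0U}(θ) − 1) φ_{0U}(θ) < ∞`. -/
theorem jsq_stationary_inequality_a
    (k : ℕ) (hk : 2 ≤ k) (lam : ℝ) (μ : Fin k → ℝ)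
    (hlam : 0 < lam) (hμ : ∀ i, 0 < μ i)
    (hnorm : lam + ∑ i, μ i = 1)
    (hρ : rho k lam μ < 1)
    (π : ℕ × (Fin k → ℕ) → ℝ)
    (hπnn : ∀ s, 0 ≤ π s)
    (hπsupp : ∀ s, π s ≠ 0 → ∃ i : Fin k, s.2 i = 0)
    (hπsum : HasSum π 1)
    (hπstat : ∀ s', (∑' s, π s * jsqP k lam μ s s') = π s')
    (θ : Fin (k + 1) → ℝ)
    (hfin : ∀ U : Finset (Fin k), U.Nonempty → phiZero k π U θ < ⊤)
    (hγ : ∀ U : Finset (Fin k), U.Nonempty → 0 < 1 - gammaPlus k lam μ U θ) :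
    (∀ U : Finset (Fin k), U.Nonempty → phiPlus k π U θ < ⊤) ∧
    (∑ U ∈ Finset.univ.filter (fun U : Finset (Fin k) => U.Nonempty),
        (1 - gammaPlus k lam μ U θ) * (phiPlus k π U θ).toReal)
      ≤ ∑ U ∈ Finset.univ.filter (fun U : Finset (Fin k) => U.Nonempty),
          (gammaZero k lam μ U θ - 1) * (phiZero k π U θ).toReal := by
  classical
  have hlam0 : 0 ≤ lam := hlam.le
  have hμ0 : ∀ i, 0 ≤ μ i := fun i => (hμ i).le
  set 𝒰 : Finset (Finset (Fin k)) :=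
    Finset.univ.filter (fun U : Finset (Fin k) => U.Nonempty) with h𝒰def
  have mem𝒰 : ∀ U : Finset (Fin k), U ∈ 𝒰 ↔ U.Nonempty := by
    intro U; simp [h𝒰def]
  have i0 : Fin k := ⟨0, by omega⟩
  have h𝒰ne : 𝒰.Nonempty := ⟨{i0}, (mem𝒰 _).mpr (Finset.singleton_nonempty i0)⟩
  set lamb : ℝ := 𝒰.sup' h𝒰ne (fun U => gammaPlus k lam μ U θ) with hlambdef
  set Gam : ℝ := 𝒰.sup' h𝒰ne (fun U => gammaZero k lam μ U θ) with hGamdef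
  have hlamb1 : lamb < 1 := by
    rw [hlambdef, Finset.sup'_lt_iff h𝒰ne]
    intro U hU
    have := hγ U ((mem𝒰 U).mp hU)
    linarith
  have hγPle : ∀ U ∈ 𝒰, gammaPlus k lam μ U θ ≤ lamb := by
    intro U hU
    rw [hlambdef]
    exact Finset.le_sup' (fun U => gammaPlus k lam μ U θ) hU
  have hγZle : ∀ U ∈ 𝒰, gammaZero k lam μ U θ ≤ Gam := by
    intro U hU
    rw [hGamdef]
    exact Finset.le_sup' (fun U => gammaZero k lam μ U θ) hU
  have hlamb0 : 0 ≤ lamb :=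
    le_trans (JSQAux.gammaPlus_nonneg lam μ {i0} θ hlam0 hμ0)
      (hγPle _ ((mem𝒰 _).mpr (Finset.singleton_nonempty i0)))
  have hGam0 : 0 ≤ Gam :=
    le_trans (JSQAux.gammaZero_nonneg lam μ {i0} θ hlam0 hμ0)
      (hγZle _ ((mem𝒰 _).mpr (Finset.singleton_nonempty i0)))
  set w : JSQAux.S k → ℝ≥0∞ := fun t => ENNReal.ofReal (expWeight k θ t) with hwdef
  set w' : JSQAux.S k → ℝ≥0∞ :=
    fun t => if (zeroSet k t.2).Nonempty then w t else 0 with hw'def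
  set πh : JSQAux.S k → ℝ≥0∞ := fun t => ENNReal.ofReal (π t) with hπhdef
  set q : JSQAux.S k → ℝ≥0∞ := fun t => ENNReal.ofReal (π t * expWeight k θ t) with hqdef
  have hq : ∀ s, q s = πh s * w s := fun s => ENNReal.ofReal_mul (hπnn s)
  have hw'w : ∀ s, w' s ≤ w s := by
    intro s; rw [hw'def]; dsimp only; split; exacts [le_rfl, zero_le]
  have hwfin : ∀ s, w s < ⊤ := fun s => ENNReal.ofReal_lt_top
  have hw'fin : ∀ s, w' s < ⊤ := fun s => lt_of_le_of_lt (hw'w s) (hwfin s)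
  set g : JSQAux.S k → ℝ≥0∞ := fun s => if (zeroSet k s.2).Nonempty then
      (if s.1 = 0 then ENNReal.ofReal Gam * w s else 0)
    else JSQAux.T k lam μ w' s with hgdef
  have hsupp : ∀ s : JSQAux.S k, ¬(zeroSet k s.2).Nonempty → πh s = 0 := by
    intro s hs
    have hzero : π s = 0 := by
      by_contra h
      obtain ⟨i, hi⟩ := hπsupp s h
      exact hs ⟨i, JSQAux.mem_zeroSet.mpr hi⟩
    rw [hπhdef]; simp [hzero]
  have stat : ∀ f : JSQAux.S k → ℝ≥0∞,
      ∑' s : JSQAux.S k, πh s * JSQAux.T k lam μ f s = ∑' s : JSQAux.S k, πh s * f s :=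
    fun f => JSQAux.stationary_lift lam μ hlam0 hμ0 hnorm π hπnn hπsum.summable hπstat f
  -- pointwise drift inequality
  have drift : ∀ s : JSQAux.S k,
      JSQAux.T k lam μ w' s ≤ ENNReal.ofReal lamb * w' s + g s := by
    intro s
    by_cases hZ : (zeroSet k s.2).Nonempty
    · have h1 : JSQAux.T k lam μ w' s ≤ JSQAux.T k lam μ w s := JSQAux.T_mono lam μ hw'w s
      rw [hwdef] at h1
      rw [JSQAux.Tweight lam μ θ hlam0 hμ0 s] at h1
      have hws : w' s = w s := by rw [hw'def]; dsimp only; rw [if_pos hZ]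
      rw [hgdef]; dsimp only; rw [if_pos hZ]
      by_cases hm : s.1 = 0
      · rw [if_pos hm] at h1 ⊢
        refine le_trans h1 ?_
        have h2 : ENNReal.ofReal (gammaZero k lam μ (zeroSet k s.2) θ * expWeight k θ s)
            ≤ ENNReal.ofReal Gam * w s := by
          rw [ENNReal.ofReal_mul (JSQAux.gammaZero_nonneg lam μ _ θ hlam0 hμ0), hwdef]
          exact mul_le_mul_left
            (ENNReal.ofReal_le_ofReal (hγZle _ ((mem𝒰 _).mpr hZ))) _
        exact le_trans h2 (le_add_left le_rfl)
      · rw [if_neg hm] at h1 ⊢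
        rw [add_zero, hws]
        refine le_trans h1 ?_
        rw [ENNReal.ofReal_mul (JSQAux.gammaPlus_nonneg lam μ _ θ hlam0 hμ0), hwdef]
        exact mul_le_mul_left
          (ENNReal.ofReal_le_ofReal (hγPle _ ((mem𝒰 _).mpr hZ))) _
    · rw [hgdef]; dsimp only; rw [if_neg hZ]
      exact le_add_left le_rfl
  -- the zero-level mass
  set Φ0 : ℝ≥0∞ := ∑' s : JSQAux.S k, (if s.1 = 0 then πh s * w' s else 0) with hΦ0def
  have hΦ0dec : Φ0 = ∑ U ∈ 𝒰, phiZero k π U θ := by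
    have hpt : ∀ s : JSQAux.S k, (if s.1 = 0 then πh s * w' s else 0)
        = ∑ U ∈ 𝒰, (if s.1 = 0 ∧ zeroSet k s.2 = U then q s else 0) := by
      intro s
      by_cases hm : s.1 = 0
      · rw [if_pos hm]
        by_cases hZ : (zeroSet k s.2).Nonempty
        · have hc : ∀ U ∈ 𝒰, (if s.1 = 0 ∧ zeroSet k s.2 = U then q s else 0)
              = (if zeroSet k s.2 = U then q s else 0) := fun U _ => by simp [hm]
          rw [Finset.sum_congr rfl hc, Finset.sum_ite_eq, if_pos ((mem𝒰 _).mpr hZ)]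
          rw [hw'def]; dsimp only; rw [if_pos hZ, hq]
        · rw [hw'def]; dsimp only; rw [if_neg hZ, mul_zero]
          symm
          refine Finset.sum_eq_zero fun U hU => ?_
          rw [if_neg]
          rintro ⟨-, hZU⟩
          exact hZ (hZU ▸ (mem𝒰 U).mp hU)
      · rw [if_neg hm]
        symm
        refine Finset.sum_eq_zero fun U hU => ?_
        rw [if_neg]
        rintro ⟨h0, -⟩
        exact hm h0
    rw [hΦ0def]
    calc ∑' s : JSQAux.S k, (if s.1 = 0 then πh s * w' s else 0)
        = ∑' s : JSQAux.S k, ∑ U ∈ 𝒰, (if s.1 = 0 ∧ zeroSet k s.2 = U then q s else 0) :=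
          tsum_congr hpt
      _ = ∑ U ∈ 𝒰, ∑' s : JSQAux.S k, (if s.1 = 0 ∧ zeroSet k s.2 = U then q s else 0) :=
          Summable.tsum_finsetSum (fun U _ => ENNReal.summable)
      _ = ∑ U ∈ 𝒰, phiZero k π U θ := by
          refine Finset.sum_congr rfl fun U _ => ?_
          unfold phiZero
          exact tsum_congr fun s => by rw [hqdef]
  have hΦ0fin : Φ0 < ⊤ := by
    rw [hΦ0dec]
    refine ENNReal.sum_lt_top.mpr (fun U hU => hfin U ((mem𝒰 U).mp hU))
  set G : ℝ≥0∞ := ∑' s : JSQAux.S k, πh s * g s with hGdef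
  have hGbound : G ≤ ENNReal.ofReal Gam * Φ0 := by
    rw [hGdef]
    have hpt : ∀ s : JSQAux.S k,
        πh s * g s ≤ ENNReal.ofReal Gam * (if s.1 = 0 then πh s * w' s else 0) := by
      intro s
      rw [hgdef]; dsimp only
      by_cases hZ : (zeroSet k s.2).Nonempty
      · rw [if_pos hZ]
        by_cases hm : s.1 = 0
        · rw [if_pos hm, if_pos hm]
          have hws : w' s = w s := by rw [hw'def]; dsimp only; rw [if_pos hZ]
          rw [hws]
          exact le_of_eq (mul_left_comm _ _ _)
        · rw [if_neg hm, if_neg hm, mul_zero, mul_zero]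
      · rw [hsupp s hZ, zero_mul]
        exact zero_le
    calc ∑' s : JSQAux.S k, πh s * g s
        ≤ ∑' s : JSQAux.S k, ENNReal.ofReal Gam * (if s.1 = 0 then πh s * w' s else 0) :=
          ENNReal.tsum_le_tsum hpt
      _ = ENNReal.ofReal Gam * Φ0 := by rw [ENNReal.tsum_mul_left, hΦ0def]
  have hGfin : G < ⊤ :=
    lt_of_le_of_lt hGbound (ENNReal.mul_lt_top ENNReal.ofReal_lt_top hΦ0fin)
  set lh : ℝ≥0∞ := ENNReal.ofReal lamb with hlhdef
  have hlh1 : lh < 1 := ENNReal.ofReal_lt_one.mpr hlamb1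
  set K : ℝ≥0∞ := (1 - lh)⁻¹ * G with hKdef
  have hKfin : K < ⊤ :=
    ENNReal.mul_lt_top (ENNReal.inv_lt_top.mpr (tsub_pos_of_lt hlh1)) hGfin
  -- truncated iteration
  set A : ℕ → ℕ → ℝ≥0∞ := fun n N => ∑' s : JSQAux.S k, πh s * min (lh ^ n * w' s) N
    with hAdef
  have step : ∀ n N, A n N ≤ A (n + 1) N + lh ^ n * G := by
    intro n N
    have hpt : ∀ s : JSQAux.S k,
        JSQAux.T k lam μ (fun t => min (lh ^ n * w' t) N) s
          ≤ min (lh ^ (n + 1) * w' s) N + lh ^ n * g s := by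
      intro s
      have t1 : JSQAux.T k lam μ (fun t => min (lh ^ n * w' t) N) s
          ≤ min (JSQAux.T k lam μ (fun t => lh ^ n * w' t) s) N :=
        le_min (JSQAux.T_mono lam μ (fun t => min_le_left _ _) s)
          (JSQAux.T_le_const lam μ hlam0 hμ0 hnorm N (fun t => min_le_right _ _) s)
      have t2 : JSQAux.T k lam μ (fun t => lh ^ n * w' t) s = lh ^ n * JSQAux.T k lam μ w' s :=
        JSQAux.T_const_mul lam μ _ _ s
      have t3 : lh ^ n * JSQAux.T k lam μ w' s ≤ lh ^ (n + 1) * w' s + lh ^ n * g s := by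
        calc lh ^ n * JSQAux.T k lam μ w' s
            ≤ lh ^ n * (lh * w' s + g s) := mul_le_mul_right (drift s) _
          _ = lh ^ (n + 1) * w' s + lh ^ n * g s := by
              rw [mul_add, pow_succ]
              ring
      calc JSQAux.T k lam μ (fun t => min (lh ^ n * w' t) N) s
          ≤ min (lh ^ (n + 1) * w' s + lh ^ n * g s) N :=
            le_trans t1 (min_le_min (le_trans (le_of_eq t2) t3) le_rfl)
        _ ≤ min (lh ^ (n + 1) * w' s) N + lh ^ n * g s := JSQAux.min_add_le _ _ _
    calc A n N = ∑' s : JSQAux.S k, πh s * min (lh ^ n * w' s) N := by rw [hAdef]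
      _ = ∑' s : JSQAux.S k, πh s * JSQAux.T k lam μ (fun t => min (lh ^ n * w' t) N) s :=
          (stat _).symm
      _ ≤ ∑' s : JSQAux.S k, πh s * (min (lh ^ (n + 1) * w' s) N + lh ^ n * g s) :=
          ENNReal.tsum_le_tsum fun s => mul_le_mul_right (hpt s) _
      _ = (∑' s : JSQAux.S k, πh s * min (lh ^ (n + 1) * w' s) N)
            + ∑' s : JSQAux.S k, πh s * (lh ^ n * g s) := by
          simp_rw [mul_add]
          exact ENNReal.tsum_add
      _ = A (n + 1) N + lh ^ n * G := by
          have hg2 : ∑' s : JSQAux.S k, πh s * (lh ^ n * g s) = lh ^ n * G := by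
            rw [hGdef, ← ENNReal.tsum_mul_left]
            exact tsum_congr fun s => by ring
          rw [hg2, hAdef]
  have iter : ∀ n N, A 0 N ≤ A n N + (∑ i ∈ Finset.range n, lh ^ i) * G := by
    intro n N
    induction n with
    | zero => simp
    | succ n ih =>
      refine le_trans ih ?_
      calc A n N + (∑ i ∈ Finset.range n, lh ^ i) * G
          ≤ (A (n + 1) N + lh ^ n * G) + (∑ i ∈ Finset.range n, lh ^ i) * G :=
            add_le_add_left (step n N) _
        _ = A (n + 1) N + (∑ i ∈ Finset.range (n + 1), lh ^ i) * G := by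
            rw [Finset.sum_range_succ, add_mul]
            ring
  have bound0 : ∀ n N, A 0 N ≤ A n N + K := by
    intro n N
    refine le_trans (iter n N) (add_le_add_right ?_ _)
    rw [hKdef]
    refine mul_le_mul_left ?_ G
    rw [← ENNReal.tsum_geometric lh]
    exact ENNReal.sum_le_tsum (Finset.range n)
  have hπhtot : ∑' s : JSQAux.S k, πh s = 1 := by
    rw [hπhdef]
    simp only
    rw [← ENNReal.ofReal_tsum_of_nonneg hπnn hπsum.summable, hπsum.tsum_eq,
      ENNReal.ofReal_one]
  have vanish : ∀ (N : ℕ) (ε : ℝ≥0∞), 0 < ε → ∃ n, A n N ≤ ε := by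
    intro N ε hε
    set δ : ℝ≥0∞ := ε / 2 / (N + 1) with hδdef
    have hδpos : 0 < δ := ENNReal.div_pos (ENNReal.half_pos hε.ne').ne' (by simp)
    have htail : Tendsto (fun F : Finset (JSQAux.S k) =>
        ∑' b : {x : JSQAux.S k // x ∉ F}, πh b) atTop (𝓝 0) :=
      ENNReal.tendsto_tsum_compl_atTop_zero (by rw [hπhtot]; exact ENNReal.one_ne_top)
    obtain ⟨F, hF⟩ := (htail.eventually_lt_const hδpos).exists
    have hCfin : ∑ s ∈ F, πh s * w' s ≠ ⊤ :=
      (ENNReal.sum_lt_top.mpr fun s _ =>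
        ENNReal.mul_lt_top ENNReal.ofReal_lt_top (hw'fin s)).ne
    have hhalf : (0:ℝ≥0∞) < ε / 2 := ENNReal.half_pos hε.ne'
    have hpow : Tendsto (fun n => lh ^ n * ∑ s ∈ F, πh s * w' s) atTop (𝓝 0) := by
      have h0 := ENNReal.Tendsto.mul_const
        (ENNReal.tendsto_pow_atTop_nhds_zero_of_lt_one hlh1) (Or.inr hCfin)
      rwa [zero_mul] at h0
    obtain ⟨n, hn⟩ := (hpow.eventually_le_const hhalf).exists
    refine ⟨n, ?_⟩
    have hpt : ∀ s : JSQAux.S k, πh s * min (lh ^ n * w' s) N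
        ≤ (if s ∈ F then lh ^ n * (πh s * w' s) else 0)
          + (if s ∈ F then 0 else πh s * N) := by
      intro s
      by_cases hs : s ∈ F
      · rw [if_pos hs, if_pos hs, add_zero]
        calc πh s * min (lh ^ n * w' s) N ≤ πh s * (lh ^ n * w' s) :=
            mul_le_mul_right (min_le_left _ _) _
          _ = lh ^ n * (πh s * w' s) := by ring
      · rw [if_neg hs, if_neg hs, zero_add]
        exact mul_le_mul_right (min_le_right _ _) _
    have hpart1 : ∑' s : JSQAux.S k, (if s ∈ F then lh ^ n * (πh s * w' s) else 0) ≤ ε / 2 := by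
      rw [tsum_eq_sum (fun b hb => if_neg hb)]
      calc ∑ s ∈ F, (if s ∈ F then lh ^ n * (πh s * w' s) else 0)
          = ∑ s ∈ F, lh ^ n * (πh s * w' s) :=
            Finset.sum_congr rfl fun s hs => if_pos hs
        _ = lh ^ n * ∑ s ∈ F, πh s * w' s := by rw [Finset.mul_sum]
        _ ≤ ε / 2 := hn
    have hpart2 : ∑' s : JSQAux.S k, (if s ∈ F then 0 else πh s * N) ≤ ε / 2 := by
      have hsubty : ∑' b : {x : JSQAux.S k // x ∉ F}, πh ↑b
          = ∑' s : JSQAux.S k, Set.indicator {x : JSQAux.S k | x ∉ F} πh s :=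
        tsum_subtype _ _
      have he : ∀ s : JSQAux.S k, (if s ∈ F then 0 else πh s * N)
          = (Set.indicator {x : JSQAux.S k | x ∉ F} πh s) * N := by
        intro s
        rw [Set.indicator_apply]
        by_cases hs : s ∈ F
        · simp [hs]
        · simp [hs]
      calc ∑' s : JSQAux.S k, (if s ∈ F then 0 else πh s * N)
          = (∑' s : JSQAux.S k, Set.indicator {x : JSQAux.S k | x ∉ F} πh s) * N := by
            rw [← ENNReal.tsum_mul_right]
            exact tsum_congr he
        _ = (∑' b : {x : JSQAux.S k // x ∉ F}, πh ↑b) * N := by rw [hsubty]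
        _ ≤ δ * N := mul_le_mul_left hF.le _
        _ ≤ δ * (N + 1) := mul_le_mul_right (by simp) _
        _ = ε / 2 := by
            rw [hδdef]
            exact ENNReal.div_mul_cancel (by simp) (by simp)
    calc A n N = ∑' s : JSQAux.S k, πh s * min (lh ^ n * w' s) N := by rw [hAdef]
      _ ≤ ∑' s : JSQAux.S k, ((if s ∈ F then lh ^ n * (πh s * w' s) else 0)
          + (if s ∈ F then 0 else πh s * N)) := ENNReal.tsum_le_tsum hpt
      _ = (∑' s : JSQAux.S k, (if s ∈ F then lh ^ n * (πh s * w' s) else 0))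
          + ∑' s : JSQAux.S k, (if s ∈ F then 0 else πh s * N) := ENNReal.tsum_add
      _ ≤ ε / 2 + ε / 2 := add_le_add hpart1 hpart2
      _ = ε := ENNReal.add_halves ε
  have truncbound : ∀ N : ℕ, A 0 N ≤ K := by
    intro N
    refine ENNReal.le_of_forall_pos_le_add (fun ε hε hK => ?_)
    obtain ⟨n, hn⟩ := vanish N ε (by exact_mod_cast hε)
    calc A 0 N ≤ A n N + K := bound0 n N
      _ ≤ ε + K := add_le_add_left hn K
      _ = K + ε := add_comm _ _
  set Φ : ℝ≥0∞ := ∑' s : JSQAux.S k, πh s * w' s with hΦdef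
  have hΦK : Φ ≤ K := by
    rw [hΦdef, ENNReal.tsum_eq_iSup_sum]
    refine iSup_le fun F => ?_
    have hMfin : F.sup (fun s => w' s) ≠ ⊤ := by
      refine ((Finset.sup_lt_iff (bot_lt_iff_ne_bot.mpr ?_)).mpr
        (fun s _ => hw'fin s)).ne
      simp
    obtain ⟨N, hN⟩ := ENNReal.exists_nat_gt hMfin
    have hbN : ∀ s ∈ F, πh s * w' s ≤ πh s * min (lh ^ 0 * w' s) N := by
      intro s hs
      rw [pow_zero, one_mul]
      exact mul_le_mul_right
        (le_min le_rfl (le_trans (Finset.le_sup (f := fun s => w' s) hs) hN.le)) _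
    calc ∑ s ∈ F, πh s * w' s ≤ ∑ s ∈ F, πh s * min (lh ^ 0 * w' s) N :=
        Finset.sum_le_sum hbN
      _ ≤ A 0 N := by
        rw [hAdef]
        exact ENNReal.sum_le_tsum F
      _ ≤ K := truncbound N
  have hΦfin : Φ < ⊤ := lt_of_le_of_lt hΦK hKfin
  have hplusle : ∀ U : Finset (Fin k), U.Nonempty → phiPlus k π U θ ≤ Φ := by
    intro U hU
    rw [hΦdef]
    unfold phiPlus
    refine ENNReal.tsum_le_tsum fun s => ?_
    by_cases hc : 1 ≤ s.1 ∧ zeroSet k s.2 = U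
    · rw [if_pos hc]
      have hZ : (zeroSet k s.2).Nonempty := hc.2 ▸ hU
      have hws : w' s = w s := by rw [hw'def]; dsimp only; rw [if_pos hZ]
      rw [hws, ← hq, hqdef]
    · rw [if_neg hc]
      exact zero_le
  have hfinplus : ∀ U : Finset (Fin k), U.Nonempty → phiPlus k π U θ < ⊤ :=
    fun U hU => lt_of_le_of_lt (hplusle U hU) hΦfin
  refine ⟨hfinplus, ?_⟩
  -- main inequality
  have hΦdec : Φ = ∑ U ∈ 𝒰, (phiPlus k π U θ + phiZero k π U θ) := by
    have hpt : ∀ s : JSQAux.S k, πh s * w' s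
        = ∑ U ∈ 𝒰, ((if 1 ≤ s.1 ∧ zeroSet k s.2 = U then q s else 0)
          + (if s.1 = 0 ∧ zeroSet k s.2 = U then q s else 0)) := by
      intro s
      by_cases hZ : (zeroSet k s.2).Nonempty
      · have hone : ∀ U ∈ 𝒰, ((if 1 ≤ s.1 ∧ zeroSet k s.2 = U then q s else 0)
            + (if s.1 = 0 ∧ zeroSet k s.2 = U then q s else 0))
            = (if zeroSet k s.2 = U then q s else 0) := by
          intro U _
          by_cases hm : s.1 = 0
          · have h1 : ¬(1 ≤ s.1) := by omega
            simp [hm, h1]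
          · have h1 : 1 ≤ s.1 := by omega
            simp [hm, h1]
        rw [Finset.sum_congr rfl hone, Finset.sum_ite_eq, if_pos ((mem𝒰 _).mpr hZ)]
        rw [hw'def]; dsimp only; rw [if_pos hZ, hq]
      · rw [hw'def]; dsimp only; rw [if_neg hZ, mul_zero]
        symm
        refine Finset.sum_eq_zero fun U hU => ?_
        have hne : zeroSet k s.2 ≠ U := fun h => hZ (h ▸ (mem𝒰 U).mp hU)
        simp [hne]
    rw [hΦdef]
    calc ∑' s : JSQAux.S k, πh s * w' s
        = ∑' s : JSQAux.S k, ∑ U ∈ 𝒰, ((if 1 ≤ s.1 ∧ zeroSet k s.2 = U then q s else 0)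
          + (if s.1 = 0 ∧ zeroSet k s.2 = U then q s else 0)) := tsum_congr hpt
      _ = ∑ U ∈ 𝒰, ∑' s : JSQAux.S k, ((if 1 ≤ s.1 ∧ zeroSet k s.2 = U then q s else 0)
          + (if s.1 = 0 ∧ zeroSet k s.2 = U then q s else 0)) :=
          Summable.tsum_finsetSum (fun U _ => ENNReal.summable)
      _ = ∑ U ∈ 𝒰, (phiPlus k π U θ + phiZero k π U θ) := by
          refine Finset.sum_congr rfl fun U _ => ?_
          rw [ENNReal.tsum_add]
          congr 1
  have hTbound : ∑' s : JSQAux.S k, πh s * JSQAux.T k lam μ w' s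
      ≤ ∑ U ∈ 𝒰, (ENNReal.ofReal (gammaPlus k lam μ U θ) * phiPlus k π U θ
          + ENNReal.ofReal (gammaZero k lam μ U θ) * phiZero k π U θ) := by
    have hpt : ∀ s : JSQAux.S k, πh s * JSQAux.T k lam μ w' s
        ≤ ∑ U ∈ 𝒰, ((if 1 ≤ s.1 ∧ zeroSet k s.2 = U
              then ENNReal.ofReal (gammaPlus k lam μ U θ) * q s else 0)
          + (if s.1 = 0 ∧ zeroSet k s.2 = U
              then ENNReal.ofReal (gammaZero k lam μ U θ) * q s else 0)) := by
      intro s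
      by_cases hZ : (zeroSet k s.2).Nonempty
      · have h1 : JSQAux.T k lam μ w' s ≤ JSQAux.T k lam μ w s := JSQAux.T_mono lam μ hw'w s
        rw [hwdef] at h1
        rw [JSQAux.Tweight lam μ θ hlam0 hμ0 s] at h1
        have hmem : zeroSet k s.2 ∈ 𝒰 := (mem𝒰 _).mpr hZ
        by_cases hm : s.1 = 0
        · rw [if_pos hm] at h1
          have hle : πh s * JSQAux.T k lam μ w' s
              ≤ ENNReal.ofReal (gammaZero k lam μ (zeroSet k s.2) θ) * q s := by
            calc πh s * JSQAux.T k lam μ w' s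
                ≤ πh s * ENNReal.ofReal (gammaZero k lam μ (zeroSet k s.2) θ
                    * expWeight k θ s) := mul_le_mul_right h1 _
              _ = ENNReal.ofReal (gammaZero k lam μ (zeroSet k s.2) θ) * q s := by
                  rw [ENNReal.ofReal_mul (JSQAux.gammaZero_nonneg lam μ _ θ hlam0 hμ0),
                    hq, hwdef]
                  ring
          refine le_trans hle ?_
          refine Finset.single_le_sum (f := fun U =>
            ((if 1 ≤ s.1 ∧ zeroSet k s.2 = U
                then ENNReal.ofReal (gammaPlus k lam μ U θ) * q s else 0)
              + (if s.1 = 0 ∧ zeroSet k s.2 = U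
                then ENNReal.ofReal (gammaZero k lam μ U θ) * q s else 0)))
            (fun U _ => zero_le) hmem |>.trans_eq' ?_
          have hc1 : ¬(1 ≤ s.1 ∧ zeroSet k s.2 = zeroSet k s.2) := by
            rintro ⟨h, -⟩; omega
          rw [if_neg hc1, if_pos ⟨hm, rfl⟩, zero_add]
        · rw [if_neg hm] at h1
          have hle : πh s * JSQAux.T k lam μ w' s
              ≤ ENNReal.ofReal (gammaPlus k lam μ (zeroSet k s.2) θ) * q s := by
            calc πh s * JSQAux.T k lam μ w' s
                ≤ πh s * ENNReal.ofReal (gammaPlus k lam μ (zeroSet k s.2) θ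
                    * expWeight k θ s) := mul_le_mul_right h1 _
              _ = ENNReal.ofReal (gammaPlus k lam μ (zeroSet k s.2) θ) * q s := by
                  rw [ENNReal.ofReal_mul (JSQAux.gammaPlus_nonneg lam μ _ θ hlam0 hμ0),
                    hq, hwdef]
                  ring
          refine le_trans hle ?_
          refine Finset.single_le_sum (f := fun U =>
            ((if 1 ≤ s.1 ∧ zeroSet k s.2 = U
                then ENNReal.ofReal (gammaPlus k lam μ U θ) * q s else 0)
              + (if s.1 = 0 ∧ zeroSet k s.2 = U
                then ENNReal.ofReal (gammaZero k lam μ U θ) * q s else 0)))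
            (fun U _ => zero_le) hmem |>.trans_eq' ?_
          have hc1 : (1 ≤ s.1 ∧ zeroSet k s.2 = zeroSet k s.2) := ⟨by omega, rfl⟩
          have hc2 : ¬(s.1 = 0 ∧ zeroSet k s.2 = zeroSet k s.2) := by
            rintro ⟨h, -⟩; omega
          rw [if_pos hc1, if_neg hc2, add_zero]
      · rw [hsupp s hZ, zero_mul]
        exact zero_le
    calc ∑' s : JSQAux.S k, πh s * JSQAux.T k lam μ w' s
        ≤ ∑' s : JSQAux.S k, ∑ U ∈ 𝒰, ((if 1 ≤ s.1 ∧ zeroSet k s.2 = U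
              then ENNReal.ofReal (gammaPlus k lam μ U θ) * q s else 0)
          + (if s.1 = 0 ∧ zeroSet k s.2 = U
              then ENNReal.ofReal (gammaZero k lam μ U θ) * q s else 0)) :=
          ENNReal.tsum_le_tsum hpt
      _ = ∑ U ∈ 𝒰, ∑' s : JSQAux.S k, ((if 1 ≤ s.1 ∧ zeroSet k s.2 = U
              then ENNReal.ofReal (gammaPlus k lam μ U θ) * q s else 0)
          + (if s.1 = 0 ∧ zeroSet k s.2 = U
              then ENNReal.ofReal (gammaZero k lam μ U θ) * q s else 0)) :=
          Summable.tsum_finsetSum (fun U _ => ENNReal.summable)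
      _ = ∑ U ∈ 𝒰, (ENNReal.ofReal (gammaPlus k lam μ U θ) * phiPlus k π U θ
          + ENNReal.ofReal (gammaZero k lam μ U θ) * phiZero k π U θ) := by
          refine Finset.sum_congr rfl fun U _ => ?_
          rw [ENNReal.tsum_add]
          congr 1
          · unfold phiPlus
            rw [← ENNReal.tsum_mul_left]
            refine tsum_congr fun s => ?_
            rw [hqdef]
            by_cases hc : 1 ≤ s.1 ∧ zeroSet k s.2 = U
            · rw [if_pos hc, if_pos hc]
            · rw [if_neg hc, if_neg hc, mul_zero]
          · unfold phiZero
            rw [← ENNReal.tsum_mul_left]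
            refine tsum_congr fun s => ?_
            rw [hqdef]
            by_cases hc : s.1 = 0 ∧ zeroSet k s.2 = U
            · rw [if_pos hc, if_pos hc]
            · rw [if_neg hc, if_neg hc, mul_zero]
  have main : ∑ U ∈ 𝒰, (phiPlus k π U θ + phiZero k π U θ)
      ≤ ∑ U ∈ 𝒰, (ENNReal.ofReal (gammaPlus k lam μ U θ) * phiPlus k π U θ
          + ENNReal.ofReal (gammaZero k lam μ U θ) * phiZero k π U θ) := by
    rw [← hΦdec, hΦdef, ← stat w']
    exact hTbound
  -- convert to reals
  have hRfin : ∀ U ∈ 𝒰, (ENNReal.ofReal (gammaPlus k lam μ U θ) * phiPlus k π U θ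
      + ENNReal.ofReal (gammaZero k lam μ U θ) * phiZero k π U θ) ≠ ⊤ := by
    intro U hU
    have h1 := ENNReal.mul_lt_top (ENNReal.ofReal_lt_top (r := gammaPlus k lam μ U θ))
      (hfinplus U ((mem𝒰 U).mp hU))
    have h2 := ENNReal.mul_lt_top (ENNReal.ofReal_lt_top (r := gammaZero k lam μ U θ))
      (hfin U ((mem𝒰 U).mp hU))
    exact (ENNReal.add_lt_top.mpr ⟨h1, h2⟩).ne
  have hLfin : ∀ U ∈ 𝒰, (phiPlus k π U θ + phiZero k π U θ) ≠ ⊤ := by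
    intro U hU
    exact (ENNReal.add_lt_top.mpr ⟨hfinplus U ((mem𝒰 U).mp hU),
      hfin U ((mem𝒰 U).mp hU)⟩).ne
  have mainR : ∑ U ∈ 𝒰, ((phiPlus k π U θ).toReal + (phiZero k π U θ).toReal)
      ≤ ∑ U ∈ 𝒰, (gammaPlus k lam μ U θ * (phiPlus k π U θ).toReal
          + gammaZero k lam μ U θ * (phiZero k π U θ).toReal) := by
    have := ENNReal.toReal_mono (ENNReal.sum_ne_top.mpr hRfin) main
    rw [ENNReal.toReal_sum hLfin, ENNReal.toReal_sum hRfin] at this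
    calc ∑ U ∈ 𝒰, ((phiPlus k π U θ).toReal + (phiZero k π U θ).toReal)
        = ∑ U ∈ 𝒰, (phiPlus k π U θ + phiZero k π U θ).toReal := by
          refine Finset.sum_congr rfl fun U hU => ?_
          rw [ENNReal.toReal_add (by
            exact (hfinplus U ((mem𝒰 U).mp hU)).ne) (by
            exact (hfin U ((mem𝒰 U).mp hU)).ne)]
      _ ≤ ∑ U ∈ 𝒰, (ENNReal.ofReal (gammaPlus k lam μ U θ) * phiPlus k π U θ
          + ENNReal.ofReal (gammaZero k lam μ U θ) * phiZero k π U θ).toReal := this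
      _ = ∑ U ∈ 𝒰, (gammaPlus k lam μ U θ * (phiPlus k π U θ).toReal
          + gammaZero k lam μ U θ * (phiZero k π U θ).toReal) := by
          refine Finset.sum_congr rfl fun U hU => ?_
          rw [ENNReal.toReal_add
            (ENNReal.mul_lt_top (ENNReal.ofReal_lt_top (r := gammaPlus k lam μ U θ))
              (hfinplus U ((mem𝒰 U).mp hU))).ne
            (ENNReal.mul_lt_top (ENNReal.ofReal_lt_top (r := gammaZero k lam μ U θ))
              (hfin U ((mem𝒰 U).mp hU))).ne,
            ENNReal.toReal_mul, ENNReal.toReal_mul,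
            ENNReal.toReal_ofReal (JSQAux.gammaPlus_nonneg lam μ U θ hlam0 hμ0),
            ENNReal.toReal_ofReal (JSQAux.gammaZero_nonneg lam μ U θ hlam0 hμ0)]
  have e1 : ∑ U ∈ 𝒰, ((phiPlus k π U θ).toReal + (phiZero k π U θ).toReal)
      = ∑ U ∈ 𝒰, (phiPlus k π U θ).toReal + ∑ U ∈ 𝒰, (phiZero k π U θ).toReal :=
    Finset.sum_add_distrib
  have e2 : ∑ U ∈ 𝒰, (gammaPlus k lam μ U θ * (phiPlus k π U θ).toReal
        + gammaZero k lam μ U θ * (phiZero k π U θ).toReal)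
      = ∑ U ∈ 𝒰, gammaPlus k lam μ U θ * (phiPlus k π U θ).toReal
        + ∑ U ∈ 𝒰, gammaZero k lam μ U θ * (phiZero k π U θ).toReal :=
    Finset.sum_add_distrib
  rw [e1, e2] at mainR
  have expand1 : ∑ U ∈ 𝒰, (1 - gammaPlus k lam μ U θ) * (phiPlus k π U θ).toReal
      = ∑ U ∈ 𝒰, (phiPlus k π U θ).toReal
        - ∑ U ∈ 𝒰, gammaPlus k lam μ U θ * (phiPlus k π U θ).toReal := by
    rw [← Finset.sum_sub_distrib]
    exact Finset.sum_congr rfl fun U _ => by ring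
  have expand2 : ∑ U ∈ 𝒰, (gammaZero k lam μ U θ - 1) * (phiZero k π U θ).toReal
      = ∑ U ∈ 𝒰, gammaZero k lam μ U θ * (phiZero k π U θ).toReal
        - ∑ U ∈ 𝒰, (phiZero k π U θ).toReal := by
    rw [← Finset.sum_sub_distrib]
    exact Finset.sum_congr rfl fun U _ => by ring
  rw [expand1, expand2]
  linarith
end

section
/- Fix θ ∈ ℝ^{k+1} and let 𝒜 be a subset of the collection 𝒦 of all nonempty subsets of J. If γ_{+U}(θ) < 1 and γ_{0U}(θ) < 1 for every U ∈ 𝒦∖𝒜, and φ_{+U'}(θ) < ∞ and φ_{0U'}(θ) < ∞ for every U' ∈ 𝒜, then Σ_{U ∈ 𝒦∖𝒜} [(1 − γ_{+U}(θ)) φ_{+U}(θ) + (1 − γ_{0U}(θ)) φ_{0U}(θ)] ≤ Σ_{U' ∈ 𝒜} [(γ_{+U'}(θ) − 1) φ_{+U'}(θ) + (γ_{0U'}(θ) − 1) φ_{0U'}(θ)] < ∞. -/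
open Filter Topology
open scoped ENNReal

noncomputable section JSQauxS
namespace JSQaux
variable {k : ℕ} (θ : Fin (k + 1) → ℝ)

lemma expWeight_pos (s) : 0 < expWeight k θ s := Real.exp_pos _

lemma ew_lam (m : ℕ) (y : Fin k → ℕ) :
    expWeight k θ (m + 1, fun j => y j - 1)
      = Real.exp (θ 0 - ∑ j ∈ (zeroSet k y)ᶜ, θ j.succ) * expWeight k θ (m, y) := by
  rw [expWeight, expWeight, ← Real.exp_add]
  congr 1
  have hsum : ∑ i : Fin k, θ i.succ * ((y i - 1 : ℕ) : ℝ)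
      = ∑ i : Fin k, (θ i.succ * (y i : ℝ) - if ¬ y i = 0 then θ i.succ else 0) := by
    refine Finset.sum_congr rfl fun j _ => ?_
    by_cases hj : y j = 0
    · simp [hj]
    · have h1 : (1 : ℕ) ≤ y j := Nat.one_le_iff_ne_zero.mpr hj
      rw [Nat.cast_sub h1]
      simp [hj]; ring
  have hc : ∑ j ∈ (zeroSet k y)ᶜ, θ j.succ
      = ∑ j : Fin k, if ¬ y j = 0 then θ j.succ else 0 := by
    rw [zeroSet, Finset.compl_filter, Finset.sum_filter]
  simp only [hsum, Finset.sum_sub_distrib, ← hc]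
  push_cast
  ring

lemma ew_arr (m : ℕ) (y : Fin k → ℕ) (i : Fin k) (hi : y i = 0) :
    expWeight k θ (m, Function.update y i 1)
      = Real.exp (θ i.succ) * expWeight k θ (m, y) := by
  rw [expWeight, expWeight, ← Real.exp_add]
  congr 1
  have h1 : ∑ j : Fin k, θ j.succ * ((Function.update y i 1 j : ℕ) : ℝ)
      = θ i.succ * 1 + ∑ j ∈ Finset.univ.erase i, θ j.succ * (y j : ℝ) := by
    rw [← Finset.add_sum_erase _ _ (Finset.mem_univ i)]
    simp only [Function.update_self, Nat.cast_one]
    congr 1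
    refine Finset.sum_congr rfl fun j hj => ?_
    rw [Function.update_of_ne (Finset.ne_of_mem_erase hj)]
  have h2 : ∑ j : Fin k, θ j.succ * (y j : ℝ)
      = θ i.succ * (y i : ℝ) + ∑ j ∈ Finset.univ.erase i, θ j.succ * (y j : ℝ) :=
    (Finset.add_sum_erase _ (fun j => θ j.succ * (y j : ℝ)) (Finset.mem_univ i)).symm
  rw [h1, h2, hi]
  push_cast
  ring

lemma ew_dep (m : ℕ) (y : Fin k → ℕ) (j : Fin k) (hj : y j ≠ 0) :
    expWeight k θ (m, Function.update y j (y j - 1))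
      = Real.exp (-θ j.succ) * expWeight k θ (m, y) := by
  rw [expWeight, expWeight, ← Real.exp_add]
  congr 1
  have h1 : ∑ l : Fin k, θ l.succ * ((Function.update y j (y j - 1) l : ℕ) : ℝ)
      = θ j.succ * ((y j : ℝ) - 1) + ∑ l ∈ Finset.univ.erase j, θ l.succ * (y l : ℝ) := by
    rw [← Finset.add_sum_erase _ _ (Finset.mem_univ j)]
    congr 1
    · rw [Function.update_self, Nat.cast_sub (Nat.one_le_iff_ne_zero.mpr hj)]
      norm_num
    · refine Finset.sum_congr rfl fun l hl => ?_
      rw [Function.update_of_ne (Finset.ne_of_mem_erase hl)]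
  have h2 : ∑ l : Fin k, θ l.succ * (y l : ℝ)
      = θ j.succ * (y j : ℝ) + ∑ l ∈ Finset.univ.erase j, θ l.succ * (y l : ℝ) :=
    (Finset.add_sum_erase _ (fun l => θ l.succ * (y l : ℝ)) (Finset.mem_univ j)).symm
  rw [h1, h2]
  ring

lemma ew_min (m : ℕ) (y : Fin k → ℕ) (i : Fin k) (hm : m ≠ 0) (hi : y i = 0) :
    expWeight k θ (m - 1, fun j => if j = i then 0 else y j + 1)
      = Real.exp (-θ 0 + ∑ j ∈ Finset.univ.erase i, θ j.succ) * expWeight k θ (m, y) := by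
  rw [expWeight, expWeight, ← Real.exp_add]
  congr 1
  have h1 : ∑ j : Fin k, θ j.succ * (((if j = i then 0 else y j + 1 : ℕ)) : ℝ)
      = ∑ j ∈ Finset.univ.erase i, (θ j.succ * (y j : ℝ) + θ j.succ) := by
    rw [← Finset.add_sum_erase Finset.univ
      (fun j => θ j.succ * (((if j = i then 0 else y j + 1 : ℕ)) : ℝ)) (Finset.mem_univ i)]
    have hz : θ i.succ * (((if i = i then 0 else y i + 1 : ℕ)) : ℝ) = 0 := by simp
    rw [hz, zero_add]
    refine Finset.sum_congr rfl fun j hj => ?_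
    rw [if_neg (Finset.ne_of_mem_erase hj)]
    push_cast
    ring
  have h2 : ∑ j : Fin k, θ j.succ * (y j : ℝ)
      = θ i.succ * (y i : ℝ) + ∑ j ∈ Finset.univ.erase i, θ j.succ * (y j : ℝ) :=
    (Finset.add_sum_erase _ (fun j => θ j.succ * (y j : ℝ)) (Finset.mem_univ i)).symm
  have h3 : ((m - 1 : ℕ) : ℝ) = (m : ℝ) - 1 := by
    rw [Nat.cast_sub (Nat.one_le_iff_ne_zero.mpr hm)]; norm_num
  rw [h1, h2, h3, hi, Finset.sum_add_distrib]
  push_cast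
  ring


variable (k)

/-- `e^{θ·s}` as an extended nonneg real. -/
def Fe (θ : Fin (k + 1) → ℝ) (s : ℕ × (Fin k → ℕ)) : ℝ≥0∞ :=
  ENNReal.ofReal (expWeight k θ s)

def gam (lam : ℝ) (μ : Fin k → ℝ) (θ : Fin (k + 1) → ℝ) (s : ℕ × (Fin k → ℕ)) : ℝ :=
  if s.1 = 0 then gammaZero k lam μ (zeroSet k s.2) θ else gammaPlus k lam μ (zeroSet k s.2) θ

def P1 (lam : ℝ) (s s' : ℕ × (Fin k → ℕ)) : ℝ :=
  if (zeroSet k s.2).card = 1 then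
      (if s' = (s.1 + 1, fun j => s.2 j - 1) then lam else 0)
    else
      ∑ i ∈ zeroSet k s.2,
        (if s' = (s.1, Function.update s.2 i 1) then lam / (zeroSet k s.2).card else 0)

def P2 (μ : Fin k → ℝ) (s s' : ℕ × (Fin k → ℕ)) : ℝ :=
  ∑ j ∈ (zeroSet k s.2)ᶜ, (if s' = (s.1, Function.update s.2 j (s.2 j - 1)) then μ j else 0)

def P3 (μ : Fin k → ℝ) (s s' : ℕ × (Fin k → ℕ)) : ℝ :=
  ∑ i ∈ zeroSet k s.2,
      (if s' = (if s.1 = 0 then s else (s.1 - 1, fun j => if j = i then 0 else s.2 j + 1))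
        then μ i else 0)

lemma jsqP_eq (lam : ℝ) (μ : Fin k → ℝ) (s s' : ℕ × (Fin k → ℕ)) :
    jsqP k lam μ s s' = P1 k lam s s' + P2 k μ s s' + P3 k μ s s' := rfl

def g1 (lam : ℝ) (θ : Fin (k + 1) → ℝ) (s : ℕ × (Fin k → ℕ)) : ℝ :=
  if (zeroSet k s.2).card = 1 then lam * Real.exp (θ 0 - ∑ j ∈ (zeroSet k s.2)ᶜ, θ j.succ)
    else ∑ i ∈ zeroSet k s.2, (lam / (zeroSet k s.2).card) * Real.exp (θ i.succ)

def g2 (μ : Fin k → ℝ) (θ : Fin (k + 1) → ℝ) (s : ℕ × (Fin k → ℕ)) : ℝ :=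
  ∑ j ∈ (zeroSet k s.2)ᶜ, μ j * Real.exp (-θ j.succ)

def g3 (μ : Fin k → ℝ) (θ : Fin (k + 1) → ℝ) (s : ℕ × (Fin k → ℕ)) : ℝ :=
  if s.1 = 0 then ∑ i ∈ zeroSet k s.2, μ i
    else ∑ i ∈ zeroSet k s.2, μ i * Real.exp (-θ 0 + ∑ j ∈ Finset.univ.erase i, θ j.succ)

lemma gam_eq (lam : ℝ) (μ : Fin k → ℝ) (θ : Fin (k + 1) → ℝ) (s : ℕ × (Fin k → ℕ)) :
    gam k lam μ θ s = g1 k lam θ s + g2 k μ θ s + g3 k μ θ s := by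
  by_cases hm : s.1 = 0 <;>
    simp [gam, g1, g2, g3, gammaPlus, gammaZero, hm]

lemma ite_nn {c : ℝ} {p : Prop} [Decidable p] (hc : 0 ≤ c) : 0 ≤ if p then c else 0 := by
  split_ifs <;> simp [hc]

lemma P1_nonneg {lam : ℝ} (hlam : 0 ≤ lam) (s s' : ℕ × (Fin k → ℕ)) : 0 ≤ P1 k lam s s' := by
  by_cases h : (zeroSet k s.2).card = 1
  · rw [P1, if_pos h]; exact ite_nn hlam
  · rw [P1, if_neg h]
    exact Finset.sum_nonneg fun i _ => ite_nn (div_nonneg hlam (Nat.cast_nonneg _))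

lemma P2_nonneg {μ : Fin k → ℝ} (hμ : ∀ i, 0 ≤ μ i) (s s' : ℕ × (Fin k → ℕ)) :
    0 ≤ P2 k μ s s' := Finset.sum_nonneg fun j _ => ite_nn (hμ j)

lemma P3_nonneg {μ : Fin k → ℝ} (hμ : ∀ i, 0 ≤ μ i) (s s' : ℕ × (Fin k → ℕ)) :
    0 ≤ P3 k μ s s' := Finset.sum_nonneg fun j _ => ite_nn (hμ j)

lemma jsqP_nonneg {lam : ℝ} {μ : Fin k → ℝ} (hlam : 0 ≤ lam) (hμ : ∀ i, 0 ≤ μ i)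
    (s s' : ℕ × (Fin k → ℕ)) : 0 ≤ jsqP k lam μ s s' := by
  rw [jsqP_eq]
  have := P1_nonneg k hlam s s'
  have := P2_nonneg k hμ s s'
  have := P3_nonneg k hμ s s'
  linarith

lemma tsum_ite_target {c : ℝ} (hc : 0 ≤ c) (θ : Fin (k + 1) → ℝ) (t : ℕ × (Fin k → ℕ)) :
    (∑' s' : ℕ × (Fin k → ℕ), ENNReal.ofReal (if s' = t then c else 0) * Fe k θ s')
      = ENNReal.ofReal c * Fe k θ t := by
  have h : ∀ s' : ℕ × (Fin k → ℕ), ENNReal.ofReal (if s' = t then c else 0) * Fe k θ s'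
      = if s' = t then ENNReal.ofReal c * Fe k θ s' else 0 := by
    intro s'; by_cases h : s' = t <;> simp [h]
  rw [tsum_congr h, tsum_eq_single t (fun b hb => if_neg hb), if_pos rfl]

lemma tsum_P1 {lam : ℝ} (hlam : 0 ≤ lam) (θ : Fin (k + 1) → ℝ) (s : ℕ × (Fin k → ℕ)) :
    (∑' s' : ℕ × (Fin k → ℕ), ENNReal.ofReal (P1 k lam s s') * Fe k θ s')
      = ENNReal.ofReal (g1 k lam θ s) * Fe k θ s := by
  obtain ⟨m, y⟩ := s
  by_cases hc : (zeroSet k y).card = 1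
  · simp only [P1, g1, hc, if_pos]
    rw [tsum_ite_target k hlam θ, Fe, Fe, ew_lam θ m y,
      ENNReal.ofReal_mul (Real.exp_nonneg _), ENNReal.ofReal_mul hlam]
    ring
  · simp only [P1, g1, hc, if_neg, ite_false]
    have hstep : ∀ s' : ℕ × (Fin k → ℕ),
        ENNReal.ofReal (∑ i ∈ zeroSet k y,
            (if s' = ((m, y).1, Function.update (m, y).2 i 1) then lam / (zeroSet k y).card else 0))
          * Fe k θ s'
        = ∑ i ∈ zeroSet k y,
            ENNReal.ofReal (if s' = (m, Function.update y i 1) then lam / (zeroSet k y).card else 0)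
              * Fe k θ s' := by
      intro s'
      rw [ENNReal.ofReal_sum_of_nonneg
        (fun i _ => ite_nn (div_nonneg hlam (Nat.cast_nonneg _))), Finset.sum_mul]
    rw [tsum_congr hstep, Summable.tsum_finsetSum (fun i _ => ENNReal.summable)]
    have hterm : ∀ i ∈ zeroSet k y,
        (∑' s' : ℕ × (Fin k → ℕ),
          ENNReal.ofReal (if s' = (m, Function.update y i 1) then lam / (zeroSet k y).card else 0)
            * Fe k θ s')
        = ENNReal.ofReal ((lam / (zeroSet k y).card) * Real.exp (θ i.succ)) * Fe k θ (m, y) := by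
      intro i hi
      rw [tsum_ite_target k (div_nonneg hlam (Nat.cast_nonneg _)) θ, Fe, Fe,
        ew_arr θ m y i (Finset.mem_filter.mp hi).2,
        ENNReal.ofReal_mul (Real.exp_nonneg _),
        ENNReal.ofReal_mul (div_nonneg hlam (Nat.cast_nonneg _))]
      ring
    rw [Finset.sum_congr rfl hterm, ← Finset.sum_mul,
      ENNReal.ofReal_sum_of_nonneg (fun i _ =>
        mul_nonneg (div_nonneg hlam (Nat.cast_nonneg _)) (Real.exp_nonneg _))]

lemma tsum_P2 {μ : Fin k → ℝ} (hμ : ∀ i, 0 ≤ μ i) (θ : Fin (k + 1) → ℝ)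
    (s : ℕ × (Fin k → ℕ)) :
    (∑' s' : ℕ × (Fin k → ℕ), ENNReal.ofReal (P2 k μ s s') * Fe k θ s')
      = ENNReal.ofReal (g2 k μ θ s) * Fe k θ s := by
  obtain ⟨m, y⟩ := s
  have hstep : ∀ s' : ℕ × (Fin k → ℕ),
      ENNReal.ofReal (P2 k μ (m, y) s') * Fe k θ s'
      = ∑ j ∈ (zeroSet k y)ᶜ,
          ENNReal.ofReal (if s' = (m, Function.update y j (y j - 1)) then μ j else 0)
            * Fe k θ s' := by
    intro s'
    rw [P2, ENNReal.ofReal_sum_of_nonneg (fun j _ => ite_nn (hμ j)), Finset.sum_mul]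
  rw [tsum_congr hstep, Summable.tsum_finsetSum (fun i _ => ENNReal.summable)]
  have hterm : ∀ j ∈ (zeroSet k y)ᶜ,
      (∑' s' : ℕ × (Fin k → ℕ),
        ENNReal.ofReal (if s' = (m, Function.update y j (y j - 1)) then μ j else 0) * Fe k θ s')
      = ENNReal.ofReal (μ j * Real.exp (-θ j.succ)) * Fe k θ (m, y) := by
    intro j hj
    have hyj : y j ≠ 0 := by
      intro h
      exact (Finset.mem_compl.mp hj) (Finset.mem_filter.mpr ⟨Finset.mem_univ j, h⟩)
    rw [tsum_ite_target k (hμ j) θ, Fe, Fe, ew_dep θ m y j hyj,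
      ENNReal.ofReal_mul (Real.exp_nonneg _), ENNReal.ofReal_mul (hμ j)]
    ring
  rw [Finset.sum_congr rfl hterm, ← Finset.sum_mul,
    ← ENNReal.ofReal_sum_of_nonneg (fun j _ => mul_nonneg (hμ j) (Real.exp_nonneg _))]
  rfl

lemma tsum_P3 {μ : Fin k → ℝ} (hμ : ∀ i, 0 ≤ μ i) (θ : Fin (k + 1) → ℝ)
    (s : ℕ × (Fin k → ℕ)) :
    (∑' s' : ℕ × (Fin k → ℕ), ENNReal.ofReal (P3 k μ s s') * Fe k θ s')
      = ENNReal.ofReal (g3 k μ θ s) * Fe k θ s := by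
  obtain ⟨m, y⟩ := s
  have hstep : ∀ s' : ℕ × (Fin k → ℕ),
      ENNReal.ofReal (P3 k μ (m, y) s') * Fe k θ s'
      = ∑ i ∈ zeroSet k y,
          ENNReal.ofReal (if s' = (if m = 0 then (m, y) else
              (m - 1, fun j => if j = i then 0 else y j + 1)) then μ i else 0)
            * Fe k θ s' := by
    intro s'
    rw [P3, ENNReal.ofReal_sum_of_nonneg (fun j _ => ite_nn (hμ j)), Finset.sum_mul]
  rw [tsum_congr hstep, Summable.tsum_finsetSum (fun i _ => ENNReal.summable)]
  by_cases hm : m = 0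
  · have hterm : ∀ i ∈ zeroSet k y,
        (∑' s' : ℕ × (Fin k → ℕ),
          ENNReal.ofReal (if s' = (if m = 0 then (m, y) else
              (m - 1, fun j => if j = i then 0 else y j + 1)) then μ i else 0) * Fe k θ s')
        = ENNReal.ofReal (μ i) * Fe k θ (m, y) := by
      intro i hi
      rw [if_pos hm, tsum_ite_target k (hμ i) θ]
    rw [Finset.sum_congr rfl hterm, ← Finset.sum_mul,
      ← ENNReal.ofReal_sum_of_nonneg (fun i _ => hμ i), g3, if_pos hm]
  · have hterm : ∀ i ∈ zeroSet k y,
        (∑' s' : ℕ × (Fin k → ℕ),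
          ENNReal.ofReal (if s' = (if m = 0 then (m, y) else
              (m - 1, fun j => if j = i then 0 else y j + 1)) then μ i else 0) * Fe k θ s')
        = ENNReal.ofReal (μ i * Real.exp (-θ 0 + ∑ j ∈ Finset.univ.erase i, θ j.succ))
            * Fe k θ (m, y) := by
      intro i hi
      rw [if_neg hm, tsum_ite_target k (hμ i) θ, Fe, Fe,
        ew_min θ m y i hm (Finset.mem_filter.mp hi).2,
        ENNReal.ofReal_mul (Real.exp_nonneg _), ENNReal.ofReal_mul (hμ i)]
      ring
    rw [Finset.sum_congr rfl hterm, ← Finset.sum_mul,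
      ← ENNReal.ofReal_sum_of_nonneg
        (fun i _ => mul_nonneg (hμ i) (Real.exp_nonneg _)), g3, if_neg hm]

lemma g1_nonneg {lam : ℝ} (hlam : 0 ≤ lam) (θ : Fin (k + 1) → ℝ) (s : ℕ × (Fin k → ℕ)) :
    0 ≤ g1 k lam θ s := by
  rw [g1]; split_ifs
  · exact mul_nonneg hlam (Real.exp_nonneg _)
  · exact Finset.sum_nonneg fun i _ =>
      mul_nonneg (div_nonneg hlam (Nat.cast_nonneg _)) (Real.exp_nonneg _)

lemma g2_nonneg {μ : Fin k → ℝ} (hμ : ∀ i, 0 ≤ μ i) (θ : Fin (k + 1) → ℝ)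
    (s : ℕ × (Fin k → ℕ)) : 0 ≤ g2 k μ θ s :=
  Finset.sum_nonneg fun j _ => mul_nonneg (hμ j) (Real.exp_nonneg _)

lemma g3_nonneg {μ : Fin k → ℝ} (hμ : ∀ i, 0 ≤ μ i) (θ : Fin (k + 1) → ℝ)
    (s : ℕ × (Fin k → ℕ)) : 0 ≤ g3 k μ θ s := by
  rw [g3]; split_ifs
  · exact Finset.sum_nonneg fun i _ => hμ i
  · exact Finset.sum_nonneg fun i _ => mul_nonneg (hμ i) (Real.exp_nonneg _)

/-- The key one-step mgf computation. -/
lemma mgf {lam : ℝ} {μ : Fin k → ℝ} (hlam : 0 ≤ lam) (hμ : ∀ i, 0 ≤ μ i)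
    (θ : Fin (k + 1) → ℝ) (s : ℕ × (Fin k → ℕ)) :
    (∑' s' : ℕ × (Fin k → ℕ), ENNReal.ofReal (jsqP k lam μ s s') * Fe k θ s')
      = ENNReal.ofReal (gam k lam μ θ s) * Fe k θ s := by
  have hsplit : ∀ s' : ℕ × (Fin k → ℕ),
      ENNReal.ofReal (jsqP k lam μ s s') * Fe k θ s'
      = ENNReal.ofReal (P1 k lam s s') * Fe k θ s'
        + ENNReal.ofReal (P2 k μ s s') * Fe k θ s'
        + ENNReal.ofReal (P3 k μ s s') * Fe k θ s' := by
    intro s'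
    rw [jsqP_eq, ENNReal.ofReal_add (add_nonneg (P1_nonneg k hlam s s') (P2_nonneg k hμ s s')) (P3_nonneg k hμ s s'),
      ENNReal.ofReal_add (P1_nonneg k hlam s s') (P2_nonneg k hμ s s'), add_mul, add_mul]
  rw [tsum_congr hsplit, Summable.tsum_add (ENNReal.summable) (ENNReal.summable),
    Summable.tsum_add (ENNReal.summable) (ENNReal.summable),
    tsum_P1 k hlam θ s, tsum_P2 k hμ θ s, tsum_P3 k hμ θ s, gam_eq,
    ENNReal.ofReal_add (add_nonneg (g1_nonneg k hlam θ s) (g2_nonneg k hμ θ s))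
      (g3_nonneg k hμ θ s),
    ENNReal.ofReal_add (g1_nonneg k hlam θ s) (g2_nonneg k hμ θ s), add_mul, add_mul]


lemma gammaPlus_nonneg {lam : ℝ} {μ : Fin k → ℝ} (hlam : 0 ≤ lam) (hμ : ∀ i, 0 ≤ μ i)
    (U : Finset (Fin k)) (θ : Fin (k + 1) → ℝ) : 0 ≤ gammaPlus k lam μ U θ := by
  rw [gammaPlus]
  have h1 : 0 ≤ (if U.card = 1 then lam * Real.exp (θ 0 - ∑ j ∈ Uᶜ, θ j.succ)
      else ∑ i ∈ U, (lam / U.card) * Real.exp (θ i.succ)) := by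
    split_ifs
    · exact mul_nonneg hlam (Real.exp_nonneg _)
    · exact Finset.sum_nonneg fun i _ =>
        mul_nonneg (div_nonneg hlam (Nat.cast_nonneg _)) (Real.exp_nonneg _)
  have h2 : 0 ≤ ∑ j ∈ Uᶜ, μ j * Real.exp (-θ j.succ) :=
    Finset.sum_nonneg fun j _ => mul_nonneg (hμ j) (Real.exp_nonneg _)
  have h3 : 0 ≤ ∑ i ∈ U, μ i * Real.exp (-θ 0 + ∑ j ∈ Finset.univ.erase i, θ j.succ) :=
    Finset.sum_nonneg fun i _ => mul_nonneg (hμ i) (Real.exp_nonneg _)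
  linarith

lemma gammaZero_nonneg {lam : ℝ} {μ : Fin k → ℝ} (hlam : 0 ≤ lam) (hμ : ∀ i, 0 ≤ μ i)
    (U : Finset (Fin k)) (θ : Fin (k + 1) → ℝ) : 0 ≤ gammaZero k lam μ U θ := by
  rw [gammaZero]
  have h1 : 0 ≤ (if U.card = 1 then lam * Real.exp (θ 0 - ∑ j ∈ Uᶜ, θ j.succ)
      else ∑ i ∈ U, (lam / U.card) * Real.exp (θ i.succ)) := by
    split_ifs
    · exact mul_nonneg hlam (Real.exp_nonneg _)
    · exact Finset.sum_nonneg fun i _ =>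
        mul_nonneg (div_nonneg hlam (Nat.cast_nonneg _)) (Real.exp_nonneg _)
  have h2 : 0 ≤ ∑ j ∈ Uᶜ, μ j * Real.exp (-θ j.succ) :=
    Finset.sum_nonneg fun j _ => mul_nonneg (hμ j) (Real.exp_nonneg _)
  have h3 : 0 ≤ ∑ i ∈ U, μ i := Finset.sum_nonneg fun i _ => hμ i
  linarith

lemma first_term_zero {lam : ℝ} (U : Finset (Fin k)) (hU : U.Nonempty) :
    (if U.card = 1 then lam * Real.exp ((0 : Fin (k+1) → ℝ) 0 - ∑ j ∈ Uᶜ, (0 : Fin (k+1) → ℝ) j.succ)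
      else ∑ i ∈ U, (lam / U.card) * Real.exp ((0 : Fin (k+1) → ℝ) i.succ)) = lam := by
  split_ifs with h
  · simp
  · simp only [Pi.zero_apply, Real.exp_zero, mul_one, Finset.sum_const, nsmul_eq_mul]
    rw [mul_div_cancel₀]
    exact Nat.cast_ne_zero.mpr (Finset.card_ne_zero.mpr hU)

lemma gammaPlus_at_zero {lam : ℝ} {μ : Fin k → ℝ} (hnorm : lam + ∑ i, μ i = 1)
    (U : Finset (Fin k)) (hU : U.Nonempty) :
    gammaPlus k lam μ U (0 : Fin (k+1) → ℝ) = 1 := by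
  rw [gammaPlus, first_term_zero k U hU]
  simp only [Pi.zero_apply, neg_zero, Real.exp_zero, mul_one, zero_add,
    Finset.sum_const_zero, neg_add_rev]
  rw [add_assoc, add_comm (∑ j ∈ Uᶜ, μ j), Finset.sum_add_sum_compl U μ]
  exact hnorm

lemma gammaZero_at_zero {lam : ℝ} {μ : Fin k → ℝ} (hnorm : lam + ∑ i, μ i = 1)
    (U : Finset (Fin k)) (hU : U.Nonempty) :
    gammaZero k lam μ U (0 : Fin (k+1) → ℝ) = 1 := by
  rw [gammaZero, first_term_zero k U hU]
  simp only [Pi.zero_apply, neg_zero, Real.exp_zero, mul_one]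
  rw [add_assoc, add_comm (∑ j ∈ Uᶜ, μ j), Finset.sum_add_sum_compl U μ]
  exact hnorm

lemma Fe_at_zero (s : ℕ × (Fin k → ℕ)) : Fe k (0 : Fin (k+1) → ℝ) s = 1 := by
  simp [Fe, expWeight]

lemma Fe_ne_top (θ : Fin (k + 1) → ℝ) (s : ℕ × (Fin k → ℕ)) : Fe k θ s ≠ ⊤ :=
  ENNReal.ofReal_ne_top

lemma rowsum {lam : ℝ} {μ : Fin k → ℝ} (hlam : 0 ≤ lam) (hμ : ∀ i, 0 ≤ μ i)
    (hnorm : lam + ∑ i, μ i = 1) (s : ℕ × (Fin k → ℕ)) (hs : (zeroSet k s.2).Nonempty) :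
    (∑' s' : ℕ × (Fin k → ℕ), ENNReal.ofReal (jsqP k lam μ s s')) = 1 := by
  have h := mgf k hlam hμ (0 : Fin (k+1) → ℝ) s
  simp only [Fe_at_zero, mul_one] at h
  rw [h, gam]
  split_ifs
  · rw [gammaZero_at_zero k hnorm _ hs, ENNReal.ofReal_one]
  · rw [gammaPlus_at_zero k hnorm _ hs, ENNReal.ofReal_one]

lemma ite_le {c : ℝ} {p : Prop} [Decidable p] (hc : 0 ≤ c) : (if p then c else 0) ≤ c := by
  split_ifs <;> simp [hc]

lemma jsqP_le_one {lam : ℝ} {μ : Fin k → ℝ} (hlam : 0 ≤ lam) (hμ : ∀ i, 0 ≤ μ i)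
    (hnorm : lam + ∑ i, μ i = 1) (s s' : ℕ × (Fin k → ℕ)) : jsqP k lam μ s s' ≤ 1 := by
  have h1 : P1 k lam s s' ≤ lam := by
    by_cases h : (zeroSet k s.2).card = 1
    · rw [P1, if_pos h]; exact ite_le hlam
    · rw [P1, if_neg h]
      rcases Finset.eq_empty_or_nonempty (zeroSet k s.2) with he | hne
      · rw [he]; simpa using hlam
      · calc ∑ i ∈ zeroSet k s.2,
              (if s' = (s.1, Function.update s.2 i 1) then lam / (zeroSet k s.2).card else 0)
            ≤ ∑ _i ∈ zeroSet k s.2, lam / (zeroSet k s.2).card :=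
              Finset.sum_le_sum fun i _ => ite_le (div_nonneg hlam (Nat.cast_nonneg _))
          _ = lam := by
              rw [Finset.sum_const, nsmul_eq_mul, mul_div_cancel₀]
              exact Nat.cast_ne_zero.mpr (Finset.card_ne_zero.mpr hne)
  have h2 : P2 k μ s s' ≤ ∑ j ∈ (zeroSet k s.2)ᶜ, μ j :=
    Finset.sum_le_sum fun j _ => ite_le (hμ j)
  have h3 : P3 k μ s s' ≤ ∑ i ∈ zeroSet k s.2, μ i :=
    Finset.sum_le_sum fun i _ => ite_le (hμ i)
  have h4 : ∑ i ∈ zeroSet k s.2, μ i + ∑ j ∈ (zeroSet k s.2)ᶜ, μ j = ∑ i, μ i :=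
    Finset.sum_add_sum_compl _ _
  rw [jsqP_eq]
  linarith

lemma stat_enn {lam : ℝ} {μ : Fin k → ℝ} (hlam : 0 ≤ lam) (hμ : ∀ i, 0 ≤ μ i)
    (hnorm : lam + ∑ i, μ i = 1) (π : ℕ × (Fin k → ℕ) → ℝ) (hπnn : ∀ s, 0 ≤ π s)
    (hπsum : HasSum π 1)
    (hπstat : ∀ s', (∑' s, π s * jsqP k lam μ s s') = π s') (s' : ℕ × (Fin k → ℕ)) :
    (∑' s, ENNReal.ofReal (π s) * ENNReal.ofReal (jsqP k lam μ s s'))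
      = ENNReal.ofReal (π s') := by
  have hnn : ∀ s, 0 ≤ π s * jsqP k lam μ s s' :=
    fun s => mul_nonneg (hπnn s) (jsqP_nonneg k hlam hμ s s')
  have hsumm : Summable (fun s => π s * jsqP k lam μ s s') :=
    Summable.of_nonneg_of_le hnn
      (fun s => mul_le_of_le_one_right (hπnn s) (jsqP_le_one k hlam hμ hnorm s s'))
      hπsum.summable
  calc (∑' s, ENNReal.ofReal (π s) * ENNReal.ofReal (jsqP k lam μ s s'))
      = ∑' s, ENNReal.ofReal (π s * jsqP k lam μ s s') :=
        tsum_congr fun s => (ENNReal.ofReal_mul (hπnn s)).symm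
    _ = ENNReal.ofReal (∑' s, π s * jsqP k lam μ s s') :=
        (ENNReal.ofReal_tsum_of_nonneg hnn hsumm).symm
    _ = ENNReal.ofReal (π s') := by rw [hπstat s']

lemma swap_lemma {lam : ℝ} {μ : Fin k → ℝ} (π : ℕ × (Fin k → ℕ) → ℝ)
    (hstat : ∀ s', (∑' s, ENNReal.ofReal (π s) * ENNReal.ofReal (jsqP k lam μ s s'))
      = ENNReal.ofReal (π s'))
    (f : ℕ × (Fin k → ℕ) → ℝ≥0∞) :
    (∑' s', ENNReal.ofReal (π s') * f s')
      = ∑' s, ENNReal.ofReal (π s) * ∑' s', ENNReal.ofReal (jsqP k lam μ s s') * f s' := by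
  calc (∑' s', ENNReal.ofReal (π s') * f s')
      = ∑' s', (∑' s, ENNReal.ofReal (π s) * ENNReal.ofReal (jsqP k lam μ s s')) * f s' :=
        tsum_congr fun s' => by rw [hstat]
    _ = ∑' s', ∑' s, (ENNReal.ofReal (π s) * ENNReal.ofReal (jsqP k lam μ s s')) * f s' :=
        tsum_congr fun s' => ENNReal.tsum_mul_right.symm
    _ = ∑' s, ∑' s', (ENNReal.ofReal (π s) * ENNReal.ofReal (jsqP k lam μ s s')) * f s' :=
        ENNReal.tsum_comm
    _ = ∑' s, ENNReal.ofReal (π s) * ∑' s', ENNReal.ofReal (jsqP k lam μ s s') * f s' := by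
        refine tsum_congr fun s => ?_
        rw [← ENNReal.tsum_mul_left]
        exact tsum_congr fun s' => mul_assoc _ _ _

lemma minb {g F n C : ℝ≥0∞} (hg : g ≤ 1 + C) : min (g * F) n ≤ min F n + C * F := by
  rcases le_total F n with h | h
  · calc min (g * F) n ≤ g * F := min_le_left _ _
      _ ≤ (1 + C) * F := mul_le_mul_left hg F
      _ = F + C * F := by rw [add_mul, one_mul]
      _ = min F n + C * F := by rw [min_eq_left h]
  · calc min (g * F) n ≤ n := min_le_right _ _
      _ = min F n := (min_eq_right h).symm
      _ ≤ min F n + C * F := le_self_add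

lemma Pfn_le {lam : ℝ} {μ : Fin k → ℝ} (hlam : 0 ≤ lam) (hμ : ∀ i, 0 ≤ μ i)
    (hnorm : lam + ∑ i, μ i = 1) (θ : Fin (k + 1) → ℝ) (n : ℕ)
    (s : ℕ × (Fin k → ℕ)) (hs : (zeroSet k s.2).Nonempty) :
    (∑' s' : ℕ × (Fin k → ℕ), ENNReal.ofReal (jsqP k lam μ s s') * min (Fe k θ s') (n : ℝ≥0∞))
      ≤ min (ENNReal.ofReal (gam k lam μ θ s) * Fe k θ s) (n : ℝ≥0∞) := by
  refine le_min ?_ ?_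
  · rw [← mgf k hlam hμ θ s]
    exact Summable.tsum_le_tsum (fun s' => mul_le_mul_right (min_le_left _ _) _)
      ENNReal.summable ENNReal.summable
  · calc (∑' s' : ℕ × (Fin k → ℕ), ENNReal.ofReal (jsqP k lam μ s s') * min (Fe k θ s') (n : ℝ≥0∞))
        ≤ ∑' s' : ℕ × (Fin k → ℕ), ENNReal.ofReal (jsqP k lam μ s s') * (n : ℝ≥0∞) :=
          Summable.tsum_le_tsum (fun s' => mul_le_mul_right (min_le_right _ _) _)
            ENNReal.summable ENNReal.summable
      _ = (∑' s' : ℕ × (Fin k → ℕ), ENNReal.ofReal (jsqP k lam μ s s')) * (n : ℝ≥0∞) :=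
          ENNReal.tsum_mul_right
      _ = 1 * (n : ℝ≥0∞) := by rw [rowsum k hlam hμ hnorm s hs]
      _ = (n : ℝ≥0∞) := one_mul _

lemma cell_decomp (π : ℕ × (Fin k → ℕ) → ℝ) (θ : Fin (k + 1) → ℝ)
    (𝒞 : Finset (Finset (Fin k))) (c d : Finset (Fin k) → ℝ≥0∞) :
    (∑' s : ℕ × (Fin k → ℕ), if zeroSet k s.2 ∈ 𝒞 then
        (if s.1 = 0 then d (zeroSet k s.2) else c (zeroSet k s.2))
          * ENNReal.ofReal (π s * expWeight k θ s) else 0)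
      = ∑ U ∈ 𝒞, (c U * phiPlus k π U θ + d U * phiZero k π U θ) := by
  have hrhs : ∀ U ∈ 𝒞, c U * phiPlus k π U θ + d U * phiZero k π U θ
      = ∑' s : ℕ × (Fin k → ℕ),
          (c U * (if 1 ≤ s.1 ∧ zeroSet k s.2 = U then ENNReal.ofReal (π s * expWeight k θ s) else 0)
          + d U * (if s.1 = 0 ∧ zeroSet k s.2 = U then ENNReal.ofReal (π s * expWeight k θ s) else 0)) := by
    intro U _
    rw [Summable.tsum_add ENNReal.summable ENNReal.summable, ENNReal.tsum_mul_left,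
      ENNReal.tsum_mul_left, phiPlus, phiZero]
  rw [Finset.sum_congr rfl hrhs, ← Summable.tsum_finsetSum (fun i _ => ENNReal.summable)]
  refine tsum_congr fun s => ?_
  by_cases hz : zeroSet k s.2 ∈ 𝒞
  · rw [Finset.sum_eq_single (zeroSet k s.2) ?h1 (fun h => absurd hz h), if_pos hz]
    · rcases Nat.eq_zero_or_pos s.1 with hm | hm
      · have hm' : ¬ (1 ≤ s.1) := by omega
        simp [hm, hm']
      · have hm1 : 1 ≤ s.1 := hm
        have h0 : ¬ s.1 = 0 := by omega
        simp [h0, hm1]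
    · intro U _ hU
      rw [if_neg (fun h => hU h.2.symm), if_neg (fun h => hU h.2.symm), mul_zero, mul_zero,
        add_zero]
  · rw [if_neg hz]
    refine (Finset.sum_eq_zero fun U hU => ?_).symm
    have hUz : zeroSet k s.2 ≠ U := fun h => hz (h ▸ hU)
    rw [if_neg (fun h => hUz h.2), if_neg (fun h => hUz h.2), mul_zero, mul_zero, add_zero]

end JSQaux
end JSQauxS

/-- **Stationary inequality (b):** with `𝒜 ⊆ 𝒦`, if `γ_{+U}(θ), γ_{0U}(θ) < 1` for
`U ∈ 𝒦∖𝒜` and `φ_{+U'}(θ), φ_{0U'}(θ) < ∞` for `U' ∈ 𝒜`, then the `φ`'s over `𝒦∖𝒜`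
are finite and
`Σ_{𝒦∖𝒜} [(1−γ_{+U})φ_{+U} + (1−γ_{0U})φ_{0U}] ≤ Σ_{𝒜} [(γ_{+U'}−1)φ_{+U'} + (γ_{0U'}−1)φ_{0U'}] < ∞`. -/
theorem jsq_stationary_inequality_b
    (k : ℕ) (hk : 2 ≤ k) (lam : ℝ) (μ : Fin k → ℝ)
    (hlam : 0 < lam) (hμ : ∀ i, 0 < μ i)
    (hnorm : lam + ∑ i, μ i = 1)
    (hρ : rho k lam μ < 1)
    (π : ℕ × (Fin k → ℕ) → ℝ)
    (hπnn : ∀ s, 0 ≤ π s)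
    (hπsupp : ∀ s, π s ≠ 0 → ∃ i : Fin k, s.2 i = 0)
    (hπsum : HasSum π 1)
    (hπstat : ∀ s', (∑' s, π s * jsqP k lam μ s s') = π s')
    (θ : Fin (k + 1) → ℝ)
    (A : Finset (Finset (Fin k)))
    (hA : ∀ U ∈ A, Finset.Nonempty U)
    (hγ : ∀ U : Finset (Fin k), U.Nonempty → U ∉ A →
      gammaPlus k lam μ U θ < 1 ∧ gammaZero k lam μ U θ < 1)
    (hfin : ∀ U ∈ A, phiPlus k π U θ < ⊤ ∧ phiZero k π U θ < ⊤) :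
    (∀ U : Finset (Fin k), U.Nonempty → U ∉ A →
        phiPlus k π U θ < ⊤ ∧ phiZero k π U θ < ⊤) ∧
    (∑ U ∈ (Finset.univ.filter (fun U : Finset (Fin k) => U.Nonempty)) \ A,
        ((1 - gammaPlus k lam μ U θ) * (phiPlus k π U θ).toReal
          + (1 - gammaZero k lam μ U θ) * (phiZero k π U θ).toReal))
      ≤ ∑ U ∈ A,
          ((gammaPlus k lam μ U θ - 1) * (phiPlus k π U θ).toReal
            + (gammaZero k lam μ U θ - 1) * (phiZero k π U θ).toReal) := by
  classical
  have hlam' : 0 ≤ lam := hlam.le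
  have hμ' : ∀ i, 0 ≤ μ i := fun i => (hμ i).le
  have hsupp : ∀ s : ℕ × (Fin k → ℕ), π s ≠ 0 → (zeroSet k s.2).Nonempty := by
    intro s h
    obtain ⟨i, hi⟩ := hπsupp s h
    exact ⟨i, Finset.mem_filter.mpr ⟨Finset.mem_univ i, hi⟩⟩
  have hstat := JSQaux.stat_enn k hlam' hμ' hnorm π hπnn hπsum hπstat
  have hswap := fun f => JSQaux.swap_lemma k π hstat f
  have hPisum : (∑' s : ℕ × (Fin k → ℕ), ENNReal.ofReal (π s)) = 1 := by
    rw [← ENNReal.ofReal_tsum_of_nonneg hπnn hπsum.summable, hπsum.tsum_eq, ENNReal.ofReal_one]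
  have hpf : ∀ s : ℕ × (Fin k → ℕ), ENNReal.ofReal (π s * expWeight k θ s)
      = ENNReal.ofReal (π s) * JSQaux.Fe k θ s := fun s => ENNReal.ofReal_mul (hπnn s)
  set 𝒦 : Finset (Finset (Fin k)) :=
    Finset.univ.filter (fun U : Finset (Fin k) => U.Nonempty) with h𝒦
  have hmem𝒦 : ∀ {U : Finset (Fin k)}, U.Nonempty → U ∈ 𝒦 := fun hU =>
    Finset.mem_filter.mpr ⟨Finset.mem_univ _, hU⟩
  set K : ℝ≥0∞ := ∑ U ∈ A, (phiPlus k π U θ + phiZero k π U θ) with hKdef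
  have hKtop : K ≠ ⊤ := by
    refine (ENNReal.sum_lt_top.mpr fun U hU => ?_).ne
    exact ENNReal.add_lt_top.mpr ⟨(hfin U hU).1, (hfin U hU).2⟩
  set C : ℝ := ∑ U ∈ A, (|gammaPlus k lam μ U θ| + |gammaZero k lam μ U θ|) with hCdef
  have hC0 : 0 ≤ C := Finset.sum_nonneg fun U _ => add_nonneg (abs_nonneg _) (abs_nonneg _)
  have hCb : ∀ U ∈ A, gammaPlus k lam μ U θ ≤ 1 + C ∧ gammaZero k lam μ U θ ≤ 1 + C := by
    intro U hU
    have h1 : |gammaPlus k lam μ U θ| + |gammaZero k lam μ U θ| ≤ C := by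
      rw [hCdef]
      exact Finset.single_le_sum (f := fun V => |gammaPlus k lam μ V θ| + |gammaZero k lam μ V θ|)
        (fun V _ => add_nonneg (abs_nonneg _) (abs_nonneg _)) hU
    have h2 := le_abs_self (gammaPlus k lam μ U θ)
    have h3 := le_abs_self (gammaZero k lam μ U θ)
    have h4 := abs_nonneg (gammaPlus k lam μ U θ)
    have h5 := abs_nonneg (gammaZero k lam μ U θ)
    exact ⟨by linarith, by linarith⟩
  have hKtsum : (∑' s : ℕ × (Fin k → ℕ),
      if zeroSet k s.2 ∈ A then ENNReal.ofReal (π s) * JSQaux.Fe k θ s else 0) = K := by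
    have h := JSQaux.cell_decomp k π θ A (fun _ => 1) (fun _ => 1)
    simp only [ite_self, one_mul] at h
    rw [hKdef, ← h]
    refine tsum_congr fun s => ?_
    by_cases h' : zeroSet k s.2 ∈ A <;> simp [h', hpf s]
  -- Finiteness on the complement of A
  have claim1 : ∀ U₀ : Finset (Fin k), U₀.Nonempty → U₀ ∉ A →
      phiPlus k π U₀ θ < ⊤ ∧ phiZero k π U₀ θ < ⊤ := by
    intro U₀ hU₀ hU₀A
    obtain ⟨hγp, hγz⟩ := hγ U₀ hU₀ hU₀A
    set ε : ℝ := min (1 - gammaPlus k lam μ U₀ θ) (1 - gammaZero k lam μ U₀ θ) with hεdef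
    have hε0 : 0 < ε := lt_min (by linarith) (by linarith)
    have hεp : ε ≤ 1 - gammaPlus k lam μ U₀ θ := min_le_left _ _
    have hεz : ε ≤ 1 - gammaZero k lam μ U₀ θ := min_le_right _ _
    have hγp0 : 0 ≤ gammaPlus k lam μ U₀ θ := JSQaux.gammaPlus_nonneg k hlam' hμ' U₀ θ
    have h1ε : 0 ≤ 1 - ε := by linarith
    have hn : ∀ n : ℕ,
        ENNReal.ofReal ε * (∑' s : ℕ × (Fin k → ℕ),
            if zeroSet k s.2 = U₀ ∧ JSQaux.Fe k θ s ≤ (n : ℝ≥0∞)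
              then ENNReal.ofReal (π s) * JSQaux.Fe k θ s else 0)
          ≤ ENNReal.ofReal C * K := by
      intro n
      have hstate : ∀ s : ℕ × (Fin k → ℕ),
          (ENNReal.ofReal (π s) * (∑' s' : ℕ × (Fin k → ℕ),
              ENNReal.ofReal (jsqP k lam μ s s') * min (JSQaux.Fe k θ s') (n : ℝ≥0∞))
            + ENNReal.ofReal ε * (if zeroSet k s.2 = U₀ ∧ JSQaux.Fe k θ s ≤ (n : ℝ≥0∞)
                then ENNReal.ofReal (π s) * JSQaux.Fe k θ s else 0))
          ≤ (ENNReal.ofReal (π s) * min (JSQaux.Fe k θ s) (n : ℝ≥0∞)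
            + ENNReal.ofReal C * (if zeroSet k s.2 ∈ A
                then ENNReal.ofReal (π s) * JSQaux.Fe k θ s else 0)) := by
        intro s
        by_cases hπ0 : π s = 0
        · simp [hπ0]
        · have hz : (zeroSet k s.2).Nonempty := hsupp s hπ0
          have hPfn := JSQaux.Pfn_le k hlam' hμ' hnorm θ n s hz
          by_cases hAz : zeroSet k s.2 ∈ A
          · have hne : ¬ (zeroSet k s.2 = U₀ ∧ JSQaux.Fe k θ s ≤ (n : ℝ≥0∞)) :=
              fun h => hU₀A (h.1 ▸ hAz)
            rw [if_neg hne, if_pos hAz, mul_zero, add_zero]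
            have hgle : ENNReal.ofReal (JSQaux.gam k lam μ θ s) ≤ 1 + ENNReal.ofReal C := by
              have hb := hCb _ hAz
              have hle : JSQaux.gam k lam μ θ s ≤ 1 + C := by
                rw [JSQaux.gam]; split_ifs; exacts [hb.2, hb.1]
              calc ENNReal.ofReal (JSQaux.gam k lam μ θ s) ≤ ENNReal.ofReal (1 + C) :=
                    ENNReal.ofReal_le_ofReal hle
                _ = 1 + ENNReal.ofReal C := by
                    rw [ENNReal.ofReal_add zero_le_one hC0, ENNReal.ofReal_one]
            calc ENNReal.ofReal (π s) * (∑' s' : ℕ × (Fin k → ℕ),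
                  ENNReal.ofReal (jsqP k lam μ s s') * min (JSQaux.Fe k θ s') (n : ℝ≥0∞))
                ≤ ENNReal.ofReal (π s)
                    * min (ENNReal.ofReal (JSQaux.gam k lam μ θ s) * JSQaux.Fe k θ s) (n : ℝ≥0∞) :=
                  mul_le_mul_right hPfn _
              _ ≤ ENNReal.ofReal (π s)
                    * (min (JSQaux.Fe k θ s) (n : ℝ≥0∞) + ENNReal.ofReal C * JSQaux.Fe k θ s) :=
                  mul_le_mul_right (JSQaux.minb hgle) _
              _ = ENNReal.ofReal (π s) * min (JSQaux.Fe k θ s) (n : ℝ≥0∞)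
                    + ENNReal.ofReal C * (ENNReal.ofReal (π s) * JSQaux.Fe k θ s) := by ring
          · have hgam1 : JSQaux.gam k lam μ θ s ≤ 1 := by
              obtain ⟨hp, hz'⟩ := hγ (zeroSet k s.2) hz hAz
              rw [JSQaux.gam]; split_ifs; exacts [hz'.le, hp.le]
            by_cases hcnd : zeroSet k s.2 = U₀ ∧ JSQaux.Fe k θ s ≤ (n : ℝ≥0∞)
            · rw [if_pos hcnd, if_neg hAz, mul_zero, add_zero]
              have hgam2 : JSQaux.gam k lam μ θ s ≤ 1 - ε := by
                rw [JSQaux.gam, hcnd.1]; split_ifs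
                · linarith
                · linarith
              have hg : ENNReal.ofReal (JSQaux.gam k lam μ θ s) ≤ ENNReal.ofReal (1 - ε) :=
                ENNReal.ofReal_le_ofReal hgam2
              have hP2 : (∑' s' : ℕ × (Fin k → ℕ),
                  ENNReal.ofReal (jsqP k lam μ s s') * min (JSQaux.Fe k θ s') (n : ℝ≥0∞))
                  ≤ ENNReal.ofReal (1 - ε) * JSQaux.Fe k θ s :=
                hPfn.trans ((min_le_left _ _).trans (mul_le_mul_left hg _))
              calc ENNReal.ofReal (π s) * (∑' s' : ℕ × (Fin k → ℕ),
                    ENNReal.ofReal (jsqP k lam μ s s') * min (JSQaux.Fe k θ s') (n : ℝ≥0∞))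
                  + ENNReal.ofReal ε * (ENNReal.ofReal (π s) * JSQaux.Fe k θ s)
                  ≤ ENNReal.ofReal (π s) * (ENNReal.ofReal (1 - ε) * JSQaux.Fe k θ s)
                    + ENNReal.ofReal ε * (ENNReal.ofReal (π s) * JSQaux.Fe k θ s) :=
                    add_le_add_left (mul_le_mul_right hP2 _) _
                _ = (ENNReal.ofReal (1 - ε) + ENNReal.ofReal ε)
                      * (ENNReal.ofReal (π s) * JSQaux.Fe k θ s) := by ring
                _ = ENNReal.ofReal (π s) * JSQaux.Fe k θ s := by
                    rw [← ENNReal.ofReal_add h1ε hε0.le]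
                    norm_num
                _ = ENNReal.ofReal (π s) * min (JSQaux.Fe k θ s) (n : ℝ≥0∞) := by
                    rw [min_eq_left hcnd.2]
            · rw [if_neg hcnd, mul_zero, add_zero]
              have hg1 : ENNReal.ofReal (JSQaux.gam k lam μ θ s) ≤ 1 + 0 := by
                rw [add_zero, ← ENNReal.ofReal_one]
                exact ENNReal.ofReal_le_ofReal hgam1
              calc ENNReal.ofReal (π s) * (∑' s' : ℕ × (Fin k → ℕ),
                    ENNReal.ofReal (jsqP k lam μ s s') * min (JSQaux.Fe k θ s') (n : ℝ≥0∞))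
                  ≤ ENNReal.ofReal (π s)
                      * (min (JSQaux.Fe k θ s) (n : ℝ≥0∞) + 0 * JSQaux.Fe k θ s) :=
                    mul_le_mul_right (hPfn.trans (JSQaux.minb hg1)) _
                _ = ENNReal.ofReal (π s) * min (JSQaux.Fe k θ s) (n : ℝ≥0∞) := by
                    rw [zero_mul, add_zero]
                _ ≤ _ := le_self_add
      have hsum := Summable.tsum_le_tsum hstate ENNReal.summable ENNReal.summable
      rw [Summable.tsum_add ENNReal.summable ENNReal.summable,
          Summable.tsum_add ENNReal.summable ENNReal.summable,
          ENNReal.tsum_mul_left, ENNReal.tsum_mul_left, hKtsum] at hsum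
      have hTswap : (∑' s' : ℕ × (Fin k → ℕ),
            ENNReal.ofReal (π s') * min (JSQaux.Fe k θ s') (n : ℝ≥0∞))
          = ∑' s : ℕ × (Fin k → ℕ), ENNReal.ofReal (π s)
              * ∑' s' : ℕ × (Fin k → ℕ),
                  ENNReal.ofReal (jsqP k lam μ s s') * min (JSQaux.Fe k θ s') (n : ℝ≥0∞) :=
        hswap _
      rw [← hTswap] at hsum
      have hTn_le : (∑' s' : ℕ × (Fin k → ℕ),
          ENNReal.ofReal (π s') * min (JSQaux.Fe k θ s') (n : ℝ≥0∞)) ≤ (n : ℝ≥0∞) := by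
        calc (∑' s' : ℕ × (Fin k → ℕ), ENNReal.ofReal (π s') * min (JSQaux.Fe k θ s') (n : ℝ≥0∞))
            ≤ ∑' s' : ℕ × (Fin k → ℕ), ENNReal.ofReal (π s') * (n : ℝ≥0∞) :=
              Summable.tsum_le_tsum (fun s' => mul_le_mul_right (min_le_right _ _) _)
                ENNReal.summable ENNReal.summable
          _ = (∑' s' : ℕ × (Fin k → ℕ), ENNReal.ofReal (π s')) * (n : ℝ≥0∞) :=
              ENNReal.tsum_mul_right
          _ = (n : ℝ≥0∞) := by rw [hPisum, one_mul]
      have hTn : (∑' s' : ℕ × (Fin k → ℕ),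
          ENNReal.ofReal (π s') * min (JSQaux.Fe k θ s') (n : ℝ≥0∞)) ≠ ⊤ :=
        (hTn_le.trans_lt (ENNReal.natCast_lt_top n)).ne
      exact (ENNReal.add_le_add_iff_left hTn).mp hsum
    have hBfin : ENNReal.ofReal C * K ≠ ⊤ := ENNReal.mul_ne_top ENNReal.ofReal_ne_top hKtop
    have hεne : ENNReal.ofReal ε ≠ 0 := (ENNReal.ofReal_pos.mpr hε0).ne'
    have hcell : (∑' s : ℕ × (Fin k → ℕ),
        if zeroSet k s.2 = U₀ then ENNReal.ofReal (π s) * JSQaux.Fe k θ s else 0)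
        ≤ ENNReal.ofReal C * K / ENNReal.ofReal ε := by
      rw [ENNReal.tsum_eq_iSup_sum]
      refine iSup_le fun I => ?_
      obtain ⟨n, hnI⟩ := exists_nat_ge (∑ s ∈ I, expWeight k θ s)
      have hFle : ∀ s ∈ I, JSQaux.Fe k θ s ≤ (n : ℝ≥0∞) := by
        intro s hs
        have h1 : expWeight k θ s ≤ (n : ℝ) :=
          le_trans (Finset.single_le_sum (f := fun t => expWeight k θ t)
            (fun t _ => (JSQaux.expWeight_pos θ t).le) hs) hnI
        calc JSQaux.Fe k θ s = ENNReal.ofReal (expWeight k θ s) := rfl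
          _ ≤ ENNReal.ofReal (n : ℝ) := ENNReal.ofReal_le_ofReal h1
          _ = (n : ℝ≥0∞) := ENNReal.ofReal_natCast n
      calc ∑ s ∈ I, (if zeroSet k s.2 = U₀ then ENNReal.ofReal (π s) * JSQaux.Fe k θ s else 0)
          ≤ ∑ s ∈ I, (if zeroSet k s.2 = U₀ ∧ JSQaux.Fe k θ s ≤ (n : ℝ≥0∞)
              then ENNReal.ofReal (π s) * JSQaux.Fe k θ s else 0) := by
            refine Finset.sum_le_sum fun s hs => ?_
            by_cases h : zeroSet k s.2 = U₀
            · rw [if_pos h, if_pos ⟨h, hFle s hs⟩]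
            · rw [if_neg h, if_neg (fun hc => h hc.1)]
        _ ≤ ∑' s : ℕ × (Fin k → ℕ), (if zeroSet k s.2 = U₀ ∧ JSQaux.Fe k θ s ≤ (n : ℝ≥0∞)
              then ENNReal.ofReal (π s) * JSQaux.Fe k θ s else 0) := ENNReal.sum_le_tsum I
        _ ≤ ENNReal.ofReal C * K / ENNReal.ofReal ε := by
            rw [ENNReal.le_div_iff_mul_le (Or.inl hεne) (Or.inl ENNReal.ofReal_ne_top), mul_comm]
            exact hn n
    have hcelltop : (∑' s : ℕ × (Fin k → ℕ),
        if zeroSet k s.2 = U₀ then ENNReal.ofReal (π s) * JSQaux.Fe k θ s else 0) < ⊤ :=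
      lt_of_le_of_lt hcell (ENNReal.div_lt_top hBfin hεne)
    constructor
    · refine lt_of_le_of_lt (Summable.tsum_le_tsum (fun s => ?_) ENNReal.summable ENNReal.summable) hcelltop
      by_cases h : 1 ≤ s.1 ∧ zeroSet k s.2 = U₀
      · rw [if_pos h, if_pos h.2, hpf s]
      · rw [if_neg h]; exact zero_le
    · refine lt_of_le_of_lt (Summable.tsum_le_tsum (fun s => ?_) ENNReal.summable ENNReal.summable) hcelltop
      by_cases h : s.1 = 0 ∧ zeroSet k s.2 = U₀
      · rw [if_pos h, if_pos h.2, hpf s]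
      · rw [if_neg h]; exact zero_le
  have hfinAll : ∀ U ∈ 𝒦, phiPlus k π U θ ≠ ⊤ ∧ phiZero k π U θ ≠ ⊤ := by
    intro U hU
    have hUne : U.Nonempty := (Finset.mem_filter.mp hU).2
    by_cases hUA : U ∈ A
    · exact ⟨(hfin U hUA).1.ne, (hfin U hUA).2.ne⟩
    · exact ⟨(claim1 U hUne hUA).1.ne, (claim1 U hUne hUA).2.ne⟩
  have hL : (∑' s : ℕ × (Fin k → ℕ), ENNReal.ofReal (π s) * JSQaux.Fe k θ s)
      = ∑ U ∈ 𝒦, (phiPlus k π U θ + phiZero k π U θ) := by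
    have h := JSQaux.cell_decomp k π θ 𝒦 (fun _ => 1) (fun _ => 1)
    simp only [ite_self, one_mul] at h
    rw [← h]
    refine tsum_congr fun s => ?_
    by_cases hπ0 : π s = 0
    · simp [hπ0]
    · rw [if_pos (hmem𝒦 (hsupp s hπ0)), hpf s]
  have hR : (∑' s : ℕ × (Fin k → ℕ), ENNReal.ofReal (π s) * JSQaux.Fe k θ s)
      = ∑ U ∈ 𝒦, (ENNReal.ofReal (gammaPlus k lam μ U θ) * phiPlus k π U θ
          + ENNReal.ofReal (gammaZero k lam μ U θ) * phiZero k π U θ) := by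
    have hsw : (∑' s' : ℕ × (Fin k → ℕ), ENNReal.ofReal (π s') * JSQaux.Fe k θ s')
        = ∑' s : ℕ × (Fin k → ℕ), ENNReal.ofReal (π s)
            * ∑' s' : ℕ × (Fin k → ℕ), ENNReal.ofReal (jsqP k lam μ s s') * JSQaux.Fe k θ s' :=
      hswap _
    rw [hsw, ← JSQaux.cell_decomp k π θ 𝒦
      (fun U => ENNReal.ofReal (gammaPlus k lam μ U θ))
      (fun U => ENNReal.ofReal (gammaZero k lam μ U θ))]
    refine tsum_congr fun s => ?_
    by_cases hπ0 : π s = 0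
    · simp [hπ0]
    · rw [JSQaux.mgf k hlam' hμ' θ s, if_pos (hmem𝒦 (hsupp s hπ0)), hpf s, JSQaux.gam]
      by_cases hm : s.1 = 0
      · rw [if_pos hm, if_pos hm]; ring
      · rw [if_neg hm, if_neg hm]; ring
  have hmaster := hL.symm.trans hR
  have hreal : ∑ U ∈ 𝒦, ((phiPlus k π U θ).toReal + (phiZero k π U θ).toReal)
      = ∑ U ∈ 𝒦, (gammaPlus k lam μ U θ * (phiPlus k π U θ).toReal
          + gammaZero k lam μ U θ * (phiZero k π U θ).toReal) := by
    have h1 := congrArg ENNReal.toReal hmaster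
    rw [ENNReal.toReal_sum (fun U hU =>
        ENNReal.add_ne_top.mpr ⟨(hfinAll U hU).1, (hfinAll U hU).2⟩),
      ENNReal.toReal_sum (fun U hU => ENNReal.add_ne_top.mpr
        ⟨ENNReal.mul_ne_top ENNReal.ofReal_ne_top (hfinAll U hU).1,
         ENNReal.mul_ne_top ENNReal.ofReal_ne_top (hfinAll U hU).2⟩)] at h1
    calc ∑ U ∈ 𝒦, ((phiPlus k π U θ).toReal + (phiZero k π U θ).toReal)
        = ∑ U ∈ 𝒦, (phiPlus k π U θ + phiZero k π U θ).toReal :=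
          Finset.sum_congr rfl fun U hU =>
            (ENNReal.toReal_add (hfinAll U hU).1 (hfinAll U hU).2).symm
      _ = ∑ U ∈ 𝒦, (ENNReal.ofReal (gammaPlus k lam μ U θ) * phiPlus k π U θ
            + ENNReal.ofReal (gammaZero k lam μ U θ) * phiZero k π U θ).toReal := h1
      _ = ∑ U ∈ 𝒦, (gammaPlus k lam μ U θ * (phiPlus k π U θ).toReal
            + gammaZero k lam μ U θ * (phiZero k π U θ).toReal) := by
          refine Finset.sum_congr rfl fun U hU => ?_
          rw [ENNReal.toReal_add
              (ENNReal.mul_ne_top ENNReal.ofReal_ne_top (hfinAll U hU).1)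
              (ENNReal.mul_ne_top ENNReal.ofReal_ne_top (hfinAll U hU).2),
            ENNReal.toReal_mul, ENNReal.toReal_mul,
            ENNReal.toReal_ofReal (JSQaux.gammaPlus_nonneg k hlam' hμ' U θ),
            ENNReal.toReal_ofReal (JSQaux.gammaZero_nonneg k hlam' hμ' U θ)]
  refine ⟨claim1, ?_⟩
  have hAsub : A ⊆ 𝒦 := fun U hU => hmem𝒦 (hA U hU)
  have hsplitsum := Finset.sum_sdiff
    (f := fun U => (1 - gammaPlus k lam μ U θ) * (phiPlus k π U θ).toReal
      + (1 - gammaZero k lam μ U θ) * (phiZero k π U θ).toReal) hAsub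
  have hzero : ∑ U ∈ 𝒦, ((1 - gammaPlus k lam μ U θ) * (phiPlus k π U θ).toReal
      + (1 - gammaZero k lam μ U θ) * (phiZero k π U θ).toReal) = 0 := by
    have hh : ∑ U ∈ 𝒦, ((1 - gammaPlus k lam μ U θ) * (phiPlus k π U θ).toReal
        + (1 - gammaZero k lam μ U θ) * (phiZero k π U θ).toReal)
        = ∑ U ∈ 𝒦, ((phiPlus k π U θ).toReal + (phiZero k π U θ).toReal)
          - ∑ U ∈ 𝒦, (gammaPlus k lam μ U θ * (phiPlus k π U θ).toReal
              + gammaZero k lam μ U θ * (phiZero k π U θ).toReal) := by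
      rw [← Finset.sum_sub_distrib]
      exact Finset.sum_congr rfl fun U _ => by ring
    rw [hh, hreal, sub_self]
  have h2 : ∑ U ∈ A, ((gammaPlus k lam μ U θ - 1) * (phiPlus k π U θ).toReal
      + (gammaZero k lam μ U θ - 1) * (phiZero k π U θ).toReal)
      = - ∑ U ∈ A, ((1 - gammaPlus k lam μ U θ) * (phiPlus k π U θ).toReal
          + (1 - gammaZero k lam μ U θ) * (phiZero k π U θ).toReal) := by
    rw [← Finset.sum_neg_distrib]
    exact Finset.sum_congr rfl fun U _ => by ring
  linarith [hsplitsum, hzero, h2]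
end
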